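/- arXiv:0906.3565 — 8 statements merged into one kernel-verified Lean document; each statement's English description precedes it below -/
import Mathlib

section
/- Let Ω, T ⊆ ℂ be open and U,V : Ω×T → ℂ be differentiable functions satisfying the canonical Poisson relation w(∂_wU·∂_{t₀}V − ∂_wV·∂_{t₀}U) = U on Ω×T, with ∂_{t₀}U(w,t₀) ≠ 0 everywhere. Let D ⊆ (ℂ∖{0})² be open and 𝒜 : D → T be a differentiable function with (w,𝒜(w,w̃)) ∈ Ω×T and U(w, 𝒜(w,w̃)) = w̃ for all (w,w̃) ∈ D, and define Ã(w,w̃) = V(w, 𝒜(w,w̃)). Then ∂_wÃ(w,w̃) = −(w̃/w)·∂_{w̃}𝒜(w,w̃) for all (w,w̃) ∈ D; equivalently ∂_w(−Ã(w,w̃)/w̃) = ∂_{w̃}(𝒜(w,w̃)/w), i.e. the 1-form (𝒜/w)dw − (Ã/w̃)dw̃ is closed. -/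
/-- Non-degenerate case (Case II), key computation: if `(U, V)` satisfies the canonical
Poisson relation `{U, V} = U` with `∂_{t₀}U ≠ 0`, and `𝒜` inverts `U` in its second
argument (`U(w, 𝒜(w, v)) = v`), then with `𝒜'(w, v) = V(w, 𝒜(w, v))` one has
`∂_w 𝒜' = -(v/w) ∂_{v} 𝒜`; equivalently `∂_w(-𝒜'/v) = ∂_{v}(𝒜/w)`, i.e. the 1-form
`(𝒜/w)dw - (𝒜'/v)dv` is closed. -/
theorem stmt_1
    (Ω T : Set ℂ) (hΩopen : IsOpen Ω) (hTopen : IsOpen T)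
    (U V : ℂ → ℂ → ℂ)
    (hU : ∀ w ∈ Ω, ∀ t ∈ T, DifferentiableAt ℂ (fun p : ℂ × ℂ => U p.1 p.2) (w, t))
    (hV : ∀ w ∈ Ω, ∀ t ∈ T, DifferentiableAt ℂ (fun p : ℂ × ℂ => V p.1 p.2) (w, t))
    (hPoisson : ∀ w ∈ Ω, ∀ t ∈ T,
      w * (deriv (fun w' => U w' t) w * deriv (V w) t
            - deriv (fun w' => V w' t) w * deriv (U w) t) = U w t)
    (hUt : ∀ w ∈ Ω, ∀ t ∈ T, deriv (U w) t ≠ 0)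
    (D : Set (ℂ × ℂ)) (hDopen : IsOpen D) (hD0 : ∀ p ∈ D, p.1 ≠ 0 ∧ p.2 ≠ 0)
    (𝒜 : ℂ → ℂ → ℂ)
    (h𝒜diff : ∀ p ∈ D, DifferentiableAt ℂ (fun q : ℂ × ℂ => 𝒜 q.1 q.2) p)
    (h𝒜mem : ∀ p ∈ D, p.1 ∈ Ω ∧ 𝒜 p.1 p.2 ∈ T)
    (h𝒜inv : ∀ p ∈ D, U p.1 (𝒜 p.1 p.2) = p.2)
    (𝒜' : ℂ → ℂ → ℂ)
    (h𝒜' : ∀ p ∈ D, 𝒜' p.1 p.2 = V p.1 (𝒜 p.1 p.2)) :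
    ∀ p ∈ D,
      deriv (fun w => 𝒜' w p.2) p.1 = -(p.2 / p.1) * deriv (𝒜 p.1) p.2 ∧
      deriv (fun w => -𝒜' w p.2 / p.2) p.1 = deriv (fun v => 𝒜 p.1 v / p.1) p.2 := by
  rintro ⟨w, v⟩ hp
  obtain ⟨hw0, hv0⟩ := hD0 _ hp
  obtain ⟨hwΩ, htT⟩ := h𝒜mem _ hp
  simp only at hw0 hv0 hwΩ htT ⊢
  set t := 𝒜 w v with ht
  -- full derivatives
  set fU := fderiv ℂ (fun p : ℂ × ℂ => U p.1 p.2) (w, t) with hfU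
  set fV := fderiv ℂ (fun p : ℂ × ℂ => V p.1 p.2) (w, t) with hfV
  set fA := fderiv ℂ (fun q : ℂ × ℂ => 𝒜 q.1 q.2) (w, v) with hfA
  have hUF : HasFDerivAt (fun p : ℂ × ℂ => U p.1 p.2) fU (w, t) :=
    (hU w hwΩ t htT).hasFDerivAt
  have hVF : HasFDerivAt (fun p : ℂ × ℂ => V p.1 p.2) fV (w, t) :=
    (hV w hwΩ t htT).hasFDerivAt
  have hAF : HasFDerivAt (fun q : ℂ × ℂ => 𝒜 q.1 q.2) fA (w, v) :=
    (h𝒜diff _ hp).hasFDerivAt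
  -- linearity expansion
  have expand : ∀ (L : ℂ × ℂ →L[ℂ] ℂ) (a : ℂ), L (1, a) = L (1, 0) + a * L (0, 1) := by
    intro L a
    have h : ((1 : ℂ), a) = (1, 0) + a • ((0 : ℂ), (1 : ℂ)) := by simp
    rw [h, L.map_add, L.map_smul, smul_eq_mul]
  have expand0 : ∀ (L : ℂ × ℂ →L[ℂ] ℂ) (a : ℂ), L (0, a) = a * L (0, 1) := by
    intro L a
    have h : ((0 : ℂ), a) = a • ((0 : ℂ), (1 : ℂ)) := by simp
    rw [h, L.map_smul, smul_eq_mul]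
  -- partial derivatives via curves
  have hc1 : HasDerivAt (fun w' : ℂ => (w', t)) ((1 : ℂ), (0 : ℂ)) w :=
    (hasDerivAt_id w).prodMk (hasDerivAt_const w t)
  have hc2 : HasDerivAt (fun t' : ℂ => (w, t')) ((0 : ℂ), (1 : ℂ)) t :=
    (hasDerivAt_const t w).prodMk (hasDerivAt_id t)
  have hUw : HasDerivAt (fun w' => U w' t) (fU (1, 0)) w := by
    have := hUF.comp_hasDerivAt w hc1
    exact this
  have hUt' : HasDerivAt (fun t' => U w t') (fU (0, 1)) t := by
    have := hUF.comp_hasDerivAt t hc2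
    exact this
  have hVw : HasDerivAt (fun w' => V w' t) (fV (1, 0)) w := by
    have := hVF.comp_hasDerivAt w hc1
    exact this
  have hVt : HasDerivAt (fun t' => V w t') (fV (0, 1)) t := by
    have := hVF.comp_hasDerivAt t hc2
    exact this
  have hc1A : HasDerivAt (fun w' : ℂ => (w', v)) ((1 : ℂ), (0 : ℂ)) w :=
    (hasDerivAt_id w).prodMk (hasDerivAt_const w v)
  have hc2A : HasDerivAt (fun v' : ℂ => (w, v')) ((0 : ℂ), (1 : ℂ)) v :=
    (hasDerivAt_const v w).prodMk (hasDerivAt_id v)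
  have hAw : HasDerivAt (fun w' => 𝒜 w' v) (fA (1, 0)) w := by
    have := hAF.comp_hasDerivAt w hc1A
    exact this
  have hAv : HasDerivAt (fun v' => 𝒜 w v') (fA (0, 1)) v := by
    have := hAF.comp_hasDerivAt v hc2A
    exact this
  -- eventual membership
  have hev1 : ∀ᶠ w' in nhds w, (w', v) ∈ D := by
    have hco : ContinuousAt (fun w' : ℂ => (w', v)) w :=
      (continuous_id.prodMk continuous_const).continuousAt
    exact hco.eventually_mem (hDopen.mem_nhds hp)
  have hev2 : ∀ᶠ v' in nhds v, (w, v') ∈ D := by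
    have hco : ContinuousAt (fun v' : ℂ => (w, v')) v :=
      (continuous_const.prodMk continuous_id).continuousAt
    exact hco.eventually_mem (hDopen.mem_nhds hp)
  -- derivative of composite w' ↦ U w' (𝒜 w' v)
  have hγ1 : HasDerivAt (fun w' : ℂ => (w', 𝒜 w' v)) ((1 : ℂ), fA (1, 0)) w :=
    (hasDerivAt_id w).prodMk hAw
  have hUcomp : HasDerivAt (fun w' => U w' (𝒜 w' v)) (fU (1, fA (1, 0))) w := by
    have := hUF.comp_hasDerivAt w hγ1
    exact this
  have heq1 : (fun w' => U w' (𝒜 w' v)) =ᶠ[nhds w] fun _ => v :=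
    hev1.mono fun w' hw' => h𝒜inv _ hw'
  have hzero : HasDerivAt (fun w' => U w' (𝒜 w' v)) 0 w :=
    (hasDerivAt_const w v).congr_of_eventuallyEq heq1
  have eq1 : fU (1, fA (1, 0)) = 0 := hUcomp.unique hzero
  -- derivative of composite v' ↦ U w (𝒜 w v')
  have hγ2 : HasDerivAt (fun v' : ℂ => (w, 𝒜 w v')) ((0 : ℂ), fA (0, 1)) v :=
    (hasDerivAt_const v w).prodMk hAv
  have hUcomp2 : HasDerivAt (fun v' => U w (𝒜 w v')) (fU (0, fA (0, 1))) v := by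
    have := hUF.comp_hasDerivAt v hγ2
    exact this
  have heq2 : (fun v' => U w (𝒜 w v')) =ᶠ[nhds v] fun v' => v' :=
    hev2.mono fun v' hv' => h𝒜inv _ hv'
  have hone : HasDerivAt (fun v' => U w (𝒜 w v')) 1 v :=
    (hasDerivAt_id v).congr_of_eventuallyEq heq2
  have eq2 : fU (0, fA (0, 1)) = 1 := hUcomp2.unique hone
  -- derivative of 𝒜' in w
  have hVcomp : HasDerivAt (fun w' => V w' (𝒜 w' v)) (fV (1, fA (1, 0))) w := by
    have := hVF.comp_hasDerivAt w hγ1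
    exact this
  have heq3 : (fun w' => 𝒜' w' v) =ᶠ[nhds w] fun w' => V w' (𝒜 w' v) :=
    hev1.mono fun w' hw' => h𝒜' _ hw'
  have hA'w : HasDerivAt (fun w' => 𝒜' w' v) (fV (1, fA (1, 0))) w :=
    hVcomp.congr_of_eventuallyEq heq3
  -- Poisson relation in terms of fU, fV
  have hP := hPoisson w hwΩ t htT
  rw [hUw.deriv, hVw.deriv, show deriv (V w) t = fV (0, 1) from hVt.deriv,
    show deriv (U w) t = fU (0, 1) from hUt'.deriv, show U w t = v from h𝒜inv _ hp] at hP
  have hUtne : fU (0, 1) ≠ 0 := by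
    have := hUt w hwΩ t htT
    rwa [show deriv (U w) t = fU (0, 1) from hUt'.deriv] at this
  -- put everything together
  rw [expand] at eq1 hA'w
  rw [expand0] at eq2
  have hx : fA (1, 0) = -fU (1, 0) * fA (0, 1) := by
    calc fA (1, 0) = fA (1, 0) * (fA (0, 1) * fU (0, 1)) := by rw [eq2, mul_one]
      _ = (fU (1, 0) + fA (1, 0) * fU (0, 1)) * fA (0, 1) - fU (1, 0) * fA (0, 1) := by ring
      _ = -fU (1, 0) * fA (0, 1) := by rw [eq1]; ring
  have goal1 : deriv (fun w' => 𝒜' w' v) w = -(v / w) * deriv (𝒜 w) v := by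
    rw [hA'w.deriv, show deriv (𝒜 w) v = fA (0, 1) from hAv.deriv, ← hP,
      mul_div_cancel_left₀ _ hw0, hx]
    linear_combination (-fV (1, 0)) * eq2
  refine ⟨goal1, ?_⟩
  have hL : HasDerivAt (fun w' => -𝒜' w' v / v)
      (-(fV (1, 0) + fA (1, 0) * fV (0, 1)) / v) w := hA'w.neg.div_const v
  have hR : HasDerivAt (fun v' => 𝒜 w v' / w) (fA (0, 1) / w) v := hAv.div_const w
  rw [hL.deriv, hR.deriv]
  have g1 : fV (1, 0) + fA (1, 0) * fV (0, 1) = -(v / w) * fA (0, 1) := by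
    rw [← hA'w.deriv, ← show deriv (𝒜 w) v = fA (0, 1) from hAv.deriv]
    exact goal1
  rw [g1]
  field_simp
end

section
/- Let A ⊆ ℂ∖{0} and Ω ⊆ ℂ be open, I ⊆ ℝ an open interval, and D ⊆ (ℂ∖{0})² open. Let g, f : I×A → ℂ∖{0} be C¹ in (t,w) and holomorphic in w for each fixed t, with ∂_wg and ∂_wf nowhere zero and (g(t,w), f(t,w)) ∈ D for all (t,w). Let h : I×Ω → A be C¹ with g(t, h(t,z)) = z for all (t,z) ∈ I×Ω. Let ℋ be holomorphic on D with ∂_{z₁}∂_{z₂}ℋ nowhere zero, and let P : A → ℂ be holomorphic. Assume that for all (t,w) ∈ I×A: ∂_tg(t,w)/∂_wg(t,w) − ∂_tf(t,w)/∂_wf(t,w) = −P′(w) / ( ∂_wf(t,w) · ∂_wg(t,w) · ∂_{z₁}∂_{z₂}ℋ(g(t,w), f(t,w)) ). Then for all (t,z) ∈ I×Ω: ∂_t [ ∂_{z₁}ℋ( z, f(t, h(t,z)) ) ] = P′(h(t,z)) · ∂_z h(t,z). -/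
open Metric Set Filter Complex

open scoped Topology Real

/-- Quantitative Cauchy-integral estimate: the difference quotient of a holomorphic function
minus its derivative is `O(|y - y₀|)` with explicit constant. -/
lemma slope_sub_deriv_bound {φ : ℂ → ℂ} {y₀ y : ℂ} {r M : ℝ} (hr : 0 < r) (hM0 : 0 ≤ M)
    (hφ : DifferentiableOn ℂ φ (ball y₀ (2 * r)))
    (hM : ∀ v ∈ sphere y₀ r, ‖φ v‖ ≤ M)
    (hy : y ∈ ball y₀ (r / 2)) (hy0 : y ≠ y₀) :
    ‖(y - y₀)⁻¹ * (φ y - φ y₀) - deriv φ y₀‖ ≤ ‖y - y₀‖ * (2 * M / r ^ 2) := by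
  have hsub : closedBall y₀ r ⊆ ball y₀ (2 * r) := closedBall_subset_ball (by linarith)
  have hyr : y ∈ ball y₀ r := ball_subset_ball (by linarith) hy
  have hyn : ‖y - y₀‖ < r / 2 := by simpa [mem_ball, Complex.dist_eq] using hy
  have hvy : ∀ v ∈ sphere y₀ r, v - y ≠ 0 ∧ r / 2 ≤ ‖v - y‖ ∧ v - y₀ ≠ 0 ∧ ‖v - y₀‖ = r := by
    intro v hv
    have hv' : ‖v - y₀‖ = r := by simpa [mem_sphere_iff_norm] using hv
    have h2 : r / 2 ≤ ‖v - y‖ := by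
      have h3 : ‖v - y₀‖ - ‖y - y₀‖ ≤ ‖v - y‖ := by
        have := norm_sub_norm_le (v - y₀) (y - y₀)
        simpa [sub_sub_sub_cancel_right] using this
      linarith
    refine ⟨?_, h2, ?_, hv'⟩
    · intro h0
      rw [h0, norm_zero] at h2; linarith
    · intro h0
      rw [h0, norm_zero] at hv'; linarith
  have hcφ : ContinuousOn φ (sphere y₀ r) :=
    hφ.continuousOn.mono (sphere_subset_closedBall.trans hsub)
  have int1 : CircleIntegrable (fun v => (v - y)⁻¹ • φ v) y₀ r := by
    refine ContinuousOn.circleIntegrable hr.le ?_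
    exact (ContinuousOn.inv₀ (by fun_prop) fun v hv => (hvy v hv).1).smul hcφ
  have int0 : CircleIntegrable (fun v => (v - y₀)⁻¹ • φ v) y₀ r := by
    refine ContinuousOn.circleIntegrable hr.le ?_
    exact (ContinuousOn.inv₀ (by fun_prop) fun v hv => (hvy v hv).2.2.1).smul hcφ
  have intsq : CircleIntegrable (fun v => ((v - y₀) ^ 2)⁻¹ • φ v) y₀ r := by
    refine ContinuousOn.circleIntegrable hr.le ?_
    exact (ContinuousOn.inv₀ (by fun_prop)
      fun v hv => pow_ne_zero _ (hvy v hv).2.2.1).smul hcφ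
  have intall : CircleIntegrable
      (fun v => (y - y₀)⁻¹ • ((v - y)⁻¹ • φ v - (v - y₀)⁻¹ • φ v)) y₀ r := by
    refine ContinuousOn.circleIntegrable hr.le (ContinuousOn.smul (f := fun _ => (y - y₀)⁻¹) continuousOn_const ?_)
    exact ((ContinuousOn.inv₀ (by fun_prop) fun v hv => (hvy v hv).1).smul hcφ).sub
      ((ContinuousOn.inv₀ (by fun_prop) fun v hv => (hvy v hv).2.2.1).smul hcφ)
  have I1 : (∮ v in C(y₀, r), (v - y)⁻¹ • φ v) = (2 * ↑π * I) • φ y :=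
    (hφ.mono hsub).circleIntegral_sub_inv_smul hyr
  have I0 : (∮ v in C(y₀, r), (v - y₀)⁻¹ • φ v) = (2 * ↑π * I) • φ y₀ :=
    (hφ.mono hsub).circleIntegral_sub_inv_smul (mem_ball_self hr)
  have D0 : ((2 * ↑π * I : ℂ)⁻¹ • ∮ v in C(y₀, r), ((v - y₀) ^ 2)⁻¹ • φ v) = deriv φ y₀ :=
    Complex.two_pi_I_inv_smul_circleIntegral_sub_sq_inv_smul_of_differentiable isOpen_ball
      hsub hφ (mem_ball_self hr)
  have hk : y - y₀ ≠ 0 := sub_ne_zero.mpr hy0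
  have hEq : EqOn (fun v => ((y - y₀) * ((v - y) * (v - y₀) ^ 2)⁻¹) • φ v)
      (fun v => (y - y₀)⁻¹ • ((v - y)⁻¹ • φ v - (v - y₀)⁻¹ • φ v) - ((v - y₀) ^ 2)⁻¹ • φ v)
      (sphere y₀ r) := by
    intro v hv
    obtain ⟨h1, _, h3, _⟩ := hvy v hv
    simp only [smul_eq_mul]
    field_simp
    ring
  have hQ : (∮ v in C(y₀, r), ((y - y₀) * ((v - y) * (v - y₀) ^ 2)⁻¹) • φ v)
      = (y - y₀)⁻¹ • ((2 * ↑π * I) • φ y - (2 * ↑π * I) • φ y₀)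
        - ∮ v in C(y₀, r), ((v - y₀) ^ 2)⁻¹ • φ v := by
    rw [circleIntegral.integral_congr hr.le hEq, circleIntegral.integral_sub intall intsq,
      circleIntegral.integral_smul, circleIntegral.integral_sub int1 int0, I1, I0]
  have h2πI : (2 * ↑π * I : ℂ) ≠ 0 := by
    simp [Real.pi_ne_zero, I_ne_zero]
  have hmain : (y - y₀)⁻¹ * (φ y - φ y₀) - deriv φ y₀
      = (2 * ↑π * I : ℂ)⁻¹ • ∮ v in C(y₀, r), ((y - y₀) * ((v - y) * (v - y₀) ^ 2)⁻¹) • φ v := by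
    rw [hQ, ← D0]
    simp only [smul_eq_mul]
    field_simp
  have hbound : ∀ v ∈ sphere y₀ r,
      ‖((y - y₀) * ((v - y) * (v - y₀) ^ 2)⁻¹) • φ v‖ ≤ ‖y - y₀‖ * (M / (r / 2 * r ^ 2)) := by
    intro v hv
    obtain ⟨h1, h2, h3, h4⟩ := hvy v hv
    have hφv := hM v hv
    have hvn : r / 2 * r ^ 2 ≤ ‖v - y‖ * r ^ 2 := by nlinarith
    calc ‖((y - y₀) * ((v - y) * (v - y₀) ^ 2)⁻¹) • φ v‖
        = ‖y - y₀‖ * (‖φ v‖ / (‖v - y‖ * r ^ 2)) := by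
          rw [norm_smul, norm_mul, norm_inv, norm_mul, norm_pow, h4]
          ring
      _ ≤ ‖y - y₀‖ * (M / (r / 2 * r ^ 2)) :=
          mul_le_mul_of_nonneg_left
            (div_le_div₀ hM0 hφv (by positivity) hvn) (norm_nonneg _)
  calc ‖(y - y₀)⁻¹ * (φ y - φ y₀) - deriv φ y₀‖
      = ‖(2 * ↑π * I : ℂ)⁻¹‖ * ‖∮ v in C(y₀, r),
          ((y - y₀) * ((v - y) * (v - y₀) ^ 2)⁻¹) • φ v‖ := by rw [hmain, norm_smul]
    _ ≤ (2 * π)⁻¹ * (2 * π * r * (‖y - y₀‖ * (M / (r / 2 * r ^ 2)))) := by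
        have hn : ‖(2 * ↑π * I : ℂ)⁻¹‖ = (2 * π)⁻¹ := by
          simp [norm_inv, abs_of_pos Real.pi_pos]
        rw [hn]
        gcongr
        exact circleIntegral.norm_integral_le_of_norm_le_const hr.le hbound
    _ = ‖y - y₀‖ * (2 * M / r ^ 2) := by
        have hπ : (π : ℝ) ≠ 0 := Real.pi_ne_zero
        field_simp

/-- If `H` is jointly holomorphic on an open set `D ⊆ ℂ × ℂ`, then the partial derivative in the
first variable is differentiable in the second variable, and the mixed partials commute. -/
lemma keyHderiv {H : ℂ → ℂ → ℂ} {D : Set (ℂ × ℂ)} (hD : IsOpen D)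
    (hH : DifferentiableOn ℂ (fun p : ℂ × ℂ => H p.1 p.2) D)
    {z₀ y₀ : ℂ} (hp : (z₀, y₀) ∈ D) :
    HasDerivAt (fun y => deriv (fun u => H u y) z₀)
      (deriv (fun u => deriv (H u) y₀) z₀) y₀ := by
  obtain ⟨ε, hε, hball⟩ := Metric.isOpen_iff.mp hD _ hp
  set r := ε / 3 with hrdef
  have hr : 0 < r := by positivity
  have hr2 : (0 : ℝ) < 2 * r := by positivity
  have hKD : ∀ u ∈ closedBall z₀ r, ∀ v ∈ ball y₀ (2 * r), (u, v) ∈ D := by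
    intro u hu v hv
    apply hball
    rw [mem_ball, Prod.dist_eq]
    rw [mem_closedBall] at hu
    rw [mem_ball] at hv
    exact max_lt (lt_of_le_of_lt hu (by rw [hrdef]; linarith))
      (lt_of_lt_of_le hv (by rw [hrdef]; linarith))
  have hKc : IsCompact (closedBall z₀ r ×ˢ closedBall y₀ r) :=
    (isCompact_closedBall _ _).prod (isCompact_closedBall _ _)
  have hKsub : closedBall z₀ r ×ˢ closedBall y₀ r ⊆ D := by
    rintro ⟨u, v⟩ ⟨hu, hv⟩
    exact hKD u hu v (closedBall_subset_ball (by linarith) hv)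
  obtain ⟨M, hM⟩ := hKc.exists_bound_of_continuousOn (hH.continuousOn.mono hKsub)
  have hM0 : 0 ≤ M := le_trans (norm_nonneg _)
    (hM (z₀, y₀) ⟨mem_closedBall_self hr.le, mem_closedBall_self hr.le⟩)
  have hφdiff : ∀ u ∈ closedBall z₀ r, DifferentiableOn ℂ (H u) (ball y₀ (2 * r)) := by
    intro u hu
    have : DifferentiableOn ℂ ((fun p : ℂ × ℂ => H p.1 p.2) ∘ fun v => (u, v))
        (ball y₀ (2 * r)) :=
      hH.comp (((differentiable_const u).prodMk differentiable_id).differentiableOn)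
        fun v hv => hKD u hu v hv
    exact this
  have hslice : ∀ u ∈ ball z₀ r, ∀ y ∈ ball y₀ (2 * r),
      DifferentiableAt ℂ (fun u' => H u' y) u := by
    intro u hu y hy
    have hd : DifferentiableAt ℂ (fun p : ℂ × ℂ => H p.1 p.2) (u, y) :=
      hH.differentiableAt (hD.mem_nhds (hKD u (ball_subset_closedBall hu) y hy))
    exact hd.comp u (differentiableAt_id.prodMk (differentiableAt_const y) : DifferentiableAt ℂ (fun x : ℂ => (x, y)) u)
  set F : ℂ → ℂ → ℂ := fun y u => (y - y₀)⁻¹ * (H u y - H u y₀) with hFdef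
  set L : ℂ → ℂ := fun u => deriv (H u) y₀ with hLdef
  have hTU : TendstoUniformlyOn F L (𝓝[≠] y₀) (closedBall z₀ r) := by
    rw [Metric.tendstoUniformlyOn_iff]
    intro ε' hε'
    set δ := min (r / 2) (ε' * r ^ 2 / (2 * M + 1)) with hδ
    have hδpos : 0 < δ := by positivity
    have hmem : ball y₀ δ ∈ 𝓝[≠] y₀ := nhdsWithin_le_nhds (ball_mem_nhds _ hδpos)
    filter_upwards [hmem, self_mem_nhdsWithin] with y hyb hy0'
    have hy0 : y ≠ y₀ := hy0'
    intro u hu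
    have hy2 : y ∈ ball y₀ (r / 2) := ball_subset_ball (min_le_left _ _) hyb
    have hyδ : ‖y - y₀‖ < δ := by simpa [mem_ball, Complex.dist_eq] using hyb
    have h1 : ‖y - y₀‖ < ε' * r ^ 2 / (2 * M + 1) := lt_of_lt_of_le hyδ (min_le_right _ _)
    have bound := slope_sub_deriv_bound hr hM0 (hφdiff u hu)
      (fun v hv => hM (u, v) ⟨hu, sphere_subset_closedBall hv⟩) hy2 hy0
    rw [dist_comm, dist_eq_norm]
    have hrne : r ≠ 0 := hr.ne'
    have hMne : (2 * M + 1 : ℝ) ≠ 0 := by positivity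
    calc ‖F y u - L u‖ ≤ ‖y - y₀‖ * (2 * M / r ^ 2) := bound
      _ ≤ ‖y - y₀‖ * ((2 * M + 1) / r ^ 2) := by gcongr; linarith
      _ < (ε' * r ^ 2 / (2 * M + 1)) * ((2 * M + 1) / r ^ 2) := by
          apply mul_lt_mul_of_pos_right h1 (by positivity)
      _ = ε' := by field_simp
  have hFdiffOn : ∀ᶠ y in 𝓝[≠] y₀, DifferentiableOn ℂ (F y) (ball z₀ r) := by
    filter_upwards [nhdsWithin_le_nhds (ball_mem_nhds y₀ hr2)] with y hy
    intro u hu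
    exact (((hslice u hu y hy).sub
      (hslice u hu y₀ (mem_ball_self hr2))).const_mul _).differentiableWithinAt
  have hd := (hTU.tendstoLocallyUniformlyOn.mono ball_subset_closedBall).deriv
    hFdiffOn isOpen_ball
  have htz := hd.tendsto_at (mem_ball_self hr)
  rw [hasDerivAt_iff_tendsto_slope]
  refine htz.congr' ?_
  filter_upwards [nhdsWithin_le_nhds (ball_mem_nhds y₀ hr2), self_mem_nhdsWithin]
    with y hy hy0'
  have d1 : DifferentiableAt ℂ (fun u => H u y) z₀ := hslice z₀ (mem_ball_self hr) y hy
  have d0 : DifferentiableAt ℂ (fun u => H u y₀) z₀ :=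
    hslice z₀ (mem_ball_self hr) y₀ (mem_ball_self hr2)
  have hder : deriv (F y) z₀
      = (y - y₀)⁻¹ * (deriv (fun u => H u y) z₀ - deriv (fun u => H u y₀) z₀) := by
    simp only [hFdef]
    rw [deriv_const_mul _ (by exact d1.sub d0 : DifferentiableAt ℂ (fun u => H u y - H u y₀) z₀), deriv_fun_sub d1 d0]
  show deriv (F y) z₀ = slope (fun y' => deriv (fun u => H u y') z₀) y₀ y
  rw [hder, slope_def_field, div_eq_inv_mul]

/-- Key computation in the proof that `∂_n t_m = δ_{n,m}`: if the C¹ family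
`(g(t,·), f(t,·))` of functions holomorphic in `w` satisfies the deformation relation
`∂_t g/∂_w g - ∂_t f/∂_w f = -P'(w)/(∂_w f · ∂_w g · ∂_{z₁}∂_{z₂}ℋ(g, f))` with generator
`P`, and `h(t,·)` is a right inverse of `g(t,·)` (`g(t, h(t,z)) = z`), then
`∂_t [∂_{z₁}ℋ(z, f(t, h(t,z)))] = P'(h(t,z)) · ∂_z h(t,z)`. -/
theorem stmt_5
    (A Ω : Set ℂ) (hAopen : IsOpen A) (hA0 : ∀ w ∈ A, w ≠ 0) (hΩopen : IsOpen Ω)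
    (a b : ℝ)
    (D : Set (ℂ × ℂ)) (hDopen : IsOpen D) (hD0 : ∀ p ∈ D, p.1 ≠ 0 ∧ p.2 ≠ 0)
    (g f : ℝ → ℂ → ℂ)
    (hgC1 : ContDiffOn ℝ 1 (fun p : ℝ × ℂ => g p.1 p.2) (Set.Ioo a b ×ˢ A))
    (hfC1 : ContDiffOn ℝ 1 (fun p : ℝ × ℂ => f p.1 p.2) (Set.Ioo a b ×ˢ A))
    (hghol : ∀ t ∈ Set.Ioo a b, DifferentiableOn ℂ (g t) A)
    (hfhol : ∀ t ∈ Set.Ioo a b, DifferentiableOn ℂ (f t) A)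
    (hg0 : ∀ t ∈ Set.Ioo a b, ∀ w ∈ A, g t w ≠ 0)
    (hf0 : ∀ t ∈ Set.Ioo a b, ∀ w ∈ A, f t w ≠ 0)
    (hgd : ∀ t ∈ Set.Ioo a b, ∀ w ∈ A, deriv (g t) w ≠ 0)
    (hfd : ∀ t ∈ Set.Ioo a b, ∀ w ∈ A, deriv (f t) w ≠ 0)
    (hmemD : ∀ t ∈ Set.Ioo a b, ∀ w ∈ A, (g t w, f t w) ∈ D)
    (h : ℝ → ℂ → ℂ)
    (hhC1 : ContDiffOn ℝ 1 (fun p : ℝ × ℂ => h p.1 p.2) (Set.Ioo a b ×ˢ Ω))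
    (hhA : ∀ t ∈ Set.Ioo a b, ∀ z ∈ Ω, h t z ∈ A)
    (hinv : ∀ t ∈ Set.Ioo a b, ∀ z ∈ Ω, g t (h t z) = z)
    (H : ℂ → ℂ → ℂ)
    (hH : DifferentiableOn ℂ (fun p : ℂ × ℂ => H p.1 p.2) D)
    (hH12 : ∀ p ∈ D, deriv (fun w => deriv (H w) p.2) p.1 ≠ 0)
    (P : ℂ → ℂ) (hP : DifferentiableOn ℂ P A)
    (hflow : ∀ t ∈ Set.Ioo a b, ∀ w ∈ A,
      deriv (fun s => g s w) t / deriv (g t) w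
          - deriv (fun s => f s w) t / deriv (f t) w
        = -deriv P w / (deriv (f t) w * deriv (g t) w
            * deriv (fun z => deriv (H z) (f t w)) (g t w))) :
    ∀ t ∈ Set.Ioo a b, ∀ z ∈ Ω,
      deriv (fun s => deriv (fun u => H u (f s (h s z))) z) t
        = deriv P (h t z) * deriv (h t) z := by
  intro t ht z hz
  have hw₀A : h t z ∈ A := hhA t ht z hz
  set w₀ := h t z with hw₀def
  have hgtz : g t w₀ = z := hinv t ht z hz
  have hopen1 : IsOpen (Set.Ioo a b ×ˢ A) := isOpen_Ioo.prod hAopen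
  have hopen2 : IsOpen (Set.Ioo a b ×ˢ Ω) := isOpen_Ioo.prod hΩopen
  have hfd' : DifferentiableAt ℝ (fun p : ℝ × ℂ => f p.1 p.2) (t, w₀) :=
    (hfC1.contDiffAt (hopen1.mem_nhds ⟨ht, hw₀A⟩)).differentiableAt one_ne_zero
  have hgd' : DifferentiableAt ℝ (fun p : ℝ × ℂ => g p.1 p.2) (t, w₀) :=
    (hgC1.contDiffAt (hopen1.mem_nhds ⟨ht, hw₀A⟩)).differentiableAt one_ne_zero
  have hhd' : DifferentiableAt ℝ (fun p : ℝ × ℂ => h p.1 p.2) (t, z) :=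
    (hhC1.contDiffAt (hopen2.mem_nhds ⟨ht, hz⟩)).differentiableAt one_ne_zero
  set Lf := fderiv ℝ (fun p : ℝ × ℂ => f p.1 p.2) (t, w₀) with hLf
  set Lg := fderiv ℝ (fun p : ℝ × ℂ => g p.1 p.2) (t, w₀) with hLg
  set Lh := fderiv ℝ (fun p : ℝ × ℂ => h p.1 p.2) (t, z) with hLh
  have curve1 : HasDerivAt (fun s : ℝ => ((s, w₀) : ℝ × ℂ)) (1, 0) t :=
    (hasDerivAt_id t).prodMk (hasDerivAt_const t w₀)
  have hft : HasDerivAt (fun s => f s w₀) (Lf (1, 0)) t :=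
    by have := hfd'.hasFDerivAt.comp_hasDerivAt t curve1; exact this
  have hgt : HasDerivAt (fun s => g s w₀) (Lg (1, 0)) t :=
    by have := hgd'.hasFDerivAt.comp_hasDerivAt t curve1; exact this
  have hht : HasDerivAt (fun s => h s z) (Lh (1, 0)) t :=
    by have := hhd'.hasFDerivAt.comp_hasDerivAt t ((hasDerivAt_id t).prodMk (hasDerivAt_const t z)); exact this
  set ht' := Lh (1, 0) with hht'def
  have hfA : DifferentiableAt ℂ (f t) w₀ := (hfhol t ht).differentiableAt (hAopen.mem_nhds hw₀A)
  have hgA : DifferentiableAt ℂ (g t) w₀ := (hghol t ht).differentiableAt (hAopen.mem_nhds hw₀A)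
  set fw := deriv (f t) w₀ with hfw
  set gw := deriv (g t) w₀ with hgw
  have hfw0 : fw ≠ 0 := hfd t ht w₀ hw₀A
  have hgw0 : gw ≠ 0 := hgd t ht w₀ hw₀A
  -- partial derivative in `w` of `f` and `g` via slices
  have hcurve2 : HasFDerivAt (fun w : ℂ => ((t, w) : ℝ × ℂ))
      ((0 : ℂ →L[ℝ] ℝ).prod (ContinuousLinearMap.id ℝ ℂ)) w₀ :=
    (hasFDerivAt_const t w₀).prodMk (hasFDerivAt_id w₀)
  have hfcomp : HasFDerivAt (f t)
      (Lf.comp ((0 : ℂ →L[ℝ] ℝ).prod (ContinuousLinearMap.id ℝ ℂ))) w₀ :=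
    hfd'.hasFDerivAt.comp w₀ hcurve2
  have hgcomp : HasFDerivAt (g t)
      (Lg.comp ((0 : ℂ →L[ℝ] ℝ).prod (ContinuousLinearMap.id ℝ ℂ))) w₀ :=
    hgd'.hasFDerivAt.comp w₀ hcurve2
  have hLf0 : ∀ k : ℂ, Lf (0, k) = k * fw := by
    intro k
    have hu := hfcomp.unique ((hfA.hasDerivAt.hasFDerivAt).restrictScalars ℝ)
    have h2 := congrArg (fun (L : ℂ →L[ℝ] ℂ) => L k) hu
    simpa [smul_eq_mul] using h2
  have hLg0 : ∀ k : ℂ, Lg (0, k) = k * gw := by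
    intro k
    have hu := hgcomp.unique ((hgA.hasDerivAt.hasFDerivAt).restrictScalars ℝ)
    have h2 := congrArg (fun (L : ℂ →L[ℝ] ℂ) => L k) hu
    simpa [smul_eq_mul] using h2
  -- `h t` is ℂ-differentiable at `z` with derivative `gw⁻¹`
  have hhcomp : HasFDerivAt (h t)
      (Lh.comp ((0 : ℂ →L[ℝ] ℝ).prod (ContinuousLinearMap.id ℝ ℂ))) z :=
    hhd'.hasFDerivAt.comp z ((hasFDerivAt_const t z).prodMk (hasFDerivAt_id z))
  set Mh := Lh.comp ((0 : ℂ →L[ℝ] ℝ).prod (ContinuousLinearMap.id ℝ ℂ)) with hMhdef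
  have hcompgh : HasFDerivAt (fun z' => g t (h t z'))
      (((ContinuousLinearMap.smulRight (1 : ℂ →L[ℂ] ℂ) gw).restrictScalars ℝ).comp Mh) z :=
    ((hgA.hasDerivAt.hasFDerivAt).restrictScalars ℝ).comp z hhcomp
  have hghid : (fun z' => g t (h t z')) =ᶠ[𝓝 z] fun z' => z' := by
    filter_upwards [hΩopen.mem_nhds hz] with z' hz'
    exact hinv t ht z' hz'
  have hidM : HasFDerivAt (fun z' : ℂ => z')
      (((ContinuousLinearMap.smulRight (1 : ℂ →L[ℂ] ℂ) gw).restrictScalars ℝ).comp Mh) z :=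
    hcompgh.congr_of_eventuallyEq hghid.symm
  have hMeq : ((ContinuousLinearMap.smulRight (1 : ℂ →L[ℂ] ℂ) gw).restrictScalars ℝ).comp Mh
      = ContinuousLinearMap.id ℝ ℂ := hidM.unique (hasFDerivAt_id z)
  have hMh : ∀ x : ℂ, Mh x = gw⁻¹ * x := by
    intro x
    have h2 := congrArg (fun (L : ℂ →L[ℝ] ℂ) => L x) hMeq
    have h3 : Mh x * gw = x := by simpa [smul_eq_mul, mul_comm] using h2
    field_simp
    linear_combination h3
  have hhzC : HasDerivAt (h t) gw⁻¹ z := by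
    have hrs : (ContinuousLinearMap.smulRight (1 : ℂ →L[ℂ] ℂ) gw⁻¹).restrictScalars ℝ = Mh := by
      ext x
      simp [smul_eq_mul, hMh x, mul_comm]
    have h4 := hasFDerivAt_of_restrictScalars ℝ hhcomp hrs
    simpa using h4.hasDerivAt
  have hderivhtz : deriv (h t) z = gw⁻¹ := hhzC.deriv
  -- `t`-relation from `g s (h s z) = z`
  have curve3 : HasDerivAt (fun s : ℝ => ((s, h s z) : ℝ × ℂ)) (1, ht') t :=
    (hasDerivAt_id t).prodMk hht
  have hgracomp : HasDerivAt (fun s => g s (h s z)) (Lg (1, ht')) t :=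
    by have := hgd'.hasFDerivAt.comp_hasDerivAt t curve3; exact this
  have hgconst : (fun s => g s (h s z)) =ᶠ[𝓝 t] fun _ => z := by
    filter_upwards [isOpen_Ioo.mem_nhds ht] with s hs
    exact hinv s hs z hz
  have hz0 : Lg (1, ht') = 0 :=
    (hgracomp.congr_of_eventuallyEq hgconst.symm).unique (hasDerivAt_const t z)
  have hsplit : ∀ (L : ℝ × ℂ →L[ℝ] ℂ) (k : ℂ), L (1, k) = L (1, 0) + L (0, k) := by
    intro L k
    rw [← map_add]
    norm_num
  have hgrel : Lg (1, 0) + ht' * gw = 0 := by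
    have h5 := hz0
    rw [hsplit, hLg0] at h5
    exact h5
  have hFt : HasDerivAt (fun s => f s (h s z)) (Lf (1, ht')) t :=
    by have := hfd'.hasFDerivAt.comp_hasDerivAt t curve3; exact this
  -- key second-derivative lemma
  have hupD : (z, f t w₀) ∈ D := by
    have h6 := hmemD t ht w₀ hw₀A
    rwa [hgtz] at h6
  set Hm := deriv (fun u => deriv (H u) (f t w₀)) z with hHmdef
  have hkey : HasDerivAt (fun y => deriv (fun u => H u y) z) Hm (f t w₀) :=
    keyHderiv hDopen hH hupD
  have hHm0 : Hm ≠ 0 := by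
    have h7 := hH12 (z, f t w₀) hupD
    simpa [hHmdef] using h7
  have hLHS : HasDerivAt (fun s => deriv (fun u => H u (f s (h s z))) z)
      (Lf (1, ht') * Hm) t := by
    have hcomp9 := (hkey.hasFDerivAt.restrictScalars ℝ).comp_hasDerivAt t hFt
    simpa [smul_eq_mul, mul_comm, Function.comp_def] using hcomp9
  rw [hLHS.deriv, hderivhtz, hsplit, hLf0]
  -- final algebra
  have hflowE := hflow t ht w₀ hw₀A
  rw [hgtz, ← hfw, ← hgw, ← hHmdef] at hflowE
  rw [hft.deriv, hgt.deriv] at hflowE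
  have hE2 : Lg (1, 0) * fw * Hm - Lf (1, 0) * gw * Hm = -deriv P w₀ := by
    field_simp at hflowE
    linear_combination hflowE
  have hht2 : ht' = -(Lg (1, 0) / gw) := by
    field_simp
    linear_combination hgrel
  rw [hht2]
  field_simp
  linear_combination -hE2
end

section
/- Let A ⊆ ℂ∖{0} and Ω ⊆ ℂ be open, I ⊆ ℝ an open interval, and D ⊆ (ℂ∖{0})² open. Let g, f : I×A → ℂ∖{0} be C¹ in (t,w) and holomorphic in w for each fixed t, with ∂_wg and ∂_wf nowhere zero and (g(t,w), f(t,w)) ∈ D for all (t,w). Let k : I×Ω → A be C¹ with f(t, k(t,z)) = z for all (t,z) ∈ I×Ω. Let ℋ be holomorphic on D with ∂_{z₁}∂_{z₂}ℋ nowhere zero, and let P : A → ℂ be holomorphic. Assume that for all (t,w) ∈ I×A: ∂_tg(t,w)/∂_wg(t,w) − ∂_tf(t,w)/∂_wf(t,w) = −P′(w) / ( ∂_wf(t,w) · ∂_wg(t,w) · ∂_{z₁}∂_{z₂}ℋ(g(t,w), f(t,w)) ). Then for all (t,z) ∈ I×Ω: −∂_t [ ∂_{z₂}ℋ( g(t,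 k(t,z)), z ) ] = P′(k(t,z)) · ∂_z k(t,z). -/
/-- Companion identity to the key computation in the proof that `∂_n t_m = δ_{n,m}`:
if the C¹ family `(g(t,·), f(t,·))` of functions holomorphic in `w` satisfies the
deformation relation with generator `P`, and `k(t,·)` is a right inverse of `f(t,·)`
(`f(t, k(t,z)) = z`), then `-∂_t [∂_{z₂}ℋ(g(t, k(t,z)), z)] = P'(k(t,z)) · ∂_z k(t,z)`. -/
theorem stmt_6
    (A Ω : Set ℂ) (hAopen : IsOpen A) (hA0 : ∀ w ∈ A, w ≠ 0) (hΩopen : IsOpen Ω)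
    (a b : ℝ)
    (D : Set (ℂ × ℂ)) (hDopen : IsOpen D) (hD0 : ∀ p ∈ D, p.1 ≠ 0 ∧ p.2 ≠ 0)
    (g f : ℝ → ℂ → ℂ)
    (hgC1 : ContDiffOn ℝ 1 (fun p : ℝ × ℂ => g p.1 p.2) (Set.Ioo a b ×ˢ A))
    (hfC1 : ContDiffOn ℝ 1 (fun p : ℝ × ℂ => f p.1 p.2) (Set.Ioo a b ×ˢ A))
    (hghol : ∀ t ∈ Set.Ioo a b, DifferentiableOn ℂ (g t) A)
    (hfhol : ∀ t ∈ Set.Ioo a b, DifferentiableOn ℂ (f t) A)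
    (hg0 : ∀ t ∈ Set.Ioo a b, ∀ w ∈ A, g t w ≠ 0)
    (hf0 : ∀ t ∈ Set.Ioo a b, ∀ w ∈ A, f t w ≠ 0)
    (hgd : ∀ t ∈ Set.Ioo a b, ∀ w ∈ A, deriv (g t) w ≠ 0)
    (hfd : ∀ t ∈ Set.Ioo a b, ∀ w ∈ A, deriv (f t) w ≠ 0)
    (hmemD : ∀ t ∈ Set.Ioo a b, ∀ w ∈ A, (g t w, f t w) ∈ D)
    (k : ℝ → ℂ → ℂ)
    (hkC1 : ContDiffOn ℝ 1 (fun p : ℝ × ℂ => k p.1 p.2) (Set.Ioo a b ×ˢ Ω))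
    (hkA : ∀ t ∈ Set.Ioo a b, ∀ z ∈ Ω, k t z ∈ A)
    (hinv : ∀ t ∈ Set.Ioo a b, ∀ z ∈ Ω, f t (k t z) = z)
    (H : ℂ → ℂ → ℂ)
    (hH : DifferentiableOn ℂ (fun p : ℂ × ℂ => H p.1 p.2) D)
    (hH12 : ∀ p ∈ D, deriv (fun w => deriv (H w) p.2) p.1 ≠ 0)
    (P : ℂ → ℂ) (hP : DifferentiableOn ℂ P A)
    (hflow : ∀ t ∈ Set.Ioo a b, ∀ w ∈ A,
      deriv (fun s => g s w) t / deriv (g t) w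
          - deriv (fun s => f s w) t / deriv (f t) w
        = -deriv P w / (deriv (f t) w * deriv (g t) w
            * deriv (fun z => deriv (H z) (f t w)) (g t w))) :
    ∀ t ∈ Set.Ioo a b, ∀ z ∈ Ω,
      -deriv (fun s => deriv (H (g s (k s z))) z) t
        = deriv P (k t z) * deriv (k t) z := by

  intro t ht z hz
  have hwA : k t z ∈ A := hkA t ht z hz
  have hfw : f t (k t z) = z := hinv t ht z hz
  set w := k t z with hwdef
  have hDx : (g t w, z) ∈ D := by rw [← hfw]; exact hmemD t ht w hwA
  have hFw0 : deriv (f t) w ≠ 0 := hfd t ht w hwA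
  have hGw0 : deriv (g t) w ≠ 0 := hgd t ht w hwA
  have hc0 : deriv (fun y => deriv (H y) z) (g t w) ≠ 0 := hH12 (g t w, z) hDx
  have hnw : Set.Ioo a b ×ˢ A ∈ nhds ((t, w) : ℝ × ℂ) :=
    (isOpen_Ioo.prod hAopen).mem_nhds ⟨ht, hwA⟩
  have hnz : Set.Ioo a b ×ˢ Ω ∈ nhds ((t, z) : ℝ × ℂ) :=
    (isOpen_Ioo.prod hΩopen).mem_nhds ⟨ht, hz⟩
  have hGdiff : DifferentiableAt ℝ (fun p : ℝ × ℂ => g p.1 p.2) (t, w) :=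
    (hgC1.contDiffAt hnw).differentiableAt one_ne_zero
  have hFdiff : DifferentiableAt ℝ (fun p : ℝ × ℂ => f p.1 p.2) (t, w) :=
    (hfC1.contDiffAt hnw).differentiableAt one_ne_zero
  have hKdiff : DifferentiableAt ℝ (fun p : ℝ × ℂ => k p.1 p.2) (t, z) :=
    (hkC1.contDiffAt hnz).differentiableAt one_ne_zero
  set Lg := fderiv ℝ (fun p : ℝ × ℂ => g p.1 p.2) (t, w) with hLg
  set Lf := fderiv ℝ (fun p : ℝ × ℂ => f p.1 p.2) (t, w) with hLf
  set Lk := fderiv ℝ (fun p : ℝ × ℂ => k p.1 p.2) (t, z) with hLk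
  have hG : HasFDerivAt (fun p : ℝ × ℂ => g p.1 p.2) Lg (t, w) := hGdiff.hasFDerivAt
  have hF : HasFDerivAt (fun p : ℝ × ℂ => f p.1 p.2) Lf (t, w) := hFdiff.hasFDerivAt
  have hK : HasFDerivAt (fun p : ℝ × ℂ => k p.1 p.2) Lk (t, z) := hKdiff.hasFDerivAt
  have hgw : HasDerivAt (g t) (deriv (g t) w) w :=
    (((hghol t ht) w hwA).differentiableAt (hAopen.mem_nhds hwA)).hasDerivAt
  have hfwD : HasDerivAt (f t) (deriv (f t) w) w :=
    (((hfhol t ht) w hwA).differentiableAt (hAopen.mem_nhds hwA)).hasDerivAt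
  have hgslice : ∀ u : ℂ, Lg (0, u) = u * deriv (g t) w := by
    have h1 : HasFDerivAt (g t) (Lg.comp (ContinuousLinearMap.inr ℝ ℝ ℂ)) w :=
      hG.comp w (hasFDerivAt_prodMk_right t w)
    have h2 := h1.unique (hgw.hasFDerivAt.restrictScalars ℝ)
    intro u
    have := congrArg (fun (L : ℂ →L[ℝ] ℂ) => L u) h2
    simpa [smul_eq_mul] using this
  have hfslice : ∀ u : ℂ, Lf (0, u) = u * deriv (f t) w := by
    have h1 : HasFDerivAt (f t) (Lf.comp (ContinuousLinearMap.inr ℝ ℝ ℂ)) w :=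
      hF.comp w (hasFDerivAt_prodMk_right t w)
    have h2 := h1.unique (hfwD.hasFDerivAt.restrictScalars ℝ)
    intro u
    have := congrArg (fun (L : ℂ →L[ℝ] ℂ) => L u) h2
    simpa [smul_eq_mul] using this
  have hgt : HasDerivAt (fun s => g s w) (Lg (1, 0)) t := by
    have hι : HasDerivAt (fun s : ℝ => ((s, w) : ℝ × ℂ)) (1, 0) t :=
      (hasDerivAt_id t).prodMk (hasDerivAt_const t w)
    exact hG.comp_hasDerivAt t hι
  have hft : HasDerivAt (fun s => f s w) (Lf (1, 0)) t := by
    have hι : HasDerivAt (fun s : ℝ => ((s, w) : ℝ × ℂ)) (1, 0) t :=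
      (hasDerivAt_id t).prodMk (hasDerivAt_const t w)
    exact hF.comp_hasDerivAt t hι
  have hinner : HasFDerivAt (fun p : ℝ × ℂ => ((p.1, k p.1 p.2) : ℝ × ℂ))
      ((ContinuousLinearMap.fst ℝ ℝ ℂ).prod Lk) (t, z) :=
    (hasFDerivAt_fst).prodMk hK
  have hΨ : HasFDerivAt (fun p : ℝ × ℂ => f p.1 (k p.1 p.2))
      (Lf.comp ((ContinuousLinearMap.fst ℝ ℝ ℂ).prod Lk)) (t, z) := by
    have := hF.comp (t, z) hinner
    exact this
  have hsnd : (Lf.comp ((ContinuousLinearMap.fst ℝ ℝ ℂ).prod Lk))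
      = ContinuousLinearMap.snd ℝ ℝ ℂ := by
    have heq : (fun p : ℝ × ℂ => p.2) =ᶠ[nhds ((t, z) : ℝ × ℂ)]
        (fun p : ℝ × ℂ => f p.1 (k p.1 p.2)) := by
      filter_upwards [hnz] with p hp
      exact (hinv p.1 hp.1 p.2 hp.2).symm
    exact (hΨ.congr_of_eventuallyEq heq).unique hasFDerivAt_snd
  have happ : ∀ v : ℝ × ℂ, Lf (v.1, Lk v) = v.2 := by
    intro v
    have := congrArg (fun (L : ℝ × ℂ →L[ℝ] ℂ) => L v) hsnd
    simpa using this
  have hkt : Lf (1, 0) + Lk (1, 0) * deriv (f t) w = 0 := by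
    have h1 := happ (1, 0)
    have hdec : ((1 : ℝ), Lk ((1 : ℝ), (0 : ℂ))) = ((1 : ℝ), (0 : ℂ)) + ((0 : ℝ), Lk (1, 0)) := by
      simp
    rw [show Lf ((1 : ℝ), Lk ((1 : ℝ), (0 : ℂ))) = Lf (1, 0) + Lf (0, Lk (1, 0)) by
      rw [← map_add]; exact congrArg Lf hdec] at h1
    rw [hfslice (Lk (1, 0))] at h1
    simpa using h1
  have hkz : ∀ u : ℂ, Lk (0, u) = u * (deriv (f t) w)⁻¹ := by
    intro u
    have h1 := happ (0, u)
    have hdec : ((0 : ℝ), Lk ((0 : ℝ), u)) = ((0 : ℝ), (0 : ℂ)) + ((0 : ℝ), Lk ((0 : ℝ), u)) := by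
      simp
    rw [show Lf ((0 : ℝ), Lk ((0 : ℝ), u)) = Lf (0, 0) + Lf (0, Lk (0, u)) by
      rw [← map_add]; exact congrArg Lf hdec, hfslice (Lk (0, u))] at h1
    rw [show ((0:ℝ),(0:ℂ)) = (0 : ℝ × ℂ) from rfl, map_zero, zero_add] at h1
    rw [eq_mul_inv_iff_mul_eq₀ hFw0]
    exact h1
  have hktz : HasDerivAt (k t) ((deriv (f t) w)⁻¹) z := by
    have h1 : HasFDerivAt (k t) (Lk.comp (ContinuousLinearMap.inr ℝ ℝ ℂ)) z :=
      hK.comp z (hasFDerivAt_prodMk_right t z)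
    rw [hasDerivAt_iff_hasFDerivAt]
    refine hasFDerivAt_of_restrictScalars ℝ h1 ?_
    ext u
    simp [hkz u, smul_eq_mul, mul_comm]
  have hks : HasDerivAt (fun s => k s z) (Lk (1, 0)) t := by
    have hι : HasDerivAt (fun s : ℝ => ((s, z) : ℝ × ℂ)) (1, 0) t :=
      (hasDerivAt_id t).prodMk (hasDerivAt_const t z)
    exact hK.comp_hasDerivAt t hι
  have hγ : HasDerivAt (fun s => g s (k s z)) (Lg (1, Lk (1, 0))) t := by
    have hι : HasDerivAt (fun s : ℝ => ((s, k s z) : ℝ × ℂ)) ((1 : ℝ), Lk (1, 0)) t :=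
      (hasDerivAt_id t).prodMk hks
    exact hG.comp_hasDerivAt t hι
  have hΦdiff : DifferentiableAt ℂ (fun y => deriv (H y) z) (g t w) := by
    by_contra hcon
    exact hc0 (deriv_zero_of_not_differentiableAt hcon)
  have hcomp : HasDerivAt (fun s => deriv (H (g s (k s z))) z)
      (Lg (1, Lk (1, 0)) * deriv (fun y => deriv (H y) z) (g t w)) t := by
    have h1 := (hΦdiff.hasDerivAt.hasFDerivAt.restrictScalars ℝ).comp_hasDerivAt t hγ
    simpa [Function.comp_def, smul_eq_mul] using h1
  have hkderiv : deriv (k t) z = (deriv (f t) w)⁻¹ := hktz.deriv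
  rw [hcomp.deriv, hkderiv]
  have key := hflow t ht w hwA
  rw [hfw, hgt.deriv, hft.deriv] at key
  have hLgdec : Lg ((1 : ℝ), Lk (1, 0)) = Lg (1, 0) + Lk (1, 0) * deriv (g t) w := by
    have hdec : ((1 : ℝ), Lk ((1 : ℝ), (0 : ℂ))) = ((1 : ℝ), (0 : ℂ)) + ((0 : ℝ), Lk (1, 0)) := by
      simp
    rw [show Lg ((1 : ℝ), Lk ((1 : ℝ), (0 : ℂ))) = Lg (1, 0) + Lg (0, Lk (1, 0)) by
      rw [← map_add]; exact congrArg Lg hdec, hgslice (Lk (1, 0))]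
  rw [hLgdec]
  have hkt' : Lk (1, 0) = -Lf (1, 0) / deriv (f t) w := by
    field_simp
    linear_combination hkt
  rw [hkt']
  field_simp at key ⊢
  have key2 : ((Lg (1, 0) * deriv (f t) w - Lf (1, 0) * deriv (g t) w)
        * deriv (fun y => deriv (H y) z) (g t w)) * (deriv (g t) w * deriv (f t) w)
      = (-deriv P w) * (deriv (g t) w * deriv (f t) w) := by linear_combination (deriv (g t) w * deriv (f t) w) * key
  have key3 := mul_right_cancel₀ (mul_ne_zero hGw0 hFw0) key2
  linear_combination (-1 : ℂ) * key3
end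

section
/- Let A ⊆ ℂ∖{0} be an open annulus containing the unit circle, I ⊆ ℝ an open interval, and D ⊆ (ℂ∖{0})² open. Let g, f : I×A → ℂ∖{0} be C¹ in (t,w) and holomorphic in w for each fixed t, with ∂_wg and ∂_wf nowhere zero and (g(t,w), f(t,w)) ∈ D. Let ℋ be holomorphic on D with ∂_{z₁}∂_{z₂}ℋ nowhere zero, let P : A → ℂ be holomorphic, and assume that for all (t,w): ∂_tg/∂_wg − ∂_tf/∂_wf = −P′(w)/( ∂_wf · ∂_wg · ∂_{z₁}∂_{z₂}ℋ(g,f) ). Let Φ be holomorphic on an open set containing the image of g and Ψ holomorphic on an open set containing the image of f. Then for each t ∈ I: d/dt ∮_{S¹} { ∂_{z₁}ℋ(g,f)·∂_wg·Φ(g) + ∂_{z₂}ℋ(g,f)·∂_wf·Ψ(f) } dw = ∮_{S¹} P′(w) ( Φ(g(t,w)) − Ψ(f(t,w)) ) dw. -/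
open Set Metric Complex Filter

/-- chain rule: complex-differentiable function after a real path -/
lemma comp_hasDerivAt_real {φ : ℂ → ℂ} {z' : ℂ} {γ : ℝ → ℂ} {γ' : ℂ} {s : ℝ}
    (hφ : HasDerivAt φ z' (γ s)) (hγ : HasDerivAt γ γ' s) :
    HasDerivAt (fun τ => φ (γ τ)) (z' * γ') s := by
  have h := (hφ.hasFDerivAt.restrictScalars ℝ).comp_hasDerivAt s hγ
  simpa [mul_comm, Function.comp_def] using h

/-- Joint continuity of the `w`-derivative for a jointly continuous family of
holomorphic functions. -/
lemma jointCont_deriv {α : Type*} [MetricSpace α] [ProperSpace α]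
    {T : Set α} {U : Set ℂ} (hT : IsOpen T) (hU : IsOpen U)
    {v : α → ℂ → ℂ}
    (hc : ContinuousOn (fun p : α × ℂ => v p.1 p.2) (T ×ˢ U))
    (hhol : ∀ t ∈ T, DifferentiableOn ℂ (v t) U) :
    ContinuousOn (fun p : α × ℂ => deriv (v p.1) p.2) (T ×ˢ U) := by
  rintro ⟨t₀, w₀⟩ hp₀
  obtain ⟨ht₀, hw₀⟩ : t₀ ∈ T ∧ w₀ ∈ U := by simpa using hp₀
  -- choose δ with closedBall w₀ (3δ) ⊆ U
  obtain ⟨ρ, hρ, hρU⟩ := Metric.isOpen_iff.1 hU w₀ hw₀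
  set δ : ℝ := ρ / 4 with hδdef
  have hδ : 0 < δ := by positivity
  have hball3 : closedBall w₀ (3 * δ) ⊆ U := by
    refine Subset.trans ?_ hρU
    apply closedBall_subset_ball; rw [hδdef]; linarith
  -- choose ε with Icc ⊆ T
  obtain ⟨ε, hε, hεT⟩ := Metric.isOpen_iff.1 hT t₀ ht₀
  have hIccT : closedBall t₀ (ε/2) ⊆ T := by
    refine Subset.trans ?_ hεT
    exact closedBall_subset_ball (by linarith)
  set K2 : Set ℂ := closedBall w₀ (2 * δ) with hK2def
  have hK2U : K2 ⊆ U :=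
    (closedBall_subset_closedBall (by linarith)).trans hball3
  -- uniform convergence of v t → v t₀ on K2
  have hKc : IsCompact ((closedBall t₀ (ε/2)) ×ˢ K2) :=
    (isCompact_closedBall _ _).prod (isCompact_closedBall _ _)
  have hucont : UniformContinuousOn (fun p : α × ℂ => v p.1 p.2)
      ((closedBall t₀ (ε/2)) ×ˢ K2) :=
    hKc.uniformContinuousOn_of_continuous
      (hc.mono (prod_mono hIccT hK2U))
  have htu : TendstoUniformlyOn v (v t₀) (nhdsWithin t₀ (closedBall t₀ (ε/2))) K2 :=
    UniformContinuousOn.tendstoUniformlyOn hucont (mem_closedBall_self (by linarith))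
  have hIcc_nhds : closedBall t₀ (ε/2) ∈ nhds t₀ :=
    closedBall_mem_nhds t₀ (by linarith)
  have htu' : TendstoUniformlyOn v (v t₀) (nhds t₀) K2 := by
    rwa [nhdsWithin_eq_nhds.2 hIcc_nhds] at htu
  -- continuity of deriv (v t₀) at w₀
  have hdc : ContinuousAt (deriv (v t₀)) w₀ := by
    have := (((hhol t₀ ht₀).analyticOnNhd hU).deriv).continuousOn (s := U)
    exact this.continuousAt (hU.mem_nhds hw₀)
  rw [ContinuousWithinAt, Metric.tendsto_nhdsWithin_nhds]
  intro ε' hε'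
  -- from uniform convergence: eventually sup dist < ε'*δ/4
  have hM : (0:ℝ) < ε' * δ / 4 := by positivity
  have hev1 := Metric.tendstoUniformlyOn_iff.1 htu' _ hM
  rw [Metric.eventually_nhds_iff] at hev1
  obtain ⟨δ₁, hδ₁, h1⟩ := hev1
  have hev2 := (Metric.continuousAt_iff.1 hdc) (ε'/2) (by linarith)
  obtain ⟨δ₂, hδ₂, h2⟩ := hev2
  refine ⟨min (min δ₁ (ε/2)) (min δ₂ δ), by positivity, ?_⟩
  rintro ⟨t, w⟩ hp hd
  obtain ⟨htT, hwU⟩ : t ∈ T ∧ w ∈ U := by simpa using hp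
  have hdt : dist t t₀ < min (min δ₁ (ε/2)) (min δ₂ δ) :=
    lt_of_le_of_lt (le_trans (by rw [Prod.dist_eq]; exact le_max_left _ _) le_rfl) hd
  have hdw : dist w w₀ < min (min δ₁ (ε/2)) (min δ₂ δ) :=
    lt_of_le_of_lt (le_trans (by rw [Prod.dist_eq]; exact le_max_right _ _) le_rfl) hd
  have htIcc : t ∈ closedBall t₀ (ε/2) :=
    le_of_lt (lt_of_lt_of_le hdt (le_trans (min_le_left _ _) (min_le_right _ _)))
  have hwδ : dist w w₀ < δ := lt_of_lt_of_le hdw (le_trans (min_le_right _ _) (min_le_right _ _))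
  -- rewrite both derivs as cderiv δ at w
  have hcb : closedBall w δ ⊆ U := by
    intro x hx
    apply hball3
    simp only [mem_closedBall] at hx ⊢
    calc dist x w₀ ≤ dist x w + dist w w₀ := dist_triangle _ _ _
      _ ≤ 3 * δ := by linarith
  have he1 : cderiv δ (v t) w = deriv (v t) w :=
    cderiv_eq_deriv hU (hhol t htT) hδ hcb
  have he2 : cderiv δ (v t₀) w = deriv (v t₀) w :=
    cderiv_eq_deriv hU (hhol t₀ ht₀) hδ hcb
  have hsub : cderiv δ (v t - v t₀) w = cderiv δ (v t) w - cderiv δ (v t₀) w := by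
    apply cderiv_sub hδ
    · exact ((hhol t htT).continuousOn).mono (fun x hx => hcb (sphere_subset_closedBall hx))
    · exact ((hhol t₀ ht₀).continuousOn).mono (fun x hx => hcb (sphere_subset_closedBall hx))
  have hsphK2 : sphere w δ ⊆ K2 := by
    intro x hx
    simp only [mem_sphere_iff_norm] at hx
    simp only [hK2def, mem_closedBall]
    calc dist x w₀ ≤ dist x w + dist w w₀ := dist_triangle _ _ _
      _ ≤ 2 * δ := by
          rw [dist_eq_norm, hx]; linarith
  have hbound : ‖cderiv δ (v t - v t₀) w‖ ≤ (ε' * δ / 4) / δ := by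
    apply Complex.norm_cderiv_le hδ
    intro x hx
    have := h1 (y := t) (lt_of_lt_of_le hdt (le_trans (min_le_left _ _) (min_le_left _ _)))
      x (hsphK2 hx)
    simp only [Pi.sub_apply]
    rw [← dist_eq_norm, dist_comm]
    exact le_of_lt this
  have hterm1 : dist (deriv (v t) w) (deriv (v t₀) w) ≤ ε' / 4 := by
    rw [dist_eq_norm, ← he1, ← he2, ← hsub]
    calc ‖cderiv δ (v t - v t₀) w‖ ≤ (ε' * δ / 4) / δ := hbound
      _ = ε' / 4 := by field_simp
  have hterm2 : dist (deriv (v t₀) w) (deriv (v t₀) w₀) < ε' / 2 := by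
    apply h2
    exact lt_of_lt_of_le hdw (le_trans (min_le_right _ _) (min_le_left _ _))
  calc dist (deriv (v t) w) (deriv (v t₀) w₀)
      ≤ dist (deriv (v t) w) (deriv (v t₀) w) + dist (deriv (v t₀) w) (deriv (v t₀) w₀) :=
        dist_triangle _ _ _
    _ < ε' / 4 + ε' / 2 := by
        apply add_lt_add_of_le_of_lt hterm1 hterm2
    _ < ε' := by linarith

lemma family_deriv_swap {T : Set ℝ} {U : Set ℂ} (hT : IsOpen T) (hU : IsOpen U)
    {u : ℝ → ℂ → ℂ}
    (hC1 : ContDiffOn ℝ 1 (fun p : ℝ × ℂ => u p.1 p.2) (T ×ˢ U))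
    (hhol : ∀ t ∈ T, DifferentiableOn ℂ (u t) U) :
    (∀ s ∈ T, ∀ w ∈ U, HasDerivAt (fun τ => u τ w) (deriv (fun τ => u τ w) s) s)
    ∧ ContinuousOn (fun p : ℝ × ℂ => deriv (fun τ => u τ p.2) p.1) (T ×ˢ U)
    ∧ (∀ s ∈ T, DifferentiableOn ℂ (fun w => deriv (fun τ => u τ w) s) U)
    ∧ (∀ s ∈ T, ∀ w ∈ U, HasDerivAt (fun τ => deriv (u τ) w)
        (deriv (fun w' => deriv (fun τ => u τ w') s) w) s) := by
  have hop : IsOpen (T ×ˢ U) := hT.prod hU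
  have hdiff : DifferentiableOn ℝ (fun p : ℝ × ℂ => u p.1 p.2) (T ×ˢ U) :=
    hC1.differentiableOn one_ne_zero
  have h0 : ∀ s ∈ T, ∀ w ∈ U,
      HasDerivAt (fun τ => u τ w) (fderiv ℝ (fun p : ℝ × ℂ => u p.1 p.2) (s, w) (1, 0)) s := by
    intro s hs w hw
    have hda : DifferentiableAt ℝ (fun p : ℝ × ℂ => u p.1 p.2) (s, w) :=
      hdiff.differentiableAt (hop.mem_nhds (by simp [hs, hw]))
    have hcurve : HasDerivAt (fun τ : ℝ => ((τ : ℝ), w)) ((1 : ℝ), (0 : ℂ)) s :=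
      (hasDerivAt_id s).prodMk (hasDerivAt_const s w)
    exact hda.hasFDerivAt.comp_hasDerivAt s hcurve
  have h0' : ∀ s ∈ T, ∀ w ∈ U, deriv (fun τ => u τ w) s
      = fderiv ℝ (fun p : ℝ × ℂ => u p.1 p.2) (s, w) (1, 0) :=
    fun s hs w hw => (h0 s hs w hw).deriv
  have hpart0 : ∀ s ∈ T, ∀ w ∈ U,
      HasDerivAt (fun τ => u τ w) (deriv (fun τ => u τ w) s) s := by
    intro s hs w hw; rw [h0' s hs w hw]; exact h0 s hs w hw
  have hutc : ContinuousOn (fun p : ℝ × ℂ => deriv (fun τ => u τ p.2) p.1) (T ×ˢ U) := by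
    have hf : ContinuousOn (fderiv ℝ (fun p : ℝ × ℂ => u p.1 p.2)) (T ×ˢ U) :=
      hC1.continuousOn_fderiv_of_isOpen hop le_rfl
    have h2 : ContinuousOn
        (fun p : ℝ × ℂ => fderiv ℝ (fun p : ℝ × ℂ => u p.1 p.2) p ((1 : ℝ), (0 : ℂ)))
        (T ×ˢ U) := hf.clm_apply continuousOn_const
    apply h2.congr
    rintro ⟨s, w⟩ hp
    obtain ⟨hs, hw⟩ : s ∈ T ∧ w ∈ U := by simpa using hp
    exact h0' s hs w hw
  refine ⟨hpart0, hutc, ?_⟩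
  have key : ∀ s₀ ∈ T,
      DifferentiableOn ℂ (fun w => deriv (fun τ => u τ w) s₀) U ∧
      ∀ w ∈ U, HasDerivAt (fun τ => deriv (u τ) w)
        (deriv (fun w' => deriv (fun τ => u τ w') s₀) w) s₀ := by
    intro s₀ hs₀
    set ut : ℂ → ℂ := fun w => deriv (fun τ => u τ w) s₀ with hutdef
    set q : ℝ → ℂ → ℂ := fun s w => (s - s₀)⁻¹ • (u s w - u s₀ w) with hqdef
    have hTev : ∀ᶠ s in nhdsWithin s₀ {s₀}ᶜ, s ∈ T :=
      Filter.Eventually.filter_mono nhdsWithin_le_nhds (hT.eventually_mem hs₀)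
    have hqdiff : ∀ᶠ s in nhdsWithin s₀ {s₀}ᶜ, DifferentiableOn ℂ (q s) U := by
      filter_upwards [hTev] with s hsT
      exact ((hhol s hsT).sub (hhol s₀ hs₀)).const_smul ((s - s₀)⁻¹ : ℝ)
    -- locally uniform convergence of difference quotients
    have hq_tlu : TendstoLocallyUniformlyOn q ut (nhdsWithin s₀ {s₀}ᶜ) U := by
      rw [tendstoLocallyUniformlyOn_iff_forall_isCompact hU]
      intro K hKU hK
      rw [Metric.tendstoUniformlyOn_iff]
      intro ε0 hε0
      obtain ⟨ρ, hρ, hρT⟩ := Metric.isOpen_iff.1 hT s₀ hs₀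
      set ε1 : ℝ := ρ / 2 with hε1def
      have hε1 : 0 < ε1 := by positivity
      have hIccT : Icc (s₀ - ε1) (s₀ + ε1) ⊆ T := by
        intro x hx
        apply hρT
        simp only [mem_ball, Real.dist_eq]
        rcases hx with ⟨ha, hb⟩
        rw [abs_lt]
        rw [hε1def] at ha hb
        constructor <;> linarith
      -- uniform continuity of ut-family on compact
      have hKc : IsCompact ((Icc (s₀ - ε1) (s₀ + ε1)) ×ˢ K) := isCompact_Icc.prod hK
      have huc : UniformContinuousOn (fun p : ℝ × ℂ => deriv (fun τ => u τ p.2) p.1)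
          ((Icc (s₀ - ε1) (s₀ + ε1)) ×ˢ K) :=
        hKc.uniformContinuousOn_of_continuous (hutc.mono (prod_mono hIccT hKU))
      rw [Metric.uniformContinuousOn_iff] at huc
      obtain ⟨δ1, hδ1, hδ1p⟩ := huc (ε0 / 2) (by linarith)
      set d : ℝ := min (δ1 / 2) ε1 with hddef
      have hd : 0 < d := lt_min (by linarith) hε1
      have hdle : d ≤ ε1 := min_le_right _ _
      have hIccd : Icc (s₀ - d) (s₀ + d) ⊆ Icc (s₀ - ε1) (s₀ + ε1) :=
        Icc_subset_Icc (by linarith) (by linarith)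
      have hmem : {s : ℝ | dist s s₀ < d} ∈ nhdsWithin s₀ {s₀}ᶜ :=
        Filter.Eventually.filter_mono nhdsWithin_le_nhds (Metric.ball_mem_nhds s₀ hd)
      filter_upwards [hmem, hTev, self_mem_nhdsWithin] with s hsd hsT hsne
      intro w hwK
      have hwU : w ∈ U := hKU hwK
      have hsne' : s - s₀ ≠ 0 := sub_ne_zero.2 hsne
      set c : ℂ := ut w with hcdef
      -- MVT estimate
      have hmvt : ‖(u s w - u s₀ w) - (s - s₀) • c‖ ≤ ε0 / 2 * ‖s - s₀‖ := by
        have hIccsub : Icc (s₀ - d) (s₀ + d) ⊆ T := hIccd.trans hIccT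
        have hders : ∀ τ ∈ Icc (s₀ - d) (s₀ + d),
            HasDerivWithinAt (fun τ => u τ w - τ • c)
              (deriv (fun τ' => u τ' w) τ - c) (Icc (s₀ - d) (s₀ + d)) τ := by
          intro τ hτ
          have h1 : HasDerivAt (fun τ => u τ w) (deriv (fun τ' => u τ' w) τ) τ :=
            hpart0 τ (hIccsub hτ) w hwU
          have h2 : HasDerivAt (fun τ : ℝ => τ • c) ((1 : ℝ) • c) τ :=
            (hasDerivAt_id τ).smul_const c
          have h3 := (h1.sub h2).hasDerivWithinAt (s := Icc (s₀ - d) (s₀ + d))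
          rwa [one_smul] at h3
        have hbnd : ∀ τ ∈ Icc (s₀ - d) (s₀ + d),
            ‖deriv (fun τ' => u τ' w) τ - c‖ ≤ ε0 / 2 := by
          intro τ hτ
          have hdistp : dist ((τ : ℝ), w) ((s₀ : ℝ), w) < δ1 := by
            rw [Prod.dist_eq]
            simp only [dist_self]
            have : dist τ s₀ ≤ d := by
              rw [Real.dist_eq, abs_le]
              exact ⟨by linarith [hτ.1], by linarith [hτ.2]⟩
            have hdlt : d < δ1 := lt_of_le_of_lt (min_le_left _ _) (by linarith)
            rw [max_lt_iff]
            exact ⟨lt_of_le_of_lt this hdlt, hδ1⟩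
          have := hδ1p ((τ : ℝ), w) ⟨hIccd hτ, hwK⟩ ((s₀ : ℝ), w)
            ⟨⟨by linarith, by linarith⟩, hwK⟩ hdistp
          rw [dist_eq_norm] at this
          exact le_of_lt this
        have hconv : Convex ℝ (Icc (s₀ - d) (s₀ + d)) := convex_Icc _ _
        have hs₀mem : s₀ ∈ Icc (s₀ - d) (s₀ + d) := ⟨by linarith, by linarith⟩
        have hsmem : s ∈ Icc (s₀ - d) (s₀ + d) := by
          rw [Real.dist_eq] at hsd
          rw [abs_lt] at hsd
          exact ⟨by linarith [hsd.1], by linarith [hsd.2]⟩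
        have := hconv.norm_image_sub_le_of_norm_hasDerivWithin_le hders hbnd hs₀mem hsmem
        calc ‖(u s w - u s₀ w) - (s - s₀) • c‖
            = ‖(u s w - s • c) - (u s₀ w - s₀ • c)‖ := by
              congr 1; rw [sub_smul]; ring_nf
          _ ≤ ε0 / 2 * ‖s - s₀‖ := this
      have hqsub : q s w - c = (s - s₀)⁻¹ • ((u s w - u s₀ w) - (s - s₀) • c) := by
        rw [smul_sub, inv_smul_smul₀ hsne']
      rw [dist_comm, dist_eq_norm]
      calc ‖q s w - c‖ = ‖(s - s₀)⁻¹‖ * ‖(u s w - u s₀ w) - (s - s₀) • c‖ := by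
            rw [hqsub, norm_smul]
        _ ≤ ‖(s - s₀)⁻¹‖ * (ε0 / 2 * ‖s - s₀‖) := by
            apply mul_le_mul_of_nonneg_left hmvt (norm_nonneg _)
        _ = ε0 / 2 := by
            rw [norm_inv]
            field_simp
        _ < ε0 := by linarith
    haveI : Filter.NeBot (nhdsWithin s₀ {s₀}ᶜ) := by
      exact Module.punctured_nhds_neBot ℝ ℝ s₀
    have hdiffut : DifferentiableOn ℂ ut U := hq_tlu.differentiableOn hqdiff hU
    refine ⟨hdiffut, ?_⟩
    intro w hw
    have htend : Tendsto (fun s => deriv (q s) w) (nhdsWithin s₀ {s₀}ᶜ)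
        (nhds (deriv ut w)) := (hq_tlu.deriv hqdiff hU).tendsto_at hw
    have hslope : (fun s => deriv (q s) w) =ᶠ[nhdsWithin s₀ {s₀}ᶜ]
        (slope (fun τ => deriv (u τ) w) s₀) := by
      filter_upwards [hTev] with s hsT
      have hds : DifferentiableAt ℂ (u s) w := (hhol s hsT).differentiableAt (hU.mem_nhds hw)
      have hds₀ : DifferentiableAt ℂ (u s₀) w := (hhol s₀ hs₀).differentiableAt (hU.mem_nhds hw)
      have : deriv (q s) w = (s - s₀)⁻¹ • (deriv (u s) w - deriv (u s₀) w) := by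
        have e1 : q s = fun w' => (s - s₀)⁻¹ • (u s w' - u s₀ w') := rfl
        rw [e1]; exact ((hds.hasDerivAt.sub hds₀.hasDerivAt).const_smul ((s - s₀)⁻¹ : ℝ)).deriv
      rw [this, slope_def_module]
    exact hasDerivAt_iff_tendsto_slope.2 (Filter.Tendsto.congr' hslope htend)
  exact ⟨fun s hs => (key s hs).1, fun s hs => (key s hs).2⟩

lemma jointCont_deriv_snd {Ω : Set (ℂ × ℂ)} (hΩ : IsOpen Ω) {F : ℂ × ℂ → ℂ}
    (hc : ContinuousOn F Ω)
    (hhol : ∀ p ∈ Ω, DifferentiableAt ℂ (fun z => F (p.1, z)) p.2) :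
    ContinuousOn (fun p : ℂ × ℂ => deriv (fun z => F (p.1, z)) p.2) Ω := by
  intro p₀ hp₀
  obtain ⟨ρ, hρ, hρΩ⟩ := Metric.isOpen_iff.1 hΩ p₀ hp₀
  have hball : ball p₀.1 ρ ×ˢ ball p₀.2 ρ ⊆ Ω := by
    rw [ball_prod_same, Prod.mk.eta]
    exact hρΩ
  have hcont : ContinuousOn (fun q : ℂ × ℂ => deriv (fun z => F (q.1, z)) q.2)
      (ball p₀.1 ρ ×ˢ ball p₀.2 ρ) := by
    refine jointCont_deriv isOpen_ball isOpen_ball (v := fun a z => F (a, z))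
      (hc.mono hball) ?_
    intro a ha z hz
    exact (hhol (a, z) (hball (mk_mem_prod ha hz))).differentiableWithinAt
  have := hcont.continuousAt (IsOpen.mem_nhds (isOpen_ball.prod isOpen_ball)
    (mk_mem_prod (mem_ball_self hρ) (mem_ball_self hρ)))
  exact this.continuousWithinAt

lemma jointCont_deriv_fst {Ω : Set (ℂ × ℂ)} (hΩ : IsOpen Ω) {F : ℂ × ℂ → ℂ}
    (hc : ContinuousOn F Ω)
    (hhol : ∀ p ∈ Ω, DifferentiableAt ℂ (fun z => F (z, p.2)) p.1) :
    ContinuousOn (fun p : ℂ × ℂ => deriv (fun z => F (z, p.2)) p.1) Ω := by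
  have hΩ' : IsOpen (Prod.swap ⁻¹' Ω : Set (ℂ × ℂ)) := hΩ.preimage continuous_swap
  have h := jointCont_deriv_snd hΩ' (F := F ∘ Prod.swap)
    (hc.comp continuous_swap.continuousOn (fun q hq => hq))
    (fun q hq => hhol (Prod.swap q) hq)
  have := h.comp continuous_swap.continuousOn
    (fun p (hp : p ∈ Ω) => show Prod.swap p ∈ Prod.swap ⁻¹' Ω by simpa using hp)
  exact this

/-- Osgood-type step: separate complex differentiability plus continuity of the first
partial derivative gives joint differentiability, with the expected total derivative. -/
lemma hasFDerivAt_of_partials {Ω : Set (ℂ × ℂ)} (hΩ : IsOpen Ω) {F F1 F2 : ℂ × ℂ → ℂ}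
    (h1 : ∀ p ∈ Ω, HasDerivAt (fun z => F (z, p.2)) (F1 p) p.1)
    (h2 : ∀ p ∈ Ω, HasDerivAt (fun z => F (p.1, z)) (F2 p) p.2)
    (hc1 : ContinuousOn F1 Ω) {p : ℂ × ℂ} (hp : p ∈ Ω) :
    HasFDerivAt F ((ContinuousLinearMap.fst ℂ ℂ ℂ).smulRight (F1 p)
      + (ContinuousLinearMap.snd ℂ ℂ ℂ).smulRight (F2 p)) p := by
  rw [hasFDerivAt_iff_isLittleO_nhds_zero]
  rw [Asymptotics.isLittleO_iff]
  intro c hc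
  -- neighborhood control
  obtain ⟨ρ, hρ, hρΩ⟩ := Metric.isOpen_iff.1 hΩ p hp
  have hcA : ContinuousAt F1 p := hc1.continuousAt (hΩ.mem_nhds hp)
  obtain ⟨δ₁, hδ₁, hδ₁p⟩ := Metric.continuousAt_iff.1 hcA (c / 2) (by linarith)
  have h2p := h2 p hp
  rw [hasDerivAt_iff_isLittleO, Asymptotics.isLittleO_iff] at h2p
  have hev2 := h2p (c := c / 2) (by linarith)
  rw [Metric.eventually_nhds_iff] at hev2
  obtain ⟨δ₂, hδ₂, hδ₂p⟩ := hev2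
  set δ : ℝ := min (min (ρ / 2) (δ₁ / 2)) δ₂ with hδdef
  have hδpos : 0 < δ := by
    apply lt_min (lt_min _ _) hδ₂ <;> linarith
  have hev : ∀ᶠ h : ℂ × ℂ in nhds 0, dist h 0 < δ := Metric.eventually_nhds_iff.2
    ⟨δ, hδpos, fun y hy => by simpa [dist_comm] using hy⟩
  filter_upwards [hev] with h hh
  have hh1 : ‖h.1‖ < δ := by
    have := norm_fst_le h
    rw [dist_zero_right] at hh
    linarith
  have hh2 : ‖h.2‖ < δ := by
    have := norm_snd_le h
    rw [dist_zero_right] at hh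
    linarith
  have hδρ : δ ≤ ρ / 2 := le_trans (min_le_left _ _) (min_le_left _ _)
  have hδδ₁ : δ ≤ δ₁ / 2 := le_trans (min_le_left _ _) (min_le_right _ _)
  have hδδ₂ : δ ≤ δ₂ := min_le_right _ _
  -- second (pure z₂) term
  have hterm2 : ‖F (p.1, p.2 + h.2) - F p - h.2 • F2 p‖ ≤ c / 2 * ‖h.2‖ := by
    have := hδ₂p (y := p.2 + h.2) (by
      rw [dist_eq_norm]
      simpa using lt_of_lt_of_le hh2 hδδ₂)
    simpa [sub_smul] using this
  -- first term via MVT on the segment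
  have hterm1 : ‖F (p.1 + h.1, p.2 + h.2) - F (p.1, p.2 + h.2) - h.1 • F1 p‖
      ≤ c / 2 * ‖h.1‖ := by
    set S : Set ℂ := closedBall p.1 δ with hSdef
    have hmem : ∀ z ∈ S, (z, p.2 + h.2) ∈ Ω := by
      intro z hz
      apply hρΩ
      rw [mem_ball, Prod.dist_eq, max_lt_iff]
      constructor
      · simp only [hSdef, mem_closedBall] at hz
        calc dist z p.1 ≤ δ := hz
          _ < ρ := by linarith
      · rw [dist_eq_norm]
        simpa using lt_of_lt_of_le hh2 (by linarith : δ ≤ ρ)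
    have hders : ∀ z ∈ S, HasDerivWithinAt (fun z' => F (z', p.2 + h.2) - z' • F1 p)
        (F1 (z, p.2 + h.2) - F1 p) S z := by
      intro z hz
      have ha := h1 (z, p.2 + h.2) (hmem z hz)
      have hb : HasDerivAt (fun z' : ℂ => z' • F1 p) ((1 : ℂ) • F1 p) z :=
        (hasDerivAt_id z).smul_const (F1 p)
      have := (ha.sub hb).hasDerivWithinAt (s := S)
      rwa [one_smul] at this
    have hbnd : ∀ z ∈ S, ‖F1 (z, p.2 + h.2) - F1 p‖ ≤ c / 2 := by
      intro z hz
      have hd : dist (z, p.2 + h.2) p < δ₁ := by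
        rw [Prod.dist_eq, max_lt_iff]
        constructor
        · simp only [hSdef, mem_closedBall] at hz
          calc dist z p.1 ≤ δ := hz
            _ < δ₁ := by linarith
        · rw [dist_eq_norm]
          simpa using lt_of_lt_of_le hh2 (by linarith : δ ≤ δ₁)
      rw [← dist_eq_norm]
      exact le_of_lt (hδ₁p hd)
    have hconv : Convex ℝ S := convex_closedBall _ _
    have hp1 : p.1 ∈ S := mem_closedBall_self (le_of_lt hδpos)
    have hp1h : p.1 + h.1 ∈ S := by
      simp only [hSdef, mem_closedBall, dist_eq_norm, add_sub_cancel_left]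
      exact le_of_lt hh1
    have := hconv.norm_image_sub_le_of_norm_hasDerivWithin_le hders hbnd hp1 hp1h
    calc ‖F (p.1 + h.1, p.2 + h.2) - F (p.1, p.2 + h.2) - h.1 • F1 p‖
        = ‖(F (p.1 + h.1, p.2 + h.2) - (p.1 + h.1) • F1 p)
            - (F (p.1, p.2 + h.2) - p.1 • F1 p)‖ := by
          congr 1
          rw [add_smul]
          ring_nf
      _ ≤ c / 2 * ‖p.1 + h.1 - p.1‖ := this
      _ = c / 2 * ‖h.1‖ := by rw [add_sub_cancel_left]
  -- combine
  have happ : ((ContinuousLinearMap.fst ℂ ℂ ℂ).smulRight (F1 p)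
      + (ContinuousLinearMap.snd ℂ ℂ ℂ).smulRight (F2 p)) h = h.1 • F1 p + h.2 • F2 p := by
    simp [ContinuousLinearMap.smulRight_apply]
  have hsplit : F (p + h) - F p
      - ((ContinuousLinearMap.fst ℂ ℂ ℂ).smulRight (F1 p)
        + (ContinuousLinearMap.snd ℂ ℂ ℂ).smulRight (F2 p)) h
      = (F (p.1 + h.1, p.2 + h.2) - F (p.1, p.2 + h.2) - h.1 • F1 p)
        + (F (p.1, p.2 + h.2) - F p - h.2 • F2 p) := by
    rw [happ]
    have : p + h = (p.1 + h.1, p.2 + h.2) := rfl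
    rw [this]
    ring_nf
  rw [hsplit]
  calc ‖(F (p.1 + h.1, p.2 + h.2) - F (p.1, p.2 + h.2) - h.1 • F1 p)
        + (F (p.1, p.2 + h.2) - F p - h.2 • F2 p)‖
      ≤ ‖F (p.1 + h.1, p.2 + h.2) - F (p.1, p.2 + h.2) - h.1 • F1 p‖
        + ‖F (p.1, p.2 + h.2) - F p - h.2 • F2 p‖ := norm_add_le _ _
    _ ≤ c / 2 * ‖h.1‖ + c / 2 * ‖h.2‖ := add_le_add hterm1 hterm2
    _ ≤ c / 2 * ‖h‖ + c / 2 * ‖h‖ := by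
        have e1 := norm_fst_le h
        have e2 := norm_snd_le h
        have : (0:ℝ) ≤ c / 2 := by linarith
        gcongr
    _ = c * ‖h‖ := by ring

lemma diffAt_param_of_deriv_snd {Ω : Set (ℂ × ℂ)} (hΩ : IsOpen Ω) {F : ℂ × ℂ → ℂ}
    (hF : DifferentiableOn ℂ F Ω) {p : ℂ × ℂ} (hp : p ∈ Ω) :
    DifferentiableAt ℂ (fun z₂ => deriv (fun z => F (z, z₂)) p.1) p.2 := by
  classical
  have hcF : ContinuousOn F Ω := hF.continuousOn
  have hslice2 : ∀ q ∈ Ω, DifferentiableAt ℂ (fun ξ => F (q.1, ξ)) q.2 := by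
    intro q hq
    have h := hF.differentiableAt (hΩ.mem_nhds hq)
    exact h.comp q.2 ((differentiableAt_const _).prodMk differentiableAt_id)
  have hsl2 : ∀ q ∈ Ω, HasDerivAt (fun ξ => F (q.1, ξ))
      (deriv (fun ξ => F (q.1, ξ)) q.2) q.2 := fun q hq => (hslice2 q hq).hasDerivAt
  have hD2cont : ContinuousOn (fun q : ℂ × ℂ => deriv (fun ξ => F (q.1, ξ)) q.2) Ω :=
    jointCont_deriv_snd hΩ hcF hslice2
  obtain ⟨ρ, hρ, hρΩ⟩ := Metric.isOpen_iff.1 hΩ p hp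
  set r : ℝ := ρ / 4 with hrdef
  have hr : 0 < r := by positivity
  have hsub : closedBall p.1 (3 * r) ×ˢ closedBall p.2 (3 * r) ⊆ Ω := by
    rw [closedBall_prod_same, Prod.mk.eta]
    refine Subset.trans (closedBall_subset_ball ?_) hρΩ
    rw [hrdef]; linarith
  have hslice_on : ∀ z₂ ∈ closedBall p.2 (3 * r),
      DifferentiableOn ℂ (fun z => F (z, z₂)) (ball p.1 (3 * r)) := by
    intro z₂ hz₂ z hz
    have hmem : (z, z₂) ∈ Ω := hsub (mk_mem_prod (ball_subset_closedBall hz) hz₂)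
    have h := hF.differentiableAt (hΩ.mem_nhds hmem)
    exact (h.comp z (differentiableAt_id.prodMk (differentiableAt_const _))).differentiableWithinAt
  have hball_cb : ball p.2 r ⊆ closedBall p.2 (3 * r) :=
    ball_subset_closedBall.trans (closedBall_subset_closedBall (by linarith))
  have heq : ∀ z₂ ∈ ball p.2 r,
      deriv (fun z => F (z, z₂)) p.1 = cderiv r (fun z => F (z, z₂)) p.1 := by
    intro z₂ hz₂
    exact (cderiv_eq_deriv isOpen_ball (hslice_on z₂ (hball_cb hz₂)) hr
      (closedBall_subset_ball (by linarith))).symm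
  -- membership facts
  have hcm_mem : ∀ (θ : ℝ), ∀ x ∈ closedBall p.2 r, (circleMap p.1 r θ, x) ∈ Ω := by
    intro θ x hx
    apply hsub
    exact mk_mem_prod
      ((sphere_subset_closedBall.trans (closedBall_subset_closedBall (by linarith)))
        (circleMap_mem_sphere _ hr.le θ))
      ((closedBall_subset_closedBall (by linarith)) hx)
  -- integrand and its z₂-derivative
  set G : ℂ → ℝ → ℂ := fun x θ => deriv (circleMap p.1 r) θ •
    (((circleMap p.1 r θ - p.1) ^ 2)⁻¹ • F (circleMap p.1 r θ, x)) with hGdef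
  set G' : ℂ → ℝ → ℂ := fun x θ => deriv (circleMap p.1 r) θ •
    (((circleMap p.1 r θ - p.1) ^ 2)⁻¹ •
      deriv (fun ξ => F (circleMap p.1 r θ, ξ)) x) with hG'def
  have hc1 : Continuous (fun θ => deriv (circleMap p.1 r) θ) := by
    simp only [deriv_circleMap]
    exact (continuous_circleMap 0 r).mul continuous_const
  have hcmne : ∀ θ, circleMap p.1 r θ - p.1 ≠ 0 :=
    fun θ => sub_ne_zero.2 (circleMap_ne_center hr.ne')
  have hc2 : Continuous (fun θ => (((circleMap p.1 r θ - p.1) ^ 2)⁻¹ : ℂ)) := by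
    apply Continuous.inv₀
    · exact ((continuous_circleMap p.1 r).sub continuous_const).pow 2
    · exact fun θ => pow_ne_zero 2 (hcmne θ)
  have hGcont : ∀ x ∈ closedBall p.2 r, Continuous (G x) := by
    intro x hx
    have hc3 : Continuous (fun θ => F (circleMap p.1 r θ, x)) :=
      hcF.comp_continuous ((continuous_circleMap _ _).prodMk continuous_const)
        (fun θ => hcm_mem θ x hx)
    exact hc1.smul (hc2.smul hc3)
  have hG'cont : ∀ x ∈ closedBall p.2 r, Continuous (G' x) := by
    intro x hx
    have hc3 : Continuous (fun θ => deriv (fun ξ => F (circleMap p.1 r θ, ξ)) x) := by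
      have := hD2cont.comp_continuous
        (f := fun θ : ℝ => ((circleMap p.1 r θ, x) : ℂ × ℂ))
        (((continuous_circleMap _ _).prodMk continuous_const))
        (fun θ => hcm_mem θ x hx)
      exact this
    exact hc1.smul (hc2.smul hc3)
  -- bound
  have hKcomp : IsCompact (sphere p.1 r ×ˢ closedBall p.2 r) :=
    (isCompact_sphere _ _).prod (isCompact_closedBall _ _)
  have hKsub : sphere p.1 r ×ˢ closedBall p.2 r ⊆ Ω := by
    rintro ⟨z, x⟩ ⟨hz, hx⟩
    apply hsub
    exact mk_mem_prod
      ((sphere_subset_closedBall.trans (closedBall_subset_closedBall (by linarith))) hz)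
      ((closedBall_subset_closedBall (by linarith)) hx)
  obtain ⟨C, hC⟩ := hKcomp.exists_bound_of_continuousOn (hD2cont.mono hKsub)
  have hnorm1 : ∀ θ, ‖deriv (circleMap p.1 r) θ‖ = r := by
    intro θ
    rw [deriv_circleMap]
    rw [norm_mul]
    simp [norm_circleMap_zero, abs_of_pos hr]
  have hnorm2 : ∀ θ, ‖(((circleMap p.1 r θ - p.1) ^ 2)⁻¹ : ℂ)‖ = (r ^ 2)⁻¹ := by
    intro θ
    rw [circleMap_sub_center, norm_inv, norm_pow]
    simp [norm_circleMap_zero, abs_of_pos hr]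
  have hbnd : ∀ θ, ∀ x ∈ ball p.2 r, ‖G' x θ‖ ≤ r * ((r ^ 2)⁻¹ * C) := by
    intro θ x hx
    have hmemK : ((circleMap p.1 r θ, x) : ℂ × ℂ) ∈ sphere p.1 r ×ˢ closedBall p.2 r :=
      mk_mem_prod (circleMap_mem_sphere _ hr.le θ) (ball_subset_closedBall hx)
    have hD2b := hC _ hmemK
    rw [hG'def]
    simp only []
    rw [norm_smul, norm_smul, hnorm1, hnorm2]
    have h1 : (0:ℝ) ≤ (r ^ 2)⁻¹ := by positivity
    gcongr
  -- differentiate under the integral sign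
  have hkey := intervalIntegral.hasDerivAt_integral_of_dominated_loc_of_deriv_le
    (F := G) (F' := G') (x₀ := p.2) (a := 0) (b := 2 * Real.pi)
    (bound := fun _ => r * ((r ^ 2)⁻¹ * C)) (s := ball p.2 r) (μ := MeasureTheory.volume) (ball_mem_nhds p.2 hr)
    ?meas ?int ?meas' ?bnd ?bint ?diff
  case meas =>
    filter_upwards [ball_mem_nhds p.2 hr] with x hx
    exact ((hGcont x (ball_subset_closedBall hx)).aestronglyMeasurable).restrict
  case int =>
    exact (hGcont p.2 (mem_closedBall_self hr.le)).intervalIntegrable 0 (2 * Real.pi)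
  case meas' =>
    exact ((hG'cont p.2 (mem_closedBall_self hr.le)).aestronglyMeasurable).restrict
  case bnd =>
    apply MeasureTheory.ae_of_all
    intro θ _ x hx
    exact hbnd θ x hx
  case bint =>
    exact intervalIntegrable_const
  case diff =>
    apply MeasureTheory.ae_of_all
    intro θ _ x hx
    have hq : ((circleMap p.1 r θ, x) : ℂ × ℂ) ∈ Ω :=
      hcm_mem θ x (ball_subset_closedBall hx)
    have hd := hsl2 _ hq
    exact ((hd.const_smul (((circleMap p.1 r θ - p.1) ^ 2)⁻¹ : ℂ)).const_smul
      (deriv (circleMap p.1 r) θ))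
  have hDI : HasDerivAt (fun x => ∫ θ in (0:ℝ)..(2 * Real.pi), G x θ)
      (∫ θ in (0:ℝ)..(2 * Real.pi), G' p.2 θ) p.2 := hkey.2
  -- identify the circle integral with the interval integral
  have hIeq : (fun x => cderiv r (fun z => F (z, x)) p.1)
      = fun x => (2 * Real.pi * Complex.I : ℂ)⁻¹ • ∫ θ in (0:ℝ)..(2 * Real.pi), G x θ := by
    funext x
    rw [cderiv, circleIntegral]
  have hdiffc : DifferentiableAt ℂ (fun x => cderiv r (fun z => F (z, x)) p.1) p.2 := by
    rw [hIeq]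
    exact (hDI.differentiableAt).const_smul ((2 * Real.pi * Complex.I : ℂ)⁻¹)
  apply hdiffc.congr_of_eventuallyEq
  filter_upwards [ball_mem_nhds p.2 hr] with x hx
  exact heq x hx

lemma diffAt_param_of_deriv_fst {Ω : Set (ℂ × ℂ)} (hΩ : IsOpen Ω) {F : ℂ × ℂ → ℂ}
    (hF : DifferentiableOn ℂ F Ω) {p : ℂ × ℂ} (hp : p ∈ Ω) :
    DifferentiableAt ℂ (fun z₁ => deriv (fun ξ => F (z₁, ξ)) p.2) p.1 := by
  have hΩ' : IsOpen (Prod.swap ⁻¹' Ω : Set (ℂ × ℂ)) := hΩ.preimage continuous_swap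
  have hF' : DifferentiableOn ℂ (F ∘ Prod.swap) (Prod.swap ⁻¹' Ω) := by
    apply hF.comp
    · exact (differentiable_snd.prodMk differentiable_fst).differentiableOn
    · exact fun q hq => hq
  have := diffAt_param_of_deriv_snd hΩ' hF' (p := (p.2, p.1)) (by simpa using hp)
  exact this

lemma circleIntegral_deriv_eq_zero {U : Set ℂ} (hU : IsOpen U) (hsph : sphere (0:ℂ) 1 ⊆ U)
    {G : ℂ → ℂ} (hG : DifferentiableOn ℂ G U) :
    (∮ w in C(0, 1), deriv G w) = 0 := by
  have hcm : ∀ θ : ℝ, circleMap 0 1 θ ∈ U := fun θ => hsph (circleMap_mem_sphere 0 zero_le_one θ)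
  have hdc : ContinuousOn (deriv G) U := ((hG.analyticOnNhd hU).deriv).continuousOn
  have hcont : Continuous fun θ : ℝ => deriv (circleMap 0 1) θ • deriv G (circleMap 0 1 θ) := by
    have h1 : Continuous fun θ : ℝ => deriv G (circleMap 0 1 θ) :=
      hdc.comp_continuous (continuous_circleMap 0 1) hcm
    have h2 : Continuous fun θ : ℝ => deriv (circleMap 0 1) θ := by
      simp only [deriv_circleMap]
      exact ((continuous_circleMap 0 1).mul continuous_const)
    exact h2.smul h1
  have hder : ∀ θ ∈ uIcc (0:ℝ) (2*Real.pi), HasDerivAt (fun θ' => G (circleMap 0 1 θ'))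
      (deriv (circleMap 0 1) θ • deriv G (circleMap 0 1 θ)) θ := by
    intro θ _
    have hφ : HasDerivAt G (deriv G (circleMap 0 1 θ)) (circleMap 0 1 θ) :=
      (hG.differentiableAt (hU.mem_nhds (hcm θ))).hasDerivAt
    have hγ : HasDerivAt (circleMap 0 1) (circleMap 0 1 θ * I) θ := by
      simpa using hasDerivAt_circleMap 0 1 θ
    have := comp_hasDerivAt_real hφ hγ
    rw [deriv_circleMap]
    simpa [smul_eq_mul, mul_comm] using this
  have hFTC := intervalIntegral.integral_eq_sub_of_hasDerivAt hder
    (hcont.intervalIntegrable 0 (2*Real.pi))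
  rw [circleIntegral, hFTC]
  have hper : circleMap 0 1 (2 * Real.pi) = circleMap 0 1 0 := by
    have := (periodic_circleMap 0 1) 0
    simpa using this
  rw [hper, sub_self]

noncomputable def pd1 (F : ℂ × ℂ → ℂ) (p : ℂ × ℂ) : ℂ := deriv (fun z => F (z, p.2)) p.1
noncomputable def pd2 (F : ℂ × ℂ → ℂ) (p : ℂ × ℂ) : ℂ := deriv (fun ξ => F (p.1, ξ)) p.2

lemma slice_hasDerivAt_fst {Ω : Set (ℂ × ℂ)} (hΩ : IsOpen Ω) {F : ℂ × ℂ → ℂ}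
    (hF : DifferentiableOn ℂ F Ω) {p : ℂ × ℂ} (hp : p ∈ Ω) :
    HasDerivAt (fun z => F (z, p.2)) (pd1 F p) p.1 := by
  have h := hF.differentiableAt (hΩ.mem_nhds hp)
  exact (h.comp p.1 (differentiableAt_id.prodMk (differentiableAt_const _))).hasDerivAt

lemma slice_hasDerivAt_snd {Ω : Set (ℂ × ℂ)} (hΩ : IsOpen Ω) {F : ℂ × ℂ → ℂ}
    (hF : DifferentiableOn ℂ F Ω) {p : ℂ × ℂ} (hp : p ∈ Ω) :
    HasDerivAt (fun ξ => F (p.1, ξ)) (pd2 F p) p.2 := by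
  have h := hF.differentiableAt (hΩ.mem_nhds hp)
  exact (h.comp p.2 ((differentiableAt_const _).prodMk differentiableAt_id)).hasDerivAt

/-- slice in the first variable of `pd1 F` is differentiable (derivative of a holomorphic
function of one variable). -/
lemma pd1_fst_diff {Ω : Set (ℂ × ℂ)} (hΩ : IsOpen Ω) {F : ℂ × ℂ → ℂ}
    (hF : DifferentiableOn ℂ F Ω) {p : ℂ × ℂ} (hp : p ∈ Ω) :
    DifferentiableAt ℂ (fun z => pd1 F (z, p.2)) p.1 := by
  have hVopen : IsOpen {z : ℂ | (z, p.2) ∈ Ω} := hΩ.preimage (by fun_prop)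
  have hsl : DifferentiableOn ℂ (fun z => F (z, p.2)) {z : ℂ | (z, p.2) ∈ Ω} := by
    intro z hz
    exact (slice_hasDerivAt_fst hΩ hF hz).differentiableAt.differentiableWithinAt
  have := ((hsl.analyticOnNhd hVopen).deriv).differentiableOn
  exact (this.differentiableAt (hVopen.mem_nhds hp))

lemma pd2_snd_diff {Ω : Set (ℂ × ℂ)} (hΩ : IsOpen Ω) {F : ℂ × ℂ → ℂ}
    (hF : DifferentiableOn ℂ F Ω) {p : ℂ × ℂ} (hp : p ∈ Ω) :
    DifferentiableAt ℂ (fun ξ => pd2 F (p.1, ξ)) p.2 := by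
  have hVopen : IsOpen {ξ : ℂ | (p.1, ξ) ∈ Ω} := hΩ.preimage (by fun_prop)
  have hsl : DifferentiableOn ℂ (fun ξ => F (p.1, ξ)) {ξ : ℂ | (p.1, ξ) ∈ Ω} := by
    intro ξ hξ
    exact (slice_hasDerivAt_snd hΩ hF hξ).differentiableAt.differentiableWithinAt
  have := ((hsl.analyticOnNhd hVopen).deriv).differentiableOn
  exact (this.differentiableAt (hVopen.mem_nhds hp))

lemma Hpack {Ω : Set (ℂ × ℂ)} (hΩ : IsOpen Ω) {F : ℂ × ℂ → ℂ}
    (hF : DifferentiableOn ℂ F Ω) :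
    (∀ p ∈ Ω, HasFDerivAt (pd1 F)
        ((ContinuousLinearMap.fst ℂ ℂ ℂ).smulRight (pd1 (pd1 F) p)
          + (ContinuousLinearMap.snd ℂ ℂ ℂ).smulRight (pd2 (pd1 F) p)) p)
    ∧ (∀ p ∈ Ω, HasFDerivAt (pd2 F)
        ((ContinuousLinearMap.fst ℂ ℂ ℂ).smulRight (pd1 (pd2 F) p)
          + (ContinuousLinearMap.snd ℂ ℂ ℂ).smulRight (pd2 (pd2 F) p)) p)
    ∧ ContinuousOn (pd1 F) Ω ∧ ContinuousOn (pd2 F) Ω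
    ∧ ContinuousOn (pd1 (pd1 F)) Ω ∧ ContinuousOn (pd2 (pd1 F)) Ω
    ∧ ContinuousOn (pd1 (pd2 F)) Ω ∧ ContinuousOn (pd2 (pd2 F)) Ω
    ∧ (∀ p ∈ Ω, pd2 (pd1 F) p = pd1 (pd2 F) p) := by
  have hs1F : ∀ p ∈ Ω, HasDerivAt (fun z => F (z, p.2)) (pd1 F p) p.1 :=
    fun p hp => slice_hasDerivAt_fst hΩ hF hp
  have hs2F : ∀ p ∈ Ω, HasDerivAt (fun ξ => F (p.1, ξ)) (pd2 F p) p.2 :=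
    fun p hp => slice_hasDerivAt_snd hΩ hF hp
  have hc1F : ContinuousOn (pd1 F) Ω :=
    jointCont_deriv_fst hΩ hF.continuousOn (fun p hp => (hs1F p hp).differentiableAt)
  have hc2F : ContinuousOn (pd2 F) Ω :=
    jointCont_deriv_snd hΩ hF.continuousOn (fun p hp => (hs2F p hp).differentiableAt)
  have hP1fst : ∀ p ∈ Ω, DifferentiableAt ℂ (fun z => pd1 F (z, p.2)) p.1 :=
    fun p hp => pd1_fst_diff hΩ hF hp
  have hP1snd : ∀ p ∈ Ω, DifferentiableAt ℂ (fun ξ => pd1 F (p.1, ξ)) p.2 :=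
    fun p hp => diffAt_param_of_deriv_snd hΩ hF hp
  have hP2fst : ∀ p ∈ Ω, DifferentiableAt ℂ (fun z => pd2 F (z, p.2)) p.1 :=
    fun p hp => diffAt_param_of_deriv_fst hΩ hF hp
  have hP2snd : ∀ p ∈ Ω, DifferentiableAt ℂ (fun ξ => pd2 F (p.1, ξ)) p.2 :=
    fun p hp => pd2_snd_diff hΩ hF hp
  have hc11 : ContinuousOn (pd1 (pd1 F)) Ω := jointCont_deriv_fst hΩ hc1F hP1fst
  have hc12 : ContinuousOn (pd2 (pd1 F)) Ω := jointCont_deriv_snd hΩ hc1F hP1snd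
  have hc21 : ContinuousOn (pd1 (pd2 F)) Ω := jointCont_deriv_fst hΩ hc2F hP2fst
  have hc22 : ContinuousOn (pd2 (pd2 F)) Ω := jointCont_deriv_snd hΩ hc2F hP2snd
  have hP1fd : ∀ p ∈ Ω, HasFDerivAt (pd1 F)
      ((ContinuousLinearMap.fst ℂ ℂ ℂ).smulRight (pd1 (pd1 F) p)
        + (ContinuousLinearMap.snd ℂ ℂ ℂ).smulRight (pd2 (pd1 F) p)) p :=
    fun p hp => hasFDerivAt_of_partials hΩ (fun q hq => (hP1fst q hq).hasDerivAt)
      (fun q hq => (hP1snd q hq).hasDerivAt) hc11 hp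
  have hP2fd : ∀ p ∈ Ω, HasFDerivAt (pd2 F)
      ((ContinuousLinearMap.fst ℂ ℂ ℂ).smulRight (pd1 (pd2 F) p)
        + (ContinuousLinearMap.snd ℂ ℂ ℂ).smulRight (pd2 (pd2 F) p)) p :=
    fun p hp => hasFDerivAt_of_partials hΩ (fun q hq => (hP2fst q hq).hasDerivAt)
      (fun q hq => (hP2snd q hq).hasDerivAt) hc21 hp
  have hFfd : ∀ p ∈ Ω, HasFDerivAt F
      ((ContinuousLinearMap.fst ℂ ℂ ℂ).smulRight (pd1 F p)
        + (ContinuousLinearMap.snd ℂ ℂ ℂ).smulRight (pd2 F p)) p :=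
    fun p hp => hasFDerivAt_of_partials hΩ (fun q hq => hs1F q hq)
      (fun q hq => hs2F q hq) hc1F hp
  refine ⟨hP1fd, hP2fd, hc1F, hc2F, hc11, hc12, hc21, hc22, ?_⟩
  intro p hp
  set L : (ℂ × ℂ) → ((ℂ × ℂ) →L[ℂ] ℂ) := fun q =>
    (ContinuousLinearMap.fst ℂ ℂ ℂ).smulRight (pd1 F q)
      + (ContinuousLinearMap.snd ℂ ℂ ℂ).smulRight (pd2 F q) with hLdef
  have hev : ∀ᶠ q in nhds p, HasFDerivAt F (L q) q := by
    filter_upwards [hΩ.eventually_mem hp] with q hq using hFfd q hq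
  set SR : ((ℂ × ℂ) →L[ℂ] ℂ) → ℂ →L[ℂ] ((ℂ × ℂ) →L[ℂ] ℂ) :=
    fun c => ContinuousLinearMap.smulRightL ℂ (ℂ × ℂ) ℂ c with hSRdef
  have hL1 : HasFDerivAt (fun q => (ContinuousLinearMap.fst ℂ ℂ ℂ).smulRight (pd1 F q))
      ((SR (ContinuousLinearMap.fst ℂ ℂ ℂ)).comp
        ((ContinuousLinearMap.fst ℂ ℂ ℂ).smulRight (pd1 (pd1 F) p)
          + (ContinuousLinearMap.snd ℂ ℂ ℂ).smulRight (pd2 (pd1 F) p))) p :=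
    (SR (ContinuousLinearMap.fst ℂ ℂ ℂ)).hasFDerivAt.comp p (hP1fd p hp)
  have hL2 : HasFDerivAt (fun q => (ContinuousLinearMap.snd ℂ ℂ ℂ).smulRight (pd2 F q))
      ((SR (ContinuousLinearMap.snd ℂ ℂ ℂ)).comp
        ((ContinuousLinearMap.fst ℂ ℂ ℂ).smulRight (pd1 (pd2 F) p)
          + (ContinuousLinearMap.snd ℂ ℂ ℂ).smulRight (pd2 (pd2 F) p))) p :=
    (SR (ContinuousLinearMap.snd ℂ ℂ ℂ)).hasFDerivAt.comp p (hP2fd p hp)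
  have hLd : HasFDerivAt L _ p := hL1.add hL2
  have hsym := second_derivative_symmetric_of_eventually hev hLd
    ((1 : ℂ), (0 : ℂ)) ((0 : ℂ), (1 : ℂ))
  simpa [hSRdef, ContinuousLinearMap.smulRightL, ContinuousLinearMap.smulRight_apply,
    ContinuousLinearMap.add_apply, ContinuousLinearMap.comp_apply,
    ContinuousLinearMap.coe_fst', ContinuousLinearMap.coe_snd', smul_eq_mul] using hsym.symm

lemma flow_key {G1 G2 F1 F2 M Pw : ℂ} (hG2 : G2 ≠ 0) (hF2 : F2 ≠ 0) (hM : M ≠ 0)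
    (hfl : G1 / G2 - F1 / F2 = -Pw / (F2 * G2 * M)) :
    M * (F1 * G2 - F2 * G1) = Pw := by
  field_simp at hfl
  have h2 : (F2 * G2) * (M * (F1 * G2 - F2 * G1)) = (F2 * G2) * Pw := by
    linear_combination (-(F2 * G2)) * hfl
  exact mul_left_cancel₀ (mul_ne_zero hF2 hG2) h2

lemma algebra_key {G1 G2 F1 F2 H1 H2 H11 H12 H21 H22 DG1 DF1 Pg Pf Qg Qf Pw : ℂ}
    (hsym : H12 = H21)
    (hkey : H21 * (F1 * G2 - F2 * G1) = Pw) :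
    ((G1 * H11 + F1 * H12) * G2 + H1 * DG1) * Pg + H1 * G2 * (Qg * G1)
      + (((G1 * H21 + F1 * H22) * F2 + H2 * DF1) * Pf + H2 * F2 * (Qf * F1))
    = (((G2 * H11 + F2 * H12) * G1 + H1 * DG1) * Pg + H1 * G1 * (Qg * G2)
      + (((G2 * H21 + F2 * H22) * F1 + H2 * DF1) * Pf + H2 * F1 * (Qf * F2)))
      + Pw * (Pg - Pf) := by
  subst hsym
  linear_combination (Pg - Pf) * hkey

/-- Core computation for the term `𝒵₂` in the proof that `∂ log τ / ∂ t_n = v_n`: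
for a C¹ family `(g(t,·), f(t,·))` on an annulus `A` around the unit circle satisfying
the deformation relation with generator `P`, and `Φ`, `Ψ` holomorphic on open sets
containing the images of `g` and `f`, the `t`-derivative of
`∮ { ∂_{z₁}ℋ(g,f)·g'·Φ(g) + ∂_{z₂}ℋ(g,f)·f'·Ψ(f) } dw` equals
`∮ P'(w) (Φ(g(t,w)) - Ψ(f(t,w))) dw`. -/
theorem stmt_8
    (r R : ℝ) (hr : r < 1) (hR : 1 < R)
    (A : Set ℂ) (hA : A = {w : ℂ | r < ‖w‖ ∧ ‖w‖ < R})
    (hA0 : ∀ w ∈ A, w ≠ 0)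
    (a b : ℝ)
    (D : Set (ℂ × ℂ)) (hDopen : IsOpen D) (hD0 : ∀ p ∈ D, p.1 ≠ 0 ∧ p.2 ≠ 0)
    (g f : ℝ → ℂ → ℂ)
    (hgC1 : ContDiffOn ℝ 1 (fun p : ℝ × ℂ => g p.1 p.2) (Set.Ioo a b ×ˢ A))
    (hfC1 : ContDiffOn ℝ 1 (fun p : ℝ × ℂ => f p.1 p.2) (Set.Ioo a b ×ˢ A))
    (hghol : ∀ t ∈ Set.Ioo a b, DifferentiableOn ℂ (g t) A)
    (hfhol : ∀ t ∈ Set.Ioo a b, DifferentiableOn ℂ (f t) A)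
    (hg0 : ∀ t ∈ Set.Ioo a b, ∀ w ∈ A, g t w ≠ 0)
    (hf0 : ∀ t ∈ Set.Ioo a b, ∀ w ∈ A, f t w ≠ 0)
    (hgd : ∀ t ∈ Set.Ioo a b, ∀ w ∈ A, deriv (g t) w ≠ 0)
    (hfd : ∀ t ∈ Set.Ioo a b, ∀ w ∈ A, deriv (f t) w ≠ 0)
    (hmemD : ∀ t ∈ Set.Ioo a b, ∀ w ∈ A, (g t w, f t w) ∈ D)
    (Φ Ψ : ℂ → ℂ) (UΦ UΨ : Set ℂ) (hUΦ : IsOpen UΦ) (hUΨ : IsOpen UΨ)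
    (hΦ : DifferentiableOn ℂ Φ UΦ) (hΨ : DifferentiableOn ℂ Ψ UΨ)
    (hgU : ∀ t ∈ Set.Ioo a b, ∀ w ∈ A, g t w ∈ UΦ)
    (hfU : ∀ t ∈ Set.Ioo a b, ∀ w ∈ A, f t w ∈ UΨ)
    (H : ℂ → ℂ → ℂ)
    (hH : DifferentiableOn ℂ (fun p : ℂ × ℂ => H p.1 p.2) D)
    (hH12 : ∀ p ∈ D, deriv (fun w => deriv (H w) p.2) p.1 ≠ 0)
    (P : ℂ → ℂ) (hP : DifferentiableOn ℂ P A)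
    (hflow : ∀ t ∈ Set.Ioo a b, ∀ w ∈ A,
      deriv (fun s => g s w) t / deriv (g t) w
          - deriv (fun s => f s w) t / deriv (f t) w
        = -deriv P w / (deriv (f t) w * deriv (g t) w
            * deriv (fun z => deriv (H z) (f t w)) (g t w))) :
    ∀ t ∈ Set.Ioo a b,
      deriv (fun s =>
          ∮ w in C(0, 1),
            (deriv (fun u => H u (f s w)) (g s w) * deriv (g s) w * Φ (g s w)
              + deriv (H (g s w)) (f s w) * deriv (f s) w * Ψ (f s w))) t
        = ∮ w in C(0, 1), deriv P w * (Φ (g t w) - Ψ (f t w)) := by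
  intro t ht
  -- basic topology
  have hAopen : IsOpen A := by
    rw [hA]
    have : {w : ℂ | r < ‖w‖ ∧ ‖w‖ < R}
        = ((fun w : ℂ => ‖w‖) ⁻¹' Ioi r) ∩ ((fun w : ℂ => ‖w‖) ⁻¹' Iio R) := rfl
    rw [this]
    exact (isOpen_Ioi.preimage continuous_norm).inter
      (isOpen_Iio.preimage continuous_norm)
  have hsph : sphere (0:ℂ) 1 ⊆ A := by
    intro w hw
    rw [mem_sphere_iff_norm, sub_zero] at hw
    rw [hA]
    constructor <;> rw [hw] <;> assumption
  have hT : IsOpen (Ioo a b) := isOpen_Ioo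
  set T : Set ℝ := Ioo a b with hTdef
  -- regularity packs for g and f
  obtain ⟨hg0d, hG1cont, hG1hol, hG2t⟩ := family_deriv_swap hT hAopen hgC1 hghol
  obtain ⟨hf0d, hF1cont, hF1hol, hF2t⟩ := family_deriv_swap hT hAopen hfC1 hfhol
  have hgcont : ContinuousOn (fun p : ℝ × ℂ => g p.1 p.2) (T ×ˢ A) := hgC1.continuousOn
  have hfcont : ContinuousOn (fun p : ℝ × ℂ => f p.1 p.2) (T ×ˢ A) := hfC1.continuousOn
  have hG2cont : ContinuousOn (fun p : ℝ × ℂ => deriv (g p.1) p.2) (T ×ˢ A) :=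
    jointCont_deriv hT hAopen hgcont hghol
  have hF2cont : ContinuousOn (fun p : ℝ × ℂ => deriv (f p.1) p.2) (T ×ˢ A) :=
    jointCont_deriv hT hAopen hfcont hfhol
  have hDG1cont : ContinuousOn
      (fun p : ℝ × ℂ => deriv (fun w' => deriv (fun τ => g τ w') p.1) p.2) (T ×ˢ A) :=
    jointCont_deriv hT hAopen hG1cont hG1hol
  have hDF1cont : ContinuousOn
      (fun p : ℝ × ℂ => deriv (fun w' => deriv (fun τ => f τ w') p.1) p.2) (T ×ˢ A) :=
    jointCont_deriv hT hAopen hF1cont hF1hol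
  -- H pack
  set Hf : ℂ × ℂ → ℂ := fun p => H p.1 p.2 with hHfdef
  obtain ⟨hH1fd, hH2fd, hH1c, hH2c, hc11, hc12, hc21, hc22, hsymm⟩ := Hpack hDopen hH
  -- Φ, Ψ facts
  have hΦd : ∀ z ∈ UΦ, HasDerivAt Φ (deriv Φ z) z :=
    fun z hz => (hΦ.differentiableAt (hUΦ.mem_nhds hz)).hasDerivAt
  have hΨd : ∀ z ∈ UΨ, HasDerivAt Ψ (deriv Ψ z) z :=
    fun z hz => (hΨ.differentiableAt (hUΨ.mem_nhds hz)).hasDerivAt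
  have hΦ'c : ContinuousOn (deriv Φ) UΦ := ((hΦ.analyticOnNhd hUΦ).deriv).continuousOn
  have hΨ'c : ContinuousOn (deriv Ψ) UΨ := ((hΨ.analyticOnNhd hUΨ).deriv).continuousOn
  have hΦc : ContinuousOn Φ UΦ := hΦ.continuousOn
  have hΨc : ContinuousOn Ψ UΨ := hΨ.continuousOn
  -- abbreviations as functions
  set Fi : ℝ → ℂ → ℂ := fun s w =>
    pd1 Hf (g s w, f s w) * deriv (g s) w * Φ (g s w)
      + pd2 Hf (g s w, f s w) * deriv (f s) w * Ψ (f s w) with hFidef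
  set Fi' : ℝ → ℂ → ℂ := fun s w =>
    ((deriv (fun τ => g τ w) s * pd1 (pd1 Hf) (g s w, f s w)
        + deriv (fun τ => f τ w) s * pd2 (pd1 Hf) (g s w, f s w)) * deriv (g s) w
      + pd1 Hf (g s w, f s w) * deriv (fun w' => deriv (fun τ => g τ w') s) w) * Φ (g s w)
    + pd1 Hf (g s w, f s w) * deriv (g s) w
        * (deriv Φ (g s w) * deriv (fun τ => g τ w) s)
    + (((deriv (fun τ => g τ w) s * pd1 (pd2 Hf) (g s w, f s w)
        + deriv (fun τ => f τ w) s * pd2 (pd2 Hf) (g s w, f s w)) * deriv (f s) w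
      + pd2 Hf (g s w, f s w) * deriv (fun w' => deriv (fun τ => f τ w') s) w) * Ψ (f s w)
    + pd2 Hf (g s w, f s w) * deriv (f s) w
        * (deriv Ψ (f s w) * deriv (fun τ => f τ w) s)) with hFi'def
  set Gf : ℝ → ℂ → ℂ := fun s w =>
    pd1 Hf (g s w, f s w) * deriv (fun τ => g τ w) s * Φ (g s w)
      + pd2 Hf (g s w, f s w) * deriv (fun τ => f τ w) s * Ψ (f s w) with hGfdef
  set E : ℝ → ℂ → ℂ := fun s w =>
    ((deriv (g s) w * pd1 (pd1 Hf) (g s w, f s w)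
        + deriv (f s) w * pd2 (pd1 Hf) (g s w, f s w)) * deriv (fun τ => g τ w) s
      + pd1 Hf (g s w, f s w) * deriv (fun w' => deriv (fun τ => g τ w') s) w) * Φ (g s w)
    + pd1 Hf (g s w, f s w) * deriv (fun τ => g τ w) s
        * (deriv Φ (g s w) * deriv (g s) w)
    + (((deriv (g s) w * pd1 (pd2 Hf) (g s w, f s w)
        + deriv (f s) w * pd2 (pd2 Hf) (g s w, f s w)) * deriv (fun τ => f τ w) s
      + pd2 Hf (g s w, f s w) * deriv (fun w' => deriv (fun τ => f τ w') s) w) * Ψ (f s w)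
    + pd2 Hf (g s w, f s w) * deriv (fun τ => f τ w) s
        * (deriv Ψ (f s w) * deriv (f s) w)) with hEdef

  -- pointwise s-derivative of the H-factors
  have hcurveS : ∀ s ∈ T, ∀ w ∈ A, HasDerivAt (fun τ => ((g τ w : ℂ), (f τ w : ℂ)))
      (deriv (fun τ => g τ w) s, deriv (fun τ => f τ w) s) s :=
    fun s hs w hw => (hg0d s hs w hw).prodMk (hf0d s hs w hw)
  have hH1s : ∀ s ∈ T, ∀ w ∈ A, HasDerivAt (fun τ => pd1 Hf (g τ w, f τ w))
      (deriv (fun τ => g τ w) s * pd1 (pd1 Hf) (g s w, f s w)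
        + deriv (fun τ => f τ w) s * pd2 (pd1 Hf) (g s w, f s w)) s := by
    intro s hs w hw
    have hq := hmemD s hs w hw
    have h := ((hH1fd _ hq).restrictScalars ℝ).comp_hasDerivAt s (hcurveS s hs w hw)
    simpa [ContinuousLinearMap.smulRight_apply, smul_eq_mul, Function.comp_def] using h
  have hH2s : ∀ s ∈ T, ∀ w ∈ A, HasDerivAt (fun τ => pd2 Hf (g τ w, f τ w))
      (deriv (fun τ => g τ w) s * pd1 (pd2 Hf) (g s w, f s w)
        + deriv (fun τ => f τ w) s * pd2 (pd2 Hf) (g s w, f s w)) s := by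
    intro s hs w hw
    have hq := hmemD s hs w hw
    have h := ((hH2fd _ hq).restrictScalars ℝ).comp_hasDerivAt s (hcurveS s hs w hw)
    simpa [ContinuousLinearMap.smulRight_apply, smul_eq_mul, Function.comp_def] using h
  have hΦgs : ∀ s ∈ T, ∀ w ∈ A, HasDerivAt (fun τ => Φ (g τ w))
      (deriv Φ (g s w) * deriv (fun τ => g τ w) s) s :=
    fun s hs w hw => comp_hasDerivAt_real (hΦd _ (hgU s hs w hw)) (hg0d s hs w hw)
  have hΨfs : ∀ s ∈ T, ∀ w ∈ A, HasDerivAt (fun τ => Ψ (f τ w))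
      (deriv Ψ (f s w) * deriv (fun τ => f τ w) s) s :=
    fun s hs w hw => comp_hasDerivAt_real (hΨd _ (hfU s hs w hw)) (hf0d s hs w hw)
  have hFi's : ∀ s ∈ T, ∀ w ∈ A, HasDerivAt (fun τ => Fi τ w) (Fi' s w) s := by
    intro s hs w hw
    have h1 := ((hH1s s hs w hw).mul (hG2t s hs w hw)).mul (hΦgs s hs w hw)
    have h2 := ((hH2s s hs w hw).mul (hF2t s hs w hw)).mul (hΨfs s hs w hw)
    exact h1.add h2
  -- pointwise w-derivative of Gf
  have hgw : ∀ s ∈ T, ∀ w ∈ A, HasDerivAt (g s) (deriv (g s) w) w :=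
    fun s hs w hw => ((hghol s hs).differentiableAt (hAopen.mem_nhds hw)).hasDerivAt
  have hfw : ∀ s ∈ T, ∀ w ∈ A, HasDerivAt (f s) (deriv (f s) w) w :=
    fun s hs w hw => ((hfhol s hs).differentiableAt (hAopen.mem_nhds hw)).hasDerivAt
  have hcurveW : ∀ s ∈ T, ∀ w ∈ A, HasDerivAt (fun w' => ((g s w' : ℂ), (f s w' : ℂ)))
      (deriv (g s) w, deriv (f s) w) w :=
    fun s hs w hw => (hgw s hs w hw).prodMk (hfw s hs w hw)
  have hH1w : ∀ s ∈ T, ∀ w ∈ A, HasDerivAt (fun w' => pd1 Hf (g s w', f s w'))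
      (deriv (g s) w * pd1 (pd1 Hf) (g s w, f s w)
        + deriv (f s) w * pd2 (pd1 Hf) (g s w, f s w)) w := by
    intro s hs w hw
    have hq := hmemD s hs w hw
    have h := (hH1fd _ hq).comp_hasDerivAt w (hcurveW s hs w hw)
    simpa [ContinuousLinearMap.smulRight_apply, smul_eq_mul, Function.comp_def] using h
  have hH2w : ∀ s ∈ T, ∀ w ∈ A, HasDerivAt (fun w' => pd2 Hf (g s w', f s w'))
      (deriv (g s) w * pd1 (pd2 Hf) (g s w, f s w)
        + deriv (f s) w * pd2 (pd2 Hf) (g s w, f s w)) w := by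
    intro s hs w hw
    have hq := hmemD s hs w hw
    have h := (hH2fd _ hq).comp_hasDerivAt w (hcurveW s hs w hw)
    simpa [ContinuousLinearMap.smulRight_apply, smul_eq_mul, Function.comp_def] using h
  have hG1w : ∀ s ∈ T, ∀ w ∈ A, HasDerivAt (fun w' => deriv (fun τ => g τ w') s)
      (deriv (fun w' => deriv (fun τ => g τ w') s) w) w :=
    fun s hs w hw => ((hG1hol s hs).differentiableAt (hAopen.mem_nhds hw)).hasDerivAt
  have hF1w : ∀ s ∈ T, ∀ w ∈ A, HasDerivAt (fun w' => deriv (fun τ => f τ w') s)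
      (deriv (fun w' => deriv (fun τ => f τ w') s) w) w :=
    fun s hs w hw => ((hF1hol s hs).differentiableAt (hAopen.mem_nhds hw)).hasDerivAt
  have hΦgw : ∀ s ∈ T, ∀ w ∈ A, HasDerivAt (fun w' => Φ (g s w'))
      (deriv Φ (g s w) * deriv (g s) w) w :=
    fun s hs w hw => (hΦd _ (hgU s hs w hw)).comp w (hgw s hs w hw)
  have hΨfw : ∀ s ∈ T, ∀ w ∈ A, HasDerivAt (fun w' => Ψ (f s w'))
      (deriv Ψ (f s w) * deriv (f s) w) w :=
    fun s hs w hw => (hΨd _ (hfU s hs w hw)).comp w (hfw s hs w hw)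
  have hEw : ∀ s ∈ T, ∀ w ∈ A, HasDerivAt (Gf s) (E s w) w := by
    intro s hs w hw
    have h1 := ((hH1w s hs w hw).mul (hG1w s hs w hw)).mul (hΦgw s hs w hw)
    have h2 := ((hH2w s hs w hw).mul (hF1w s hs w hw)).mul (hΨfw s hs w hw)
    exact h1.add h2
  -- the pointwise identity
  have hkeyC : ∀ s ∈ T, ∀ w ∈ A, Fi' s w = E s w + deriv P w * (Φ (g s w) - Ψ (f s w)) := by
    intro s hs w hw
    have hq := hmemD s hs w hw
    have hsym := hsymm _ hq
    have hG2ne := hgd s hs w hw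
    have hF2ne := hfd s hs w hw
    have hMne : pd1 (pd2 Hf) (g s w, f s w) ≠ 0 := hH12 _ hq
    have hflM : deriv (fun τ => g τ w) s / deriv (g s) w
        - deriv (fun τ => f τ w) s / deriv (f s) w
        = -deriv P w / (deriv (f s) w * deriv (g s) w
            * pd1 (pd2 Hf) (g s w, f s w)) := hflow s hs w hw
    have hkey := flow_key hG2ne hF2ne hMne hflM
    exact algebra_key hsym hkey
  -- joint continuity of Fi and Fi'
  have hpair : ContinuousOn (fun pr : ℝ × ℂ => ((g pr.1 pr.2 : ℂ), (f pr.1 pr.2 : ℂ)))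
      (T ×ˢ A) := hgcont.prodMk hfcont
  have hmaps : MapsTo (fun pr : ℝ × ℂ => ((g pr.1 pr.2 : ℂ), f pr.1 pr.2)) (T ×ˢ A) D := by
    rintro ⟨s, w⟩ hsw
    obtain ⟨hs, hw⟩ : s ∈ T ∧ w ∈ A := by simpa using hsw
    exact hmemD s hs w hw
  have hmapsΦ : MapsTo (fun pr : ℝ × ℂ => (g pr.1 pr.2 : ℂ)) (T ×ˢ A) UΦ := by
    rintro ⟨s, w⟩ hsw
    obtain ⟨hs, hw⟩ : s ∈ T ∧ w ∈ A := by simpa using hsw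
    exact hgU s hs w hw
  have hmapsΨ : MapsTo (fun pr : ℝ × ℂ => (f pr.1 pr.2 : ℂ)) (T ×ˢ A) UΨ := by
    rintro ⟨s, w⟩ hsw
    obtain ⟨hs, hw⟩ : s ∈ T ∧ w ∈ A := by simpa using hsw
    exact hfU s hs w hw
  have hH1cc : ContinuousOn (fun pr : ℝ × ℂ => pd1 Hf (g pr.1 pr.2, f pr.1 pr.2)) (T ×ˢ A) :=
    hH1c.comp hpair hmaps
  have hH2cc : ContinuousOn (fun pr : ℝ × ℂ => pd2 Hf (g pr.1 pr.2, f pr.1 pr.2)) (T ×ˢ A) :=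
    hH2c.comp hpair hmaps
  have hH11cc : ContinuousOn (fun pr : ℝ × ℂ => pd1 (pd1 Hf) (g pr.1 pr.2, f pr.1 pr.2))
      (T ×ˢ A) := hc11.comp hpair hmaps
  have hH12cc : ContinuousOn (fun pr : ℝ × ℂ => pd2 (pd1 Hf) (g pr.1 pr.2, f pr.1 pr.2))
      (T ×ˢ A) := hc12.comp hpair hmaps
  have hH21cc : ContinuousOn (fun pr : ℝ × ℂ => pd1 (pd2 Hf) (g pr.1 pr.2, f pr.1 pr.2))
      (T ×ˢ A) := hc21.comp hpair hmaps
  have hH22cc : ContinuousOn (fun pr : ℝ × ℂ => pd2 (pd2 Hf) (g pr.1 pr.2, f pr.1 pr.2))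
      (T ×ˢ A) := hc22.comp hpair hmaps
  have hΦgc : ContinuousOn (fun pr : ℝ × ℂ => Φ (g pr.1 pr.2)) (T ×ˢ A) :=
    hΦc.comp hgcont hmapsΦ
  have hΨfc : ContinuousOn (fun pr : ℝ × ℂ => Ψ (f pr.1 pr.2)) (T ×ˢ A) :=
    hΨc.comp hfcont hmapsΨ
  have hΦ'gc : ContinuousOn (fun pr : ℝ × ℂ => deriv Φ (g pr.1 pr.2)) (T ×ˢ A) :=
    hΦ'c.comp hgcont hmapsΦ
  have hΨ'fc : ContinuousOn (fun pr : ℝ × ℂ => deriv Ψ (f pr.1 pr.2)) (T ×ˢ A) :=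
    hΨ'c.comp hfcont hmapsΨ
  have hFicont : ContinuousOn (fun pr : ℝ × ℂ => Fi pr.1 pr.2) (T ×ˢ A) :=
    ((hH1cc.mul hG2cont).mul hΦgc).add ((hH2cc.mul hF2cont).mul hΨfc)
  have hFi'cont : ContinuousOn (fun pr : ℝ × ℂ => Fi' pr.1 pr.2) (T ×ˢ A) := by
    apply ContinuousOn.add
    apply ContinuousOn.add
    · exact (((((hG1cont.mul hH11cc).add (hF1cont.mul hH12cc)).mul hG2cont).add
        (hH1cc.mul hDG1cont)).mul hΦgc)
    · exact (hH1cc.mul hG2cont).mul (hΦ'gc.mul hG1cont)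
    · exact ((((((hG1cont.mul hH21cc).add (hF1cont.mul hH22cc)).mul hF2cont).add
        (hH2cc.mul hDF1cont)).mul hΨfc).add ((hH2cc.mul hF2cont).mul (hΨ'fc.mul hF1cont)))
  -- derivative under the integral sign
  obtain ⟨ε0, hε0, hballT⟩ := Metric.isOpen_iff.1 hT t ht
  set ε : ℝ := ε0 / 2 with hεdef
  have hεpos : 0 < ε := by positivity
  have hcbT : closedBall t ε ⊆ T :=
    (closedBall_subset_ball (by rw [hεdef]; linarith)).trans hballT
  have hKc : IsCompact (closedBall t ε ×ˢ sphere (0:ℂ) 1) :=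
    (isCompact_closedBall _ _).prod (isCompact_sphere _ _)
  have hKsub : closedBall t ε ×ˢ sphere (0:ℂ) 1 ⊆ T ×ˢ A := prod_mono hcbT hsph
  obtain ⟨C, hC⟩ := hKc.exists_bound_of_continuousOn (hFi'cont.mono hKsub)
  have hcms : ∀ θ : ℝ, circleMap 0 1 θ ∈ A :=
    fun θ => hsph (circleMap_mem_sphere 0 zero_le_one θ)
  have hcoeff1 : ∀ θ : ℝ, ‖deriv (circleMap 0 1) θ‖ = 1 := by
    intro θ
    rw [deriv_circleMap, norm_mul]
    simp [norm_circleMap_zero]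
  have hcoeffc : Continuous fun θ : ℝ => deriv (circleMap 0 1) θ := by
    simp only [deriv_circleMap]
    exact (continuous_circleMap 0 1).mul continuous_const
  have hsliceFi : ∀ s ∈ T, Continuous fun θ : ℝ =>
      deriv (circleMap 0 1) θ • Fi s (circleMap 0 1 θ) := by
    intro s hs
    apply hcoeffc.smul
    have hFis : ContinuousOn (fun w => Fi s w) A := by
      have := hFicont.comp ((continuous_const.prodMk continuous_id).continuousOn
        (s := A)) (fun w hw => mk_mem_prod hs hw)
      exact this
    exact hFis.comp_continuous (continuous_circleMap 0 1) hcms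
  have hsliceFi' : Continuous fun θ : ℝ =>
      deriv (circleMap 0 1) θ • Fi' t (circleMap 0 1 θ) := by
    apply hcoeffc.smul
    have hFis : ContinuousOn (fun w => Fi' t w) A := by
      have := hFi'cont.comp ((continuous_const.prodMk continuous_id).continuousOn
        (s := A)) (fun w hw => mk_mem_prod ht hw)
      exact this
    exact hFis.comp_continuous (continuous_circleMap 0 1) hcms
  have hHD := (intervalIntegral.hasDerivAt_integral_of_dominated_loc_of_deriv_le
    (𝕜 := ℝ) (μ := MeasureTheory.volume) (a := 0) (b := 2 * Real.pi)
    (F := fun s θ => deriv (circleMap 0 1) θ • Fi s (circleMap 0 1 θ))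
    (F' := fun s θ => deriv (circleMap 0 1) θ • Fi' s (circleMap 0 1 θ))
    (x₀ := t) (bound := fun _ => C) (s := ball t ε) (ball_mem_nhds t hεpos)
    ?mea ?inte ?mea' ?bnd ?bint ?dif).2
  case mea =>
    filter_upwards [hT.eventually_mem ht] with s hs
    exact ((hsliceFi s hs).aestronglyMeasurable).restrict
  case inte =>
    exact (hsliceFi t ht).intervalIntegrable 0 (2 * Real.pi)
  case mea' =>
    exact (hsliceFi'.aestronglyMeasurable).restrict
  case bnd =>
    apply MeasureTheory.ae_of_all
    intro θ _ x hx
    rw [norm_smul, hcoeff1 θ, one_mul]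
    exact hC (x, circleMap 0 1 θ)
      (mk_mem_prod (ball_subset_closedBall hx) (circleMap_mem_sphere 0 zero_le_one θ))
  case bint =>
    exact intervalIntegrable_const
  case dif =>
    apply MeasureTheory.ae_of_all
    intro θ _ x hx
    have hxT : x ∈ T := hcbT (ball_subset_closedBall hx)
    exact (hFi's x hxT (circleMap 0 1 θ) (hcms θ)).const_smul (deriv (circleMap 0 1) θ)
  -- convert to circle integrals
  have hfun2 : (fun s => ∮ w in C(0, 1), Fi s w)
      = fun s => ∫ θ in (0:ℝ)..(2 * Real.pi),
          deriv (circleMap 0 1) θ • Fi s (circleMap 0 1 θ) := by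
    funext s
    rw [circleIntegral]
  have hHD' : HasDerivAt (fun s => ∮ w in C(0, 1), Fi s w)
      (∮ w in C(0, 1), Fi' t w) t := by
    rw [hfun2, circleIntegral]
    exact hHD
  have hfun1 : (fun s =>
      ∮ w in C(0, 1),
        (deriv (fun u => H u (f s w)) (g s w) * deriv (g s) w * Φ (g s w)
          + deriv (H (g s w)) (f s w) * deriv (f s) w * Ψ (f s w)))
      = fun s => ∮ w in C(0, 1), Fi s w := rfl
  rw [hfun1, hHD'.deriv]
  -- compute the circle integral of Fi' t
  have hGfdiff : DifferentiableOn ℂ (Gf t) A :=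
    fun w hw => (hEw t ht w hw).differentiableAt.differentiableWithinAt
  have hEdr : ∀ w ∈ A, E t w = deriv (Gf t) w := fun w hw => ((hEw t ht w hw).deriv).symm
  have hint1 : CircleIntegrable (fun w => deriv (Gf t) w) 0 1 := by
    apply ContinuousOn.circleIntegrable zero_le_one
    exact (((hGfdiff.analyticOnNhd hAopen).deriv).continuousOn).mono hsph
  have hint2 : CircleIntegrable (fun w => deriv P w * (Φ (g t w) - Ψ (f t w))) 0 1 := by
    apply ContinuousOn.circleIntegrable zero_le_one
    apply ContinuousOn.mono _ hsph
    apply ContinuousOn.mul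
    · exact ((hP.analyticOnNhd hAopen).deriv).continuousOn
    · apply ContinuousOn.sub
      · exact hΦc.comp (hghol t ht).continuousOn (fun w hw => hgU t ht w hw)
      · exact hΨc.comp (hfhol t ht).continuousOn (fun w hw => hfU t ht w hw)
  calc (∮ w in C(0, 1), Fi' t w)
      = ∮ w in C(0, 1), (deriv (Gf t) w + deriv P w * (Φ (g t w) - Ψ (f t w))) := by
        apply circleIntegral.integral_congr zero_le_one
        intro w hw
        have hwA : w ∈ A := hsph hw
        rw [hkeyC t ht w hwA, hEdr w hwA]
    _ = (∮ w in C(0, 1), deriv (Gf t) w)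
        + ∮ w in C(0, 1), deriv P w * (Φ (g t w) - Ψ (f t w)) := by
        simp only [circleIntegral, smul_add]
        exact intervalIntegral.integral_add hint1.out hint2.out
    _ = ∮ w in C(0, 1), deriv P w * (Φ (g t w) - Ψ (f t w)) := by
        rw [circleIntegral_deriv_eq_zero hAopen hsph hGfdiff, zero_add]
end

section
/- Let g, f : ℝ → ℂ∖{0} be C¹ and 2π-periodic, and let ℋ be holomorphic on an open set D ⊆ (ℂ∖{0})² containing all points (g(θ), f(θ)). For n ≥ 1 define t_n = (1/(2πin))∫₀^{2π} ∂_{z₁}ℋ(g,f)·g^{−n}·g′ dθ, v_n = (1/(2πi))∫₀^{2π} ∂_{z₁}ℋ(g,f)·g^{n}·g′ dθ, t_{−n} = (1/(2πin))∫₀^{2π} ∂_{z₂}ℋ(g,f)·f^{n}·f′ dθ, v_{−n} = (1/(2πi))∫₀^{2π} ∂_{z₂}ℋ(g,f)·f^{−n}·f′ dθ. Suppose there exist 0 < ρ < min_θ|g(θ)| and σ > max_θ|f(θ)| with Σ_{n≥1}|v_n|ρ^{−n} < ∞ and Σ_{n≥1}|v_{−n}|σ^{n} < ∞, and set Φ(z)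 = Σ_{n≥1}(v_n/n)z^{−n} for |z| ≥ ρ and Ψ(z) = Σ_{n≥1}(v_{−n}/n)z^{n} for |z| ≤ σ. Then (1/(4πi)) ∫₀^{2π} { ∂_{z₁}ℋ(g,f)·g′·Φ(g) + ∂_{z₂}ℋ(g,f)·f′·Ψ(f) } dθ = (1/2) Σ_{n≥1} ( t_n v_n + t_{−n} v_{−n} ), with the series on the right converging absolutely. -/
open MeasureTheory intervalIntegral Set Metric

private lemma setIntegral_norm_le_const {h : ℝ → ℂ} {Cb : ℝ}
    (hi : IntegrableOn (fun θ => ‖h θ‖) (Set.Ioc (0:ℝ) (2*Real.pi)))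
    (hb : ∀ θ ∈ Set.Ioc (0:ℝ) (2*Real.pi), ‖h θ‖ ≤ Cb) :
    ∫ θ in Set.Ioc (0:ℝ) (2*Real.pi), ‖h θ‖ ≤ Cb * (2*Real.pi) := by
  have h2π : (0:ℝ) ≤ 2*Real.pi := by positivity
  calc ∫ θ in Set.Ioc (0:ℝ) (2*Real.pi), ‖h θ‖
      ≤ ∫ _ in Set.Ioc (0:ℝ) (2*Real.pi), Cb := by
        refine setIntegral_mono_on hi (integrableOn_const ?_) measurableSet_Ioc hb
        rw [Real.volume_Ioc]; exact ENNReal.ofReal_ne_top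
    _ = Cb * (2*Real.pi) := by
        rw [setIntegral_const, measureReal_def, Real.volume_Ioc, smul_eq_mul]
        rw [ENNReal.toReal_ofReal (by linarith)]
        ring

/-- Continuity in a parameter of the first partial complex derivative along curves. -/
private lemma cont_param_deriv {F : ℂ × ℂ → ℂ} {D : Set (ℂ × ℂ)} (hD : IsOpen D)
    (hF : DifferentiableOn ℂ F D) {g f : ℝ → ℂ} (hg : Continuous g) (hf : Continuous f)
    (hmem : ∀ θ : ℝ, (g θ, f θ) ∈ D) :
    Continuous fun θ : ℝ => deriv (fun u => F (u, f θ)) (g θ) := by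
  rw [continuous_iff_continuousAt]
  intro θ₀
  obtain ⟨ε, hε, hball⟩ := Metric.isOpen_iff.1 hD _ (hmem θ₀)
  set r : ℝ := ε / 4 with hrdef
  have hr0 : 0 < r := by positivity
  set V : Set ℝ := g ⁻¹' ball (g θ₀) r ∩ f ⁻¹' ball (f θ₀) r with hVdef
  have hVopen : IsOpen V := (isOpen_ball.preimage hg).inter (isOpen_ball.preimage hf)
  have hθ₀V : θ₀ ∈ V := ⟨mem_ball_self hr0, mem_ball_self hr0⟩
  have hmem2 : ∀ x y : ℂ, dist x (g θ₀) < 2*r → dist y (f θ₀) < 2*r → (x, y) ∈ D := by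
    intro x y hx hy
    refine hball ?_
    rw [Metric.mem_ball, Prod.dist_eq]
    refine max_lt (lt_of_lt_of_le hx ?_) (lt_of_lt_of_le hy ?_) <;>
      · rw [hrdef]; linarith
  have hslice : ∀ θ ∈ V, DifferentiableOn ℂ (fun u => F (u, f θ)) (ball (g θ₀) (2*r)) := by
    intro θ hθ u hu
    have hpt : (u, f θ) ∈ D := hmem2 _ _ (mem_ball.1 hu) (lt_trans (mem_ball.1 hθ.2) (by linarith))
    have hFat : DifferentiableAt ℂ F (u, f θ) := hF.differentiableAt (hD.mem_nhds hpt)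
    exact (hFat.comp u (differentiableAt_id.prodMk (differentiableAt_const _))).differentiableWithinAt
  have hclos : ∀ θ ∈ V, closedBall (g θ) r ⊆ ball (g θ₀) (2*r) := by
    intro θ hθ x hx
    rw [mem_ball]
    calc dist x (g θ₀) ≤ dist x (g θ) + dist (g θ) (g θ₀) := dist_triangle _ _ _
      _ < r + r := add_lt_add_of_le_of_lt (mem_closedBall.1 hx) (mem_ball.1 hθ.1)
      _ = 2*r := by ring
  have hkey : ∀ θ ∈ V, deriv (fun u => F (u, f θ)) (g θ)
      = (2 * Real.pi * Complex.I)⁻¹ *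
        ∫ t in (0:ℝ)..(2*Real.pi),
          circleMap 0 r t * Complex.I *
            ((circleMap 0 r t ^ 2)⁻¹ * F (circleMap (g θ) r t, f θ)) := by
    intro θ hθ
    rw [← Complex.cderiv_eq_deriv isOpen_ball (hslice θ hθ) hr0 (hclos θ hθ)]
    simp only [Complex.cderiv, circleIntegral, deriv_circleMap, circleMap_sub_center,
      smul_eq_mul]
  have hcm : ∀ (c : ℂ) (t : ℝ), circleMap c r t = c + circleMap 0 r t := fun c t =>
    sub_eq_iff_eq_add'.mp (circleMap_sub_center c r t)
  have hcont : ContinuousOn (fun θ => deriv (fun u => F (u, f θ)) (g θ)) V := by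
    rw [continuousOn_iff_continuous_restrict]
    have hcir : Continuous fun p : V × ℝ => circleMap (g (p.1 : ℝ)) r p.2 := by
      have he : (fun p : V × ℝ => circleMap (g (p.1 : ℝ)) r p.2)
          = fun p : V × ℝ => g (p.1 : ℝ) + circleMap 0 r p.2 := funext fun p => hcm _ _
      rw [he]
      exact ((hg.comp continuous_subtype_val).comp continuous_fst).add
        ((continuous_circleMap 0 r).comp continuous_snd)
    have hmaps : ∀ p : V × ℝ, (circleMap (g (p.1 : ℝ)) r p.2, f (p.1 : ℝ)) ∈ D := by
      rintro ⟨⟨θ, hθ⟩, t⟩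
      refine hmem2 _ _ ?_ (lt_trans (mem_ball.1 hθ.2) (by linarith))
      calc dist (circleMap (g θ) r t) (g θ₀)
          ≤ dist (circleMap (g θ) r t) (g θ) + dist (g θ) (g θ₀) := dist_triangle _ _ _
        _ < r + r := by
            refine add_lt_add_of_le_of_lt ?_ (mem_ball.1 hθ.1)
            rw [Complex.dist_eq, circleMap_sub_center]
            rw [show ‖circleMap 0 r t‖ = |r| from norm_circleMap_zero r t,
              abs_of_pos hr0]
        _ = 2*r := by ring
    have hFpart : Continuous fun p : V × ℝ =>
        F (circleMap (g (p.1 : ℝ)) r p.2, f (p.1 : ℝ)) := by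
      refine hF.continuousOn.comp_continuous
        (hcir.prodMk ((hf.comp continuous_subtype_val).comp continuous_fst)) hmaps
    have hint : Continuous fun θ : V =>
        ∫ t in (0:ℝ)..(2*Real.pi),
          circleMap 0 r t * Complex.I *
            ((circleMap 0 r t ^ 2)⁻¹ * F (circleMap (g (θ : ℝ)) r t, f (θ : ℝ))) := by
      refine continuous_parametric_intervalIntegral_of_continuous' ?_ _ _
      have hc1 : Continuous fun p : V × ℝ => circleMap 0 r p.2 :=
        (continuous_circleMap 0 r).comp continuous_snd
      have hinv : Continuous fun p : V × ℝ => (circleMap 0 r p.2 ^ 2)⁻¹ :=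
        (hc1.pow 2).inv₀ fun p => pow_ne_zero _ (circleMap_ne_center hr0.ne')
      exact (hc1.mul continuous_const).mul (hinv.mul hFpart)
    exact (continuous_const.mul hint).congr fun θ => (hkey θ θ.2).symm
  exact hcont.continuousAt (hVopen.mem_nhds hθ₀V)

/-- The term `𝒵₂` of the tau function equals `(1/2)(Σ_{n≥1} t_n v_n + Σ_{n≥1} t_{-n} v_{-n})`:
with the Toda times `t_n, t_{-n}` and dual variables `v_n, v_{-n}` attached to a pair of
2π-periodic C¹ curves `(g, f)` and a two-variable holomorphic function `ℋ`, and with `Φ, Ψ`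
the generating functions of the `v`'s,
`(1/4πi) ∮ { ∂_{z₁}ℋ(g,f)·g'·Φ(g) + ∂_{z₂}ℋ(g,f)·f'·Ψ(f) } dθ
  = (1/2) Σ_{n≥1} (t_n v_n + t_{-n} v_{-n})`, the series converging absolutely. -/
theorem stmt_11
    (g f : ℝ → ℂ) (hg : ContDiff ℝ 1 g) (hf : ContDiff ℝ 1 f)
    (hgper : Function.Periodic g (2 * Real.pi))
    (hfper : Function.Periodic f (2 * Real.pi))
    (hg0 : ∀ θ : ℝ, g θ ≠ 0) (hf0 : ∀ θ : ℝ, f θ ≠ 0)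
    (D : Set (ℂ × ℂ)) (hDopen : IsOpen D)
    (hmem : ∀ θ : ℝ, (g θ, f θ) ∈ D)
    (H : ℂ → ℂ → ℂ)
    (hH : DifferentiableOn ℂ (fun p : ℂ × ℂ => H p.1 p.2) D)
    (tp vp tm vm : ℕ → ℂ)
    (htp : ∀ n : ℕ, 1 ≤ n → tp n = (2 * Real.pi * Complex.I * n)⁻¹ *
      ∫ θ in (0:ℝ)..(2 * Real.pi),
        deriv (fun u => H u (f θ)) (g θ) * g θ ^ (-(n:ℤ)) * deriv g θ)
    (hvp : ∀ n : ℕ, 1 ≤ n → vp n = (2 * Real.pi * Complex.I)⁻¹ *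
      ∫ θ in (0:ℝ)..(2 * Real.pi),
        deriv (fun u => H u (f θ)) (g θ) * g θ ^ (n:ℤ) * deriv g θ)
    (htm : ∀ n : ℕ, 1 ≤ n → tm n = (2 * Real.pi * Complex.I * n)⁻¹ *
      ∫ θ in (0:ℝ)..(2 * Real.pi),
        deriv (H (g θ)) (f θ) * f θ ^ (n:ℤ) * deriv f θ)
    (hvm : ∀ n : ℕ, 1 ≤ n → vm n = (2 * Real.pi * Complex.I)⁻¹ *
      ∫ θ in (0:ℝ)..(2 * Real.pi),
        deriv (H (g θ)) (f θ) * f θ ^ (-(n:ℤ)) * deriv f θ)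
    (ρ σ : ℝ) (hρ0 : 0 < ρ)
    (hρg : ∀ θ : ℝ, ρ < ‖g θ‖)
    (hfσ : ∀ θ : ℝ, ‖f θ‖ < σ)
    (hvpsum : Summable fun n : ℕ => ‖vp (n + 1)‖ * ρ ^ (-(n + 1 : ℤ)))
    (hvmsum : Summable fun n : ℕ => ‖vm (n + 1)‖ * σ ^ (n + 1))
    (Φ Ψ : ℂ → ℂ)
    (hΦ : ∀ z : ℂ, ρ ≤ ‖z‖ →
      Φ z = ∑' n : ℕ, (vp (n + 1) / (n + 1)) * z ^ (-(n + 1 : ℤ)))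
    (hΨ : ∀ z : ℂ, ‖z‖ ≤ σ →
      Ψ z = ∑' n : ℕ, (vm (n + 1) / (n + 1)) * z ^ (n + 1)) :
    Summable (fun n : ℕ => tp (n + 1) * vp (n + 1)) ∧
    Summable (fun n : ℕ => tm (n + 1) * vm (n + 1)) ∧
    (2 * (2 * Real.pi * Complex.I))⁻¹ *
        ∫ θ in (0:ℝ)..(2 * Real.pi),
          (deriv (fun u => H u (f θ)) (g θ) * deriv g θ * Φ (g θ)
            + deriv (H (g θ)) (f θ) * deriv f θ * Ψ (f θ))
      = (1 / 2) * ∑' n : ℕ, (tp (n + 1) * vp (n + 1) + tm (n + 1) * vm (n + 1)) := by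
  have hπ : (0:ℝ) < Real.pi := Real.pi_pos
  have h02π : (0:ℝ) ≤ 2 * Real.pi := by positivity
  have h2πi : (2 * Real.pi * Complex.I : ℂ) ≠ 0 := by
    simp [Complex.I_ne_zero, Real.pi_ne_zero, Complex.ofReal_ne_zero]
  have hσ0 : 0 < σ := lt_of_le_of_lt (norm_nonneg _) (hfσ 0)
  -- the two "coefficient" functions
  set P : ℝ → ℂ := fun θ => deriv (fun u => H u (f θ)) (g θ) * deriv g θ with hPdef
  set Q : ℝ → ℂ := fun θ => deriv (H (g θ)) (f θ) * deriv f θ with hQdef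
  have hPcont : Continuous P :=
    (cont_param_deriv hDopen hH hg.continuous hf.continuous hmem).mul
      (hg.continuous_deriv le_rfl)
  have hQcont : Continuous Q := by
    have hswapdiff : DifferentiableOn ℂ (fun p : ℂ × ℂ => H p.2 p.1) (Prod.swap ⁻¹' D) :=
      hH.comp ((differentiable_snd.prodMk differentiable_fst).differentiableOn)
        (fun p hp => hp)
    have h1 := cont_param_deriv (hDopen.preimage continuous_swap) hswapdiff
      hf.continuous hg.continuous (fun θ => hmem θ)
    exact h1.mul (hf.continuous_deriv le_rfl)
  -- the two series of functions
  set a : ℕ → ℝ → ℂ := fun n θ => P θ * ((vp (n + 1) / (n + 1)) * g θ ^ (-(n + 1 : ℤ))) with hadef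
  set c : ℕ → ℝ → ℂ := fun n θ => Q θ * ((vm (n + 1) / (n + 1)) * f θ ^ (n + 1)) with hcdef
  set bp : ℕ → ℝ := fun n => ‖vp (n + 1)‖ * ρ ^ (-(n + 1 : ℤ)) with hbpdef
  set bm : ℕ → ℝ := fun n => ‖vm (n + 1)‖ * σ ^ (n + 1) with hbmdef
  have hbp0 : ∀ n, 0 ≤ bp n := fun n => by positivity
  have hbm0 : ∀ n, 0 ≤ bm n := fun n => by positivity
  have hcoef : ∀ n : ℕ, ‖(vp (n + 1) / (n + 1) : ℂ)‖ ≤ ‖vp (n + 1)‖ := by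
    intro n
    rw [norm_div, show ((n : ℂ) + 1) = ((n + 1 : ℕ) : ℂ) by push_cast; ring,
      Complex.norm_natCast]
    exact div_le_self (norm_nonneg _)
      (by exact_mod_cast Nat.one_le_iff_ne_zero.2 (Nat.succ_ne_zero n))
  have hcoefm : ∀ n : ℕ, ‖(vm (n + 1) / (n + 1) : ℂ)‖ ≤ ‖vm (n + 1)‖ := by
    intro n
    rw [norm_div, show ((n : ℂ) + 1) = ((n + 1 : ℕ) : ℂ) by push_cast; ring,
      Complex.norm_natCast]
    exact div_le_self (norm_nonneg _)
      (by exact_mod_cast Nat.one_le_iff_ne_zero.2 (Nat.succ_ne_zero n))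
  -- pointwise norm bounds
  have hAbd : ∀ θ : ℝ, ∀ n : ℕ, ‖a n θ‖ ≤ ‖P θ‖ * bp n := by
    intro θ n
    have hzp : ‖g θ ^ (-(n + 1 : ℤ))‖ ≤ ρ ^ (-(n + 1 : ℤ)) := by
      rw [norm_zpow]
      have he : (-(n + 1 : ℤ)) = -((n + 1 : ℕ) : ℤ) := by push_cast; ring
      rw [he, zpow_neg, zpow_neg, zpow_natCast, zpow_natCast]
      exact inv_anti₀ (pow_pos hρ0 _)
        (pow_le_pow_left₀ hρ0.le (hρg θ).le _)
    calc ‖a n θ‖ = ‖P θ‖ * (‖(vp (n + 1) / (n + 1) : ℂ)‖ * ‖g θ ^ (-(n + 1 : ℤ))‖) := by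
          simp [hadef, norm_mul]
      _ ≤ ‖P θ‖ * (‖vp (n + 1)‖ * ρ ^ (-(n + 1 : ℤ))) :=
          mul_le_mul_of_nonneg_left
            (mul_le_mul (hcoef n) hzp (norm_nonneg _) (norm_nonneg _))
            (norm_nonneg _)
      _ = ‖P θ‖ * bp n := rfl
  have hCbd : ∀ θ : ℝ, ∀ n : ℕ, ‖c n θ‖ ≤ ‖Q θ‖ * bm n := by
    intro θ n
    have hzp : ‖f θ ^ (n + 1)‖ ≤ σ ^ (n + 1) := by
      rw [norm_pow]
      exact pow_le_pow_left₀ (norm_nonneg _) (hfσ θ).le _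
    calc ‖c n θ‖ = ‖Q θ‖ * (‖(vm (n + 1) / (n + 1) : ℂ)‖ * ‖f θ ^ (n + 1)‖) := by
          simp [hcdef, norm_mul]
      _ ≤ ‖Q θ‖ * (‖vm (n + 1)‖ * σ ^ (n + 1)) :=
          mul_le_mul_of_nonneg_left
            (mul_le_mul (hcoefm n) hzp (norm_nonneg _) (norm_nonneg _))
            (norm_nonneg _)
      _ = ‖Q θ‖ * bm n := rfl
  -- pointwise summability
  have hsa : ∀ θ : ℝ, Summable fun n => a n θ := fun θ =>
    Summable.of_norm_bounded (hvpsum.mul_left ‖P θ‖) (hAbd θ)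
  have hsc : ∀ θ : ℝ, Summable fun n => c n θ := fun θ =>
    Summable.of_norm_bounded (hvmsum.mul_left ‖Q θ‖) (hCbd θ)
  -- pointwise identity for the integrand
  have hptwise : ∀ θ : ℝ,
      (deriv (fun u => H u (f θ)) (g θ) * deriv g θ * Φ (g θ)
        + deriv (H (g θ)) (f θ) * deriv f θ * Ψ (f θ))
      = ∑' n : ℕ, (a n θ + c n θ) := by
    intro θ
    rw [Summable.tsum_add (hsa θ) (hsc θ)]
    rw [hΦ _ (hρg θ).le, hΨ _ (hfσ θ).le]
    rw [← tsum_mul_left (a := P θ), ← tsum_mul_left (a := Q θ)]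
  -- continuity / integrability of each term
  have hacont : ∀ n, Continuous (a n) := fun n =>
    hPcont.mul (continuous_const.mul
      (hg.continuous.zpow₀ _ (fun θ => Or.inl (hg0 θ))))
  have hccont : ∀ n, Continuous (c n) := fun n =>
    hQcont.mul (continuous_const.mul (hf.continuous.pow _))
  have haint : ∀ n, IntegrableOn (a n) (Set.Ioc (0:ℝ) (2*Real.pi)) := fun n =>
    (hacont n).integrableOn_Ioc
  have hcint : ∀ n, IntegrableOn (c n) (Set.Ioc (0:ℝ) (2*Real.pi)) := fun n =>
    (hccont n).integrableOn_Ioc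
  -- bounds for P, Q on the interval
  obtain ⟨Ca, hCa⟩ := isCompact_Icc.exists_bound_of_continuousOn
    (s := Set.Icc (0:ℝ) (2*Real.pi)) hPcont.continuousOn
  obtain ⟨Cc, hCc⟩ := isCompact_Icc.exists_bound_of_continuousOn
    (s := Set.Icc (0:ℝ) (2*Real.pi)) hQcont.continuousOn
  have hCa0 : 0 ≤ Ca := le_trans (norm_nonneg _) (hCa 0 ⟨le_refl _, h02π⟩)
  have hCc0 : 0 ≤ Cc := le_trans (norm_nonneg _) (hCc 0 ⟨le_refl _, h02π⟩)
  -- value of the individual integrals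
  have hIa : ∀ n : ℕ, (∫ θ in (0:ℝ)..(2*Real.pi), a n θ)
      = (2 * Real.pi * Complex.I) * (tp (n + 1) * vp (n + 1)) := by
    intro n
    have hn1 : ((n : ℂ) + 1) ≠ 0 := Nat.cast_add_one_ne_zero n
    have h1 : (∫ θ in (0:ℝ)..(2*Real.pi), a n θ)
        = (vp (n + 1) / (n + 1)) *
          ∫ θ in (0:ℝ)..(2*Real.pi),
            deriv (fun u => H u (f θ)) (g θ) * g θ ^ (-((n + 1 : ℕ) : ℤ)) * deriv g θ := by
      rw [← intervalIntegral.integral_const_mul]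
      refine intervalIntegral.integral_congr fun θ _ => ?_
      simp only [hadef, hPdef]
      push_cast
      ring
    have h2 := htp (n + 1) (Nat.le_add_left 1 n)
    rw [h1, h2]
    push_cast
    field_simp
  have hIc : ∀ n : ℕ, (∫ θ in (0:ℝ)..(2*Real.pi), c n θ)
      = (2 * Real.pi * Complex.I) * (tm (n + 1) * vm (n + 1)) := by
    intro n
    have hn1 : ((n : ℂ) + 1) ≠ 0 := Nat.cast_add_one_ne_zero n
    have h1 : (∫ θ in (0:ℝ)..(2*Real.pi), c n θ)
        = (vm (n + 1) / (n + 1)) *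
          ∫ θ in (0:ℝ)..(2*Real.pi),
            deriv (H (g θ)) (f θ) * f θ ^ (((n + 1 : ℕ)) : ℤ) * deriv f θ := by
      rw [← intervalIntegral.integral_const_mul]
      refine intervalIntegral.integral_congr fun θ _ => ?_
      simp only [hcdef, hQdef, zpow_natCast]
      push_cast
      ring
    have h2 := htm (n + 1) (Nat.le_add_left 1 n)
    rw [h1, h2]
    push_cast
    field_simp
  -- summability of the series tp·vp and tm·vm
  have hnormIa : ∀ n : ℕ, ‖∫ θ in (0:ℝ)..(2*Real.pi), a n θ‖ ≤ (Ca * bp n) * (2*Real.pi) := by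
    intro n
    have hb : ∀ θ ∈ Set.uIoc (0:ℝ) (2*Real.pi), ‖a n θ‖ ≤ Ca * bp n := by
      intro θ hθ
      rw [Set.uIoc_of_le h02π] at hθ
      exact le_trans (hAbd θ n) (mul_le_mul_of_nonneg_right
        (hCa θ (Set.Ioc_subset_Icc_self hθ)) (hbp0 n))
    calc ‖∫ θ in (0:ℝ)..(2*Real.pi), a n θ‖ ≤ (Ca * bp n) * |2*Real.pi - 0| :=
          intervalIntegral.norm_integral_le_of_norm_le_const hb
      _ = (Ca * bp n) * (2*Real.pi) := by rw [sub_zero, abs_of_nonneg h02π]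
  have hnormIc : ∀ n : ℕ, ‖∫ θ in (0:ℝ)..(2*Real.pi), c n θ‖ ≤ (Cc * bm n) * (2*Real.pi) := by
    intro n
    have hb : ∀ θ ∈ Set.uIoc (0:ℝ) (2*Real.pi), ‖c n θ‖ ≤ Cc * bm n := by
      intro θ hθ
      rw [Set.uIoc_of_le h02π] at hθ
      exact le_trans (hCbd θ n) (mul_le_mul_of_nonneg_right
        (hCc θ (Set.Ioc_subset_Icc_self hθ)) (hbm0 n))
    calc ‖∫ θ in (0:ℝ)..(2*Real.pi), c n θ‖ ≤ (Cc * bm n) * |2*Real.pi - 0| :=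
          intervalIntegral.norm_integral_le_of_norm_le_const hb
      _ = (Cc * bm n) * (2*Real.pi) := by rw [sub_zero, abs_of_nonneg h02π]
  have hsumtp : Summable (fun n : ℕ => tp (n + 1) * vp (n + 1)) := by
    refine Summable.of_norm_bounded (g := fun n => (‖(2 * Real.pi * Complex.I : ℂ)⁻¹‖ * (Ca * (2*Real.pi))) * bp n)
      (hvpsum.mul_left _) (fun n => ?_)
    have he : tp (n + 1) * vp (n + 1)
        = (2 * Real.pi * Complex.I)⁻¹ * ∫ θ in (0:ℝ)..(2*Real.pi), a n θ := by
      rw [hIa n]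
      field_simp
    rw [he, norm_mul]
    calc ‖(2 * Real.pi * Complex.I : ℂ)⁻¹‖ * ‖∫ θ in (0:ℝ)..(2*Real.pi), a n θ‖
        ≤ ‖(2 * Real.pi * Complex.I : ℂ)⁻¹‖ * ((Ca * bp n) * (2*Real.pi)) := by
          gcongr
          exact hnormIa n
      _ = (‖(2 * Real.pi * Complex.I : ℂ)⁻¹‖ * (Ca * (2*Real.pi))) * bp n := by ring
  have hsumtm : Summable (fun n : ℕ => tm (n + 1) * vm (n + 1)) := by
    refine Summable.of_norm_bounded (g := fun n => (‖(2 * Real.pi * Complex.I : ℂ)⁻¹‖ * (Cc * (2*Real.pi))) * bm n)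
      (hvmsum.mul_left _) (fun n => ?_)
    have he : tm (n + 1) * vm (n + 1)
        = (2 * Real.pi * Complex.I)⁻¹ * ∫ θ in (0:ℝ)..(2*Real.pi), c n θ := by
      rw [hIc n]
      field_simp
    rw [he, norm_mul]
    calc ‖(2 * Real.pi * Complex.I : ℂ)⁻¹‖ * ‖∫ θ in (0:ℝ)..(2*Real.pi), c n θ‖
        ≤ ‖(2 * Real.pi * Complex.I : ℂ)⁻¹‖ * ((Cc * bm n) * (2*Real.pi)) := by
          gcongr
          exact hnormIc n
      _ = (‖(2 * Real.pi * Complex.I : ℂ)⁻¹‖ * (Cc * (2*Real.pi))) * bm n := by ring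
  refine ⟨hsumtp, hsumtm, ?_⟩
  -- summability of the integrals of norms, for the sum-integral swap
  have hswap_sum : Summable fun n : ℕ =>
      ∫ θ in Set.Ioc (0:ℝ) (2*Real.pi), ‖a n θ + c n θ‖ := by
    refine Summable.of_nonneg_of_le
      (fun n => integral_nonneg (fun θ => norm_nonneg _))
      (fun n => ?_)
      ((hvpsum.mul_left (Ca * (2*Real.pi))).add
        (hvmsum.mul_left (Cc * (2*Real.pi))))
    have h1 : ∫ θ in Set.Ioc (0:ℝ) (2*Real.pi), ‖a n θ + c n θ‖
        ≤ ((Ca * bp n) + (Cc * bm n)) * (2*Real.pi) := by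
      refine setIntegral_norm_le_const (((hacont n).add (hccont n)).norm.integrableOn_Ioc) ?_
      intro θ hθ
      calc ‖a n θ + c n θ‖ ≤ ‖a n θ‖ + ‖c n θ‖ := norm_add_le _ _
        _ ≤ (Ca * bp n) + (Cc * bm n) := by
            refine add_le_add ?_ ?_
            · exact le_trans (hAbd θ n) (mul_le_mul_of_nonneg_right
                (hCa θ (Set.Ioc_subset_Icc_self hθ)) (hbp0 n))
            · exact le_trans (hCbd θ n) (mul_le_mul_of_nonneg_right
                (hCc θ (Set.Ioc_subset_Icc_self hθ)) (hbm0 n))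
    calc ∫ θ in Set.Ioc (0:ℝ) (2*Real.pi), ‖a n θ + c n θ‖
        ≤ ((Ca * bp n) + (Cc * bm n)) * (2*Real.pi) := h1
      _ = Ca * (2*Real.pi) * bp n + Cc * (2*Real.pi) * bm n := by ring
  -- swap integral with sum
  have hswap := MeasureTheory.integral_tsum_of_summable_integral_norm
    (μ := volume.restrict (Set.Ioc (0:ℝ) (2*Real.pi)))
    (F := fun n θ => a n θ + c n θ)
    (fun n => (haint n).add (hcint n)) hswap_sum
  -- put everything together
  have hmain : (∫ θ in (0:ℝ)..(2*Real.pi),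
      (deriv (fun u => H u (f θ)) (g θ) * deriv g θ * Φ (g θ)
        + deriv (H (g θ)) (f θ) * deriv f θ * Ψ (f θ)))
      = (2 * Real.pi * Complex.I) *
        ∑' n : ℕ, (tp (n + 1) * vp (n + 1) + tm (n + 1) * vm (n + 1)) := by
    have e1 : (∫ θ in (0:ℝ)..(2*Real.pi),
        (deriv (fun u => H u (f θ)) (g θ) * deriv g θ * Φ (g θ)
          + deriv (H (g θ)) (f θ) * deriv f θ * Ψ (f θ)))
        = ∫ θ in Set.Ioc (0:ℝ) (2*Real.pi), ∑' n : ℕ, (a n θ + c n θ) := by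
      rw [intervalIntegral.integral_of_le h02π]
      exact setIntegral_congr_fun measurableSet_Ioc (fun θ _ => hptwise θ)
    rw [e1, ← hswap]
    have e2 : ∀ n : ℕ, (∫ θ in Set.Ioc (0:ℝ) (2*Real.pi), (a n θ + c n θ))
        = (2 * Real.pi * Complex.I) *
          (tp (n + 1) * vp (n + 1) + tm (n + 1) * vm (n + 1)) := by
      intro n
      rw [← intervalIntegral.integral_of_le h02π,
        intervalIntegral.integral_add
          ((hacont n).intervalIntegrable _ _)
          ((hccont n).intervalIntegrable _ _),
        hIa n, hIc n]
      ring
    calc (∑' n : ℕ, ∫ θ in Set.Ioc (0:ℝ) (2*Real.pi), (a n θ + c n θ))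
        = ∑' n : ℕ, (2 * Real.pi * Complex.I) *
            (tp (n + 1) * vp (n + 1) + tm (n + 1) * vm (n + 1)) := tsum_congr e2
      _ = (2 * Real.pi * Complex.I) *
            ∑' n : ℕ, (tp (n + 1) * vp (n + 1) + tm (n + 1) * vm (n + 1)) := tsum_mul_left
  rw [hmain]
  field_simp
end

section
/- Let g : ℝ → ℂ∖{0} be C¹ and 2π-periodic and define f(θ) = 1/conj(g(θ)). Let ℋ be holomorphic on an open set D ⊆ (ℂ∖{0})² containing all points (g(θ), f(θ)), and assume the reality condition conj( ∂_{z₁}ℋ(g(θ), f(θ)) ) = −f(θ)²·∂_{z₂}ℋ(g(θ), f(θ)) for all θ (this holds whenever the function 𝒰(z) = ℋ(z, 1/conj(z)) is real-valued on a neighbourhood of the curve traced by g). Define t₀ = (1/(2πi))∫₀^{2π} ∂_{z₁}ℋ(g,f)·g′ dθ and, for n ≥ 1, t_n = (1/(2πin))∫₀^{2π} ∂_{z₁}ℋ(g,f)·g^{−n}·g′ dθ, t_{−n} = (1/(2πin))∫₀^{2π} ∂_{z₂}ℋ(g,f)·f^{n}·f′ dθ, v_n = (1/(2πi))∫₀^{2π}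 ∂_{z₁}ℋ(g,f)·g^{n}·g′ dθ, v_{−n} = (1/(2πi))∫₀^{2π} ∂_{z₂}ℋ(g,f)·f^{−n}·f′ dθ. Then t_{−n} = −conj(t_n) and v_{−n} = −conj(v_n) for every n ≥ 1, and t₀ is real. -/
open MeasureTheory intervalIntegral

private lemma interval_integral_conj (φ : ℝ → ℂ) (a b : ℝ) :
    (∫ θ in a..b, starRingEnd ℂ (φ θ)) = starRingEnd ℂ (∫ θ in a..b, φ θ) := by
  simp only [intervalIntegral, integral_conj, map_sub]

private lemma interval_integrable_conj {φ : ℝ → ℂ} {a b : ℝ}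
    (h : IntervalIntegrable φ MeasureTheory.volume a b) :
    IntervalIntegrable (fun θ => starRingEnd ℂ (φ θ)) MeasureTheory.volume a b := by
  have h1 : ∀ μ : Measure ℝ, Integrable φ μ → Integrable (fun θ => starRingEnd ℂ (φ θ)) μ := by
    intro μ hμ
    simpa [Complex.conjCLE_apply] using
      (Complex.conjCLE : ℂ ≃L[ℝ] ℂ).toContinuousLinearMap.integrable_comp hμ
  exact ⟨h1 _ h.1, h1 _ h.2⟩

/-- Reduction to the subspace `Σ` (Zabrodin's case): if `f(θ) = 1/conj(g(θ))` and the
reality condition `conj(∂_{z₁}ℋ(g,f)) = -f²·∂_{z₂}ℋ(g,f)` holds on the curve, then the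
Toda times and dual variables satisfy `t_{-n} = -conj(t_n)`, `v_{-n} = -conj(v_n)` for
`n ≥ 1` and `t₀` is real. -/
theorem stmt_12
    (g f : ℝ → ℂ) (hg : ContDiff ℝ 1 g) (hg0 : ∀ θ : ℝ, g θ ≠ 0)
    (hgper : Function.Periodic g (2 * Real.pi))
    (hf : ∀ θ : ℝ, f θ = (starRingEnd ℂ (g θ))⁻¹)
    (D : Set (ℂ × ℂ)) (hDopen : IsOpen D) (hD0 : ∀ p ∈ D, p.1 ≠ 0 ∧ p.2 ≠ 0)
    (hmem : ∀ θ : ℝ, (g θ, f θ) ∈ D)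
    (H : ℂ → ℂ → ℂ)
    (hH : DifferentiableOn ℂ (fun p : ℂ × ℂ => H p.1 p.2) D)
    (hreal : ∀ θ : ℝ,
      starRingEnd ℂ (deriv (fun u => H u (f θ)) (g θ))
        = -(f θ) ^ 2 * deriv (H (g θ)) (f θ))
    (t₀ : ℂ) (tp tm vp vm : ℕ → ℂ)
    (ht₀ : t₀ = (2 * Real.pi * Complex.I)⁻¹ *
      ∫ θ in (0:ℝ)..(2 * Real.pi), deriv (fun u => H u (f θ)) (g θ) * deriv g θ)
    (htp : ∀ n : ℕ, 1 ≤ n → tp n = (2 * Real.pi * Complex.I * n)⁻¹ *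
      ∫ θ in (0:ℝ)..(2 * Real.pi),
        deriv (fun u => H u (f θ)) (g θ) * g θ ^ (-(n:ℤ)) * deriv g θ)
    (htm : ∀ n : ℕ, 1 ≤ n → tm n = (2 * Real.pi * Complex.I * n)⁻¹ *
      ∫ θ in (0:ℝ)..(2 * Real.pi),
        deriv (H (g θ)) (f θ) * f θ ^ (n:ℤ) * deriv f θ)
    (hvp : ∀ n : ℕ, 1 ≤ n → vp n = (2 * Real.pi * Complex.I)⁻¹ *
      ∫ θ in (0:ℝ)..(2 * Real.pi),
        deriv (fun u => H u (f θ)) (g θ) * g θ ^ (n:ℤ) * deriv g θ)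
    (hvm : ∀ n : ℕ, 1 ≤ n → vm n = (2 * Real.pi * Complex.I)⁻¹ *
      ∫ θ in (0:ℝ)..(2 * Real.pi),
        deriv (H (g θ)) (f θ) * f θ ^ (-(n:ℤ)) * deriv f θ) :
    (∀ n : ℕ, 1 ≤ n → tm n = -starRingEnd ℂ (tp n) ∧ vm n = -starRingEnd ℂ (vp n)) ∧
      starRingEnd ℂ t₀ = t₀ := by
  have hcg0 : ∀ θ, starRingEnd ℂ (g θ) ≠ 0 := fun θ => by
    simpa using hg0 θ
  have hf0 : ∀ θ, f θ ≠ 0 := fun θ => by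
    rw [hf θ]; exact inv_ne_zero (hcg0 θ)
  have hconj : ∀ θ, starRingEnd ℂ (g θ) = (f θ)⁻¹ := fun θ => by
    rw [hf θ, inv_inv]
  -- derivative of g
  have hgd : ∀ θ, HasDerivAt g (deriv g θ) θ := fun θ =>
    ((hg.differentiable one_ne_zero) θ).hasDerivAt
  -- derivative of f
  have hfd : ∀ θ : ℝ,
      HasDerivAt f (-(f θ) ^ 2 * starRingEnd ℂ (deriv g θ)) θ := by
    intro θ
    have hstar : HasDerivAt (fun t => starRingEnd ℂ (g t)) (starRingEnd ℂ (deriv g θ)) θ := by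
      have := (hgd θ).star
      simp only [← starRingEnd_apply] at this
      exact this
    have hdiv := (hasDerivAt_const θ (1:ℂ)).fun_div hstar (hcg0 θ)
    have h' : HasDerivAt (fun t => (starRingEnd ℂ (g t))⁻¹)
        ((0 * starRingEnd ℂ (g θ) - 1 * starRingEnd ℂ (deriv g θ))
          / starRingEnd ℂ (g θ) ^ 2) θ := by
      simpa [one_div] using hdiv
    have key : -(f θ) ^ 2 * starRingEnd ℂ (deriv g θ)
        = (0 * starRingEnd ℂ (g θ) - 1 * starRingEnd ℂ (deriv g θ))
          / starRingEnd ℂ (g θ) ^ 2 := by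
      rw [hconj θ, inv_pow, div_eq_mul_inv, inv_inv]
      ring
    rw [key, funext hf]
    exact h'
  have hderivf : ∀ θ, deriv f θ = -(f θ) ^ 2 * starRingEnd ℂ (deriv g θ) := fun θ =>
    (hfd θ).deriv
  -- two-variable setup
  set F : ℂ × ℂ → ℂ := fun p => H p.1 p.2 with hF
  have hFθ : ∀ θ, HasFDerivAt F (fderiv ℂ F (g θ, f θ)) (g θ, f θ) := fun θ =>
    (hH.differentiableAt (hDopen.mem_nhds (hmem θ))).hasFDerivAt
  have h1 : ∀ θ, HasDerivAt (fun u => H u (f θ))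
      (fderiv ℂ F (g θ, f θ) ((1 : ℂ), (0 : ℂ))) (g θ) := by
    intro θ
    have hcurve : HasDerivAt (fun u : ℂ => (u, f θ)) ((1 : ℂ), (0 : ℂ)) (g θ) :=
      (hasDerivAt_id (g θ)).prodMk (hasDerivAt_const (g θ) (f θ))
    exact (hFθ θ).comp_hasDerivAt (g θ) hcurve
  have h2 : ∀ θ, HasDerivAt (H (g θ))
      (fderiv ℂ F (g θ, f θ) ((0 : ℂ), (1 : ℂ))) (f θ) := by
    intro θ
    have hcurve : HasDerivAt (fun w : ℂ => (g θ, w)) ((0 : ℂ), (1 : ℂ)) (f θ) :=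
      (hasDerivAt_const (f θ) (g θ)).prodMk (hasDerivAt_id (f θ))
    exact (hFθ θ).comp_hasDerivAt (f θ) hcurve
  -- key pointwise conjugation identity (general exponent)
  have keyT : ∀ (n : ℤ) (θ : ℝ),
      deriv (H (g θ)) (f θ) * f θ ^ n * deriv f θ
        = starRingEnd ℂ (deriv (fun u => H u (f θ)) (g θ) * g θ ^ (-n) * deriv g θ) := by
    intro n θ
    rw [map_mul, map_mul, hreal θ, map_zpow₀, hconj θ, hderivf θ]
    have : ((f θ)⁻¹) ^ (-n) = f θ ^ n := by
      rw [inv_zpow, ← zpow_neg, neg_neg]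
    rw [this]
    ring
  have keyC : ∀ θ : ℝ,
      starRingEnd ℂ (deriv (fun u => H u (f θ)) (g θ) * deriv g θ)
        = deriv (H (g θ)) (f θ) * deriv f θ := by
    intro θ
    rw [map_mul, hreal θ, hderivf θ]
    ring
  -- conjugate of the constants
  have hconst : ∀ z : ℂ, z ≠ 0 → True := fun _ _ => trivial
  constructor
  · -- the t and v identities
    intro n hn
    have hIconjT := interval_integral_conj
      (fun θ => deriv (fun u => H u (f θ)) (g θ) * g θ ^ (-(n:ℤ)) * deriv g θ) 0 (2 * Real.pi)
    have hIconjV := interval_integral_conj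
      (fun θ => deriv (fun u => H u (f θ)) (g θ) * g θ ^ ((n:ℤ)) * deriv g θ) 0 (2 * Real.pi)
    have hcn : starRingEnd ℂ ((2 * (Real.pi : ℂ) * Complex.I * n))⁻¹
        = -((2 * (Real.pi : ℂ) * Complex.I * n))⁻¹ := by
      rw [map_inv₀, ← inv_neg]
      congr 1
      simp only [map_mul, Complex.conj_I, Complex.conj_ofReal, map_ofNat, map_natCast]
      ring
    have hc : starRingEnd ℂ ((2 * (Real.pi : ℂ) * Complex.I))⁻¹
        = -((2 * (Real.pi : ℂ) * Complex.I))⁻¹ := by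
      rw [map_inv₀, ← inv_neg]
      congr 1
      simp only [map_mul, Complex.conj_I, Complex.conj_ofReal, map_ofNat]
      ring
    constructor
    · rw [htm n hn, htp n hn]
      have : (∫ θ in (0:ℝ)..(2 * Real.pi),
          deriv (H (g θ)) (f θ) * f θ ^ (n:ℤ) * deriv f θ)
          = starRingEnd ℂ (∫ θ in (0:ℝ)..(2 * Real.pi),
            deriv (fun u => H u (f θ)) (g θ) * g θ ^ (-(n:ℤ)) * deriv g θ) := by
        rw [← hIconjT]
        exact intervalIntegral.integral_congr (fun θ _ => keyT (n : ℤ) θ)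
      rw [this, map_mul, hcn]
      ring
    · rw [hvm n hn, hvp n hn]
      have : (∫ θ in (0:ℝ)..(2 * Real.pi),
          deriv (H (g θ)) (f θ) * f θ ^ (-(n:ℤ)) * deriv f θ)
          = starRingEnd ℂ (∫ θ in (0:ℝ)..(2 * Real.pi),
            deriv (fun u => H u (f θ)) (g θ) * g θ ^ ((n:ℤ)) * deriv g θ) := by
        rw [← hIconjV]
        refine intervalIntegral.integral_congr (fun θ _ => ?_)
        simpa using keyT (-(n : ℤ)) θ
      rw [this, map_mul, hc]
      ring
  · -- t₀ is real
    set A : ℝ → ℂ := fun θ => deriv (fun u => H u (f θ)) (g θ) * deriv g θ with hA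
    set B : ℝ → ℂ := fun θ => deriv (H (g θ)) (f θ) * deriv f θ with hB
    have hBconj : B = fun θ => starRingEnd ℂ (A θ) := by
      funext θ; rw [hA, hB]; exact (keyC θ).symm
    by_cases hInt : IntervalIntegrable A MeasureTheory.volume 0 (2 * Real.pi)
    · have hIntB : IntervalIntegrable B MeasureTheory.volume 0 (2 * Real.pi) := by
        rw [hBconj]; exact interval_integrable_conj hInt
      -- chain rule along the curve
      have hφ : ∀ θ : ℝ, HasDerivAt (fun t => F (g t, f t)) (A θ + B θ) θ := by
        intro θ
        have hcurve : HasDerivAt (fun t => (g t, f t))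
            ((deriv g θ, deriv f θ)) θ := by
          rw [hderivf θ]
          exact (hgd θ).prodMk (hfd θ)
        have hcomp : HasDerivAt (fun t => F (g t, f t))
            (((fderiv ℂ F (g θ, f θ)).restrictScalars ℝ) ((deriv g θ, deriv f θ))) θ :=
          HasFDerivAt.comp_hasDerivAt (l := F) θ ((hFθ θ).restrictScalars ℝ) hcurve
        have hsplit : ((fderiv ℂ F (g θ, f θ)).restrictScalars ℝ) ((deriv g θ, deriv f θ))
            = A θ + B θ := by
          show fderiv ℂ F (g θ, f θ) ((deriv g θ, deriv f θ)) = A θ + B θ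
          have hdecomp : ((deriv g θ, deriv f θ) : ℂ × ℂ)
              = deriv g θ • ((1 : ℂ), (0 : ℂ)) + deriv f θ • ((0 : ℂ), (1 : ℂ)) := by
            simp [Prod.ext_iff]
          rw [hdecomp, map_add, _root_.map_smul, _root_.map_smul, smul_eq_mul, smul_eq_mul]
          simp only [hA, hB]
          rw [(h1 θ).deriv, (h2 θ).deriv]
          ring
        rw [hsplit] at hcomp
        exact hcomp
      have hftc : (∫ θ in (0:ℝ)..(2 * Real.pi), (A θ + B θ))
          = F (g (2 * Real.pi), f (2 * Real.pi)) - F (g 0, f 0) :=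
        intervalIntegral.integral_eq_sub_of_hasDerivAt
          (fun θ _ => hφ θ) (hInt.add hIntB)
      have hper : g (2 * Real.pi) = g 0 := by
        have := hgper 0
        simpa using this
      have hperf : f (2 * Real.pi) = f 0 := by rw [hf, hf, hper]
      have hzero : (∫ θ in (0:ℝ)..(2 * Real.pi), (A θ + B θ)) = 0 := by
        rw [hftc, hper, hperf, sub_self]
      have hsum : (∫ θ in (0:ℝ)..(2 * Real.pi), A θ)
          + (∫ θ in (0:ℝ)..(2 * Real.pi), B θ) = 0 := by
        rw [← intervalIntegral.integral_add hInt hIntB]; exact hzero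
      have hconjI : starRingEnd ℂ (∫ θ in (0:ℝ)..(2 * Real.pi), A θ)
          = ∫ θ in (0:ℝ)..(2 * Real.pi), B θ := by
        rw [← interval_integral_conj A 0 (2 * Real.pi), hBconj]
      have hc : starRingEnd ℂ ((2 * (Real.pi : ℂ) * Complex.I))⁻¹
          = -((2 * (Real.pi : ℂ) * Complex.I))⁻¹ := by
        rw [map_inv₀, ← inv_neg]
        congr 1
        simp only [map_mul, Complex.conj_I, Complex.conj_ofReal, map_ofNat]
        ring
      rw [ht₀]
      rw [map_mul, hc, hconjI]
      have : (∫ θ in (0:ℝ)..(2 * Real.pi), B θ)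
          = -(∫ θ in (0:ℝ)..(2 * Real.pi), A θ) := by linear_combination hsum
      rw [this]
      ring
    · rw [ht₀]
      rw [intervalIntegral.integral_undef hInt]
      simp
end

section
/- Let 0 < r < 1, let A = { w ∈ ℂ : r < |w| < 1/r }, and let g, f : A → ℂ∖{0} be holomorphic and satisfy the reflection symmetries conj(g(conj(w))) = g(w) and conj(f(conj(w))) = f(w) on A. Let ℋ be holomorphic on an open set D ⊆ (ℂ∖{0})² containing (g(w), f(w)) for |w| = 1, with D invariant under componentwise complex conjugation and conj( ℋ(conj(z₁), conj(z₂)) ) = ℋ(z₁, z₂) on D. Then t₀ = (1/(2πi))∮_{S¹} ∂_{z₁}ℋ(g,f)·g′(w) dw is real, and for every n ≥ 1 the numbers t_n = (1/(2πin))∮_{S¹} ∂_{z₁}ℋ(g,f)·g^{−n}·g′ dw, t_{−n} = (1/(2πin))∮_{S¹} ∂_{z₂}ℋ(g,f)·f^{n}·f′ dw, v_n = (1/(2πi))∮_{S¹} ∂_{z₁}ℋ(g,f)·g^{n}·g′ dw and v_{−n} = (1/(2πi))∮_{S¹} ∂_{z₂}ℋ(g,f)·f^{−n}·f′ dw are all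 real. -/
open Complex Filter Set MeasureTheory intervalIntegral Topology

lemma hasDerivAt_conj_conj {g : ℂ → ℂ} {d z : ℂ}
    (h : HasDerivAt g d (starRingEnd ℂ z)) :
    HasDerivAt (fun w => starRingEnd ℂ (g (starRingEnd ℂ w))) (starRingEnd ℂ d) z := by
  rw [hasDerivAt_iff_tendsto_slope] at h ⊢
  have hconj : Filter.Tendsto (starRingEnd ℂ) (𝓝[≠] z) (𝓝[≠] (starRingEnd ℂ z)) := by
    refine tendsto_nhdsWithin_of_tendsto_nhds_of_eventually_within _
      ((Complex.continuous_conj.tendsto z).mono_left nhdsWithin_le_nhds) ?_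
    filter_upwards [self_mem_nhdsWithin] with w hw
    simp only [Set.mem_compl_iff, Set.mem_singleton_iff] at hw ⊢
    exact fun hc => hw (by simpa using congrArg (starRingEnd ℂ) hc)
  have h1 : Filter.Tendsto (fun w => starRingEnd ℂ (slope g (starRingEnd ℂ z) (starRingEnd ℂ w)))
      (𝓝[≠] z) (𝓝 (starRingEnd ℂ d)) :=
    (Complex.continuous_conj.tendsto d).comp (h.comp hconj)
  refine h1.congr fun w => ?_
  simp [slope_def_field, map_div₀]

lemma deriv_conj_symm' {G₁ G₂ : ℂ → ℂ} {z : ℂ}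
    (hG₂ : DifferentiableAt ℂ G₂ (starRingEnd ℂ z))
    (hsym : ∀ᶠ w in 𝓝 z, starRingEnd ℂ (G₂ (starRingEnd ℂ w)) = G₁ w) :
    starRingEnd ℂ (deriv G₂ (starRingEnd ℂ z)) = deriv G₁ z := by
  have h1 := hasDerivAt_conj_conj hG₂.hasDerivAt
  exact ((h1.congr_of_eventuallyEq (hsym.mono fun w hw => hw.symm)).deriv).symm

lemma intervalIntegral_conj (f : ℝ → ℂ) (a b : ℝ) :
    (∫ x in a..b, starRingEnd ℂ (f x)) = starRingEnd ℂ (∫ x in a..b, f x) := by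
  unfold intervalIntegral
  rw [integral_conj, integral_conj, ← map_sub]

lemma circleIntegral_conj_symm {F : ℂ → ℂ}
    (hF : ∀ w : ℂ, ‖w‖ = 1 → starRingEnd ℂ (F (starRingEnd ℂ w)) = F w) :
    starRingEnd ℂ (∮ w in C(0, 1), F w) = -∮ w in C(0, 1), F w := by
  have hmap : ∀ θ : ℝ, circleMap 0 1 (2 * Real.pi - θ) = starRingEnd ℂ (circleMap 0 1 θ) := by
    intro θ
    have h1 : (2 * Real.pi - θ) = -θ + 2 * Real.pi := by ring
    rw [h1, periodic_circleMap 0 1 (-θ)]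
    simp only [circleMap, zero_add, ofReal_one, one_mul, ofReal_neg]
    rw [← Complex.exp_conj]
    congr 1
    simp [Complex.conj_ofReal, Complex.conj_I]
  have key : ∀ θ : ℝ, starRingEnd ℂ (deriv (circleMap 0 1) (2 * Real.pi - θ) •
        F (circleMap 0 1 (2 * Real.pi - θ))) =
      -(deriv (circleMap 0 1) θ • F (circleMap 0 1 θ)) := by
    intro θ
    have h3 := hF (circleMap 0 1 θ) (by simp)
    rw [deriv_circleMap, deriv_circleMap, hmap θ, smul_eq_mul, smul_eq_mul,
      map_mul, map_mul, Complex.conj_conj, Complex.conj_I, h3]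
    ring
  have hsub : (∫ θ in (0:ℝ)..2*Real.pi,
        starRingEnd ℂ (deriv (circleMap 0 1) (2*Real.pi - θ) •
          F (circleMap 0 1 (2*Real.pi - θ)))) =
      ∫ θ in (0:ℝ)..2*Real.pi,
        starRingEnd ℂ (deriv (circleMap 0 1) θ • F (circleMap 0 1 θ)) := by
    rw [intervalIntegral.integral_comp_sub_left
      (fun θ => starRingEnd ℂ (deriv (circleMap 0 1) θ • F (circleMap 0 1 θ))) (2*Real.pi)]
    norm_num
  unfold circleIntegral
  rw [← _root_.intervalIntegral_conj, ← hsub]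
  simp only [key]
  rw [intervalIntegral.integral_neg]


/-- Reduction to the subspace `𝔯` of pairs with real coefficients: if `g, f` are
holomorphic on the annulus `A = {r < |w| < 1/r}` with `conj (g (conj w)) = g w`,
`conj (f (conj w)) = f w`, and `ℋ` is holomorphic on a conjugation-invariant open set `D`
with `conj (ℋ(conj z₁, conj z₂)) = ℋ(z₁, z₂)`, then the Toda times `t₀, t_n, t_{-n}` and
dual variables `v_n, v_{-n}` are all real. -/
theorem stmt_13
    (r : ℝ) (hr0 : 0 < r) (hr1 : r < 1)
    (A : Set ℂ) (hA : A = {w : ℂ | r < ‖w‖ ∧ ‖w‖ < 1 / r})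
    (g f : ℂ → ℂ)
    (hg : DifferentiableOn ℂ g A) (hf : DifferentiableOn ℂ f A)
    (hg0 : ∀ w ∈ A, g w ≠ 0) (hf0 : ∀ w ∈ A, f w ≠ 0)
    (hgsym : ∀ w ∈ A, starRingEnd ℂ (g (starRingEnd ℂ w)) = g w)
    (hfsym : ∀ w ∈ A, starRingEnd ℂ (f (starRingEnd ℂ w)) = f w)
    (D : Set (ℂ × ℂ)) (hDopen : IsOpen D) (hD0 : ∀ p ∈ D, p.1 ≠ 0 ∧ p.2 ≠ 0)
    (hmem : ∀ w : ℂ, ‖w‖ = 1 → (g w, f w) ∈ D)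
    (hDconj : ∀ p ∈ D, (starRingEnd ℂ p.1, starRingEnd ℂ p.2) ∈ D)
    (H : ℂ → ℂ → ℂ)
    (hH : DifferentiableOn ℂ (fun p : ℂ × ℂ => H p.1 p.2) D)
    (hHsym : ∀ p ∈ D,
      starRingEnd ℂ (H (starRingEnd ℂ p.1) (starRingEnd ℂ p.2)) = H p.1 p.2)
    (t₀ : ℂ) (tp tm vp vm : ℕ → ℂ)
    (ht₀ : t₀ = (2 * Real.pi * Complex.I)⁻¹ *
      ∮ w in C(0, 1), deriv (fun u => H u (f w)) (g w) * deriv g w)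
    (htp : ∀ n : ℕ, 1 ≤ n → tp n = (2 * Real.pi * Complex.I * n)⁻¹ *
      ∮ w in C(0, 1), deriv (fun u => H u (f w)) (g w) * g w ^ (-(n:ℤ)) * deriv g w)
    (htm : ∀ n : ℕ, 1 ≤ n → tm n = (2 * Real.pi * Complex.I * n)⁻¹ *
      ∮ w in C(0, 1), deriv (H (g w)) (f w) * f w ^ (n:ℤ) * deriv f w)
    (hvp : ∀ n : ℕ, 1 ≤ n → vp n = (2 * Real.pi * Complex.I)⁻¹ *
      ∮ w in C(0, 1), deriv (fun u => H u (f w)) (g w) * g w ^ (n:ℤ) * deriv g w)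
    (hvm : ∀ n : ℕ, 1 ≤ n → vm n = (2 * Real.pi * Complex.I)⁻¹ *
      ∮ w in C(0, 1), deriv (H (g w)) (f w) * f w ^ (-(n:ℤ)) * deriv f w) :
    starRingEnd ℂ t₀ = t₀ ∧
      ∀ n : ℕ, 1 ≤ n →
        starRingEnd ℂ (tp n) = tp n ∧ starRingEnd ℂ (tm n) = tm n ∧
        starRingEnd ℂ (vp n) = vp n ∧ starRingEnd ℂ (vm n) = vm n := by
  -- basic facts about the annulus
  have hAopen : IsOpen A := by
    rw [hA]
    exact (isOpen_lt continuous_const continuous_norm).inter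
      (isOpen_lt continuous_norm continuous_const)
  have hAconj : ∀ w ∈ A, starRingEnd ℂ w ∈ A := by
    intro w hw
    rw [hA] at hw ⊢
    simpa using hw
  have h1A : ∀ w : ℂ, ‖w‖ = 1 → w ∈ A := by
    intro w hw
    rw [hA]
    refine ⟨by rw [hw]; exact hr1, ?_⟩
    rw [hw, lt_div_iff₀ hr0]
    linarith
  -- conjugate values of g and f
  have hgc : ∀ w ∈ A, g (starRingEnd ℂ w) = starRingEnd ℂ (g w) := by
    intro w hw
    have := hgsym (starRingEnd ℂ w) (hAconj w hw)
    rw [Complex.conj_conj] at this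
    exact this.symm
  have hfc : ∀ w ∈ A, f (starRingEnd ℂ w) = starRingEnd ℂ (f w) := by
    intro w hw
    have := hfsym (starRingEnd ℂ w) (hAconj w hw)
    rw [Complex.conj_conj] at this
    exact this.symm
  -- symmetry of derivatives of g and f
  have derivOn : ∀ (h : ℂ → ℂ), DifferentiableOn ℂ h A →
      (∀ w ∈ A, starRingEnd ℂ (h (starRingEnd ℂ w)) = h w) →
      ∀ w ∈ A, starRingEnd ℂ (deriv h (starRingEnd ℂ w)) = deriv h w := by
    intro h hdiff hsym w hw
    refine deriv_conj_symm' ((hdiff (starRingEnd ℂ w) (hAconj w hw)).differentiableAt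
      (hAopen.mem_nhds (hAconj w hw))) ?_
    filter_upwards [hAopen.mem_nhds hw] with u hu using hsym u hu
  have dgsym := derivOn g hg hgsym
  have dfsym := derivOn f hf hfsym
  -- symmetry of partial derivatives of H
  have hH1 : ∀ p ∈ D, starRingEnd ℂ
      (deriv (fun u => H u (starRingEnd ℂ p.2)) (starRingEnd ℂ p.1))
      = deriv (fun u => H u p.2) p.1 := by
    intro p hp
    have hp' := hDconj p hp
    have hd : DifferentiableAt ℂ (fun q : ℂ × ℂ => H q.1 q.2)
        (starRingEnd ℂ p.1, starRingEnd ℂ p.2) :=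
      (hH.differentiableAt (hDopen.mem_nhds hp'))
    have hd1 : DifferentiableAt ℂ (fun u => H u (starRingEnd ℂ p.2)) (starRingEnd ℂ p.1) :=
      DifferentiableAt.comp (𝕜 := ℂ) (starRingEnd ℂ p.1) (g := fun q : ℂ × ℂ => H q.1 q.2) (f := fun u : ℂ => (u, starRingEnd ℂ p.2)) hd (differentiableAt_id.prodMk (differentiableAt_const _))
    refine deriv_conj_symm' hd1 ?_
    have hopen : {u : ℂ | (u, p.2) ∈ D} ∈ 𝓝 p.1 := by
      refine (hDopen.preimage (continuous_id.prodMk continuous_const)).mem_nhds ?_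
      simpa using hp
    filter_upwards [hopen] with u hu using hHsym (u, p.2) hu
  have hH2 : ∀ p ∈ D, starRingEnd ℂ
      (deriv (H (starRingEnd ℂ p.1)) (starRingEnd ℂ p.2))
      = deriv (H p.1) p.2 := by
    intro p hp
    have hp' := hDconj p hp
    have hd : DifferentiableAt ℂ (fun q : ℂ × ℂ => H q.1 q.2)
        (starRingEnd ℂ p.1, starRingEnd ℂ p.2) :=
      (hH.differentiableAt (hDopen.mem_nhds hp'))
    have hd2 : DifferentiableAt ℂ (H (starRingEnd ℂ p.1)) (starRingEnd ℂ p.2) := by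
      have := DifferentiableAt.comp (𝕜 := ℂ) (starRingEnd ℂ p.2)
        (g := fun q : ℂ × ℂ => H q.1 q.2) (f := fun v : ℂ => (starRingEnd ℂ p.1, v)) hd
        ((differentiableAt_const _).prodMk differentiableAt_id)
      exact this
    refine deriv_conj_symm' hd2 ?_
    have hopen : {v : ℂ | (p.1, v) ∈ D} ∈ 𝓝 p.2 := by
      refine (hDopen.preimage (continuous_const.prodMk continuous_id)).mem_nhds ?_
      simpa using hp
    filter_upwards [hopen] with v hv using hHsym (p.1, v) hv
  -- pointwise symmetry of the integrands on the circle
  have sym1 : ∀ (k : ℤ) (w : ℂ), ‖w‖ = 1 →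
      starRingEnd ℂ (deriv (fun u => H u (f (starRingEnd ℂ w))) (g (starRingEnd ℂ w)) *
        g (starRingEnd ℂ w) ^ k * deriv g (starRingEnd ℂ w)) =
      deriv (fun u => H u (f w)) (g w) * g w ^ k * deriv g w := by
    intro k w hw
    have hwA := h1A w hw
    have h1 := hH1 (g w, f w) (hmem w hw)
    simp only at h1
    rw [map_mul, map_mul, hgc w hwA, hfc w hwA, h1, map_zpow₀, Complex.conj_conj,
      dgsym w hwA]
  have sym2 : ∀ (k : ℤ) (w : ℂ), ‖w‖ = 1 →
      starRingEnd ℂ (deriv (H (g (starRingEnd ℂ w))) (f (starRingEnd ℂ w)) *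
        f (starRingEnd ℂ w) ^ k * deriv f (starRingEnd ℂ w)) =
      deriv (H (g w)) (f w) * f w ^ k * deriv f w := by
    intro k w hw
    have hwA := h1A w hw
    have h2 := hH2 (g w, f w) (hmem w hw)
    simp only at h2
    rw [map_mul, map_mul, hgc w hwA, hfc w hwA, h2, map_zpow₀, Complex.conj_conj,
      dfsym w hwA]
  -- conjugate of the constants
  have hconst : starRingEnd ℂ (2 * Real.pi * Complex.I) = -(2 * Real.pi * Complex.I) := by
    simp only [map_mul, Complex.conj_I, Complex.conj_ofReal, map_ofNat]
    ring
  have hconstn : ∀ n : ℕ, starRingEnd ℂ (2 * Real.pi * Complex.I * n)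
      = -(2 * Real.pi * Complex.I * n) := by
    intro n
    simp only [map_mul, Complex.conj_I, Complex.conj_ofReal, map_ofNat, map_natCast]
    ring
  constructor
  · rw [ht₀, map_mul, map_inv₀, hconst]
    rw [circleIntegral_conj_symm (F := fun w => deriv (fun u => H u (f w)) (g w) * deriv g w) (fun w hw => by
      have := sym1 0 w hw
      simpa using this)]
    ring
  · intro n hn
    refine ⟨?_, ?_, ?_, ?_⟩
    · rw [htp n hn, map_mul, map_inv₀, hconstn]
      rw [circleIntegral_conj_symm (fun w hw => sym1 (-(n:ℤ)) w hw)]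
      ring
    · rw [htm n hn, map_mul, map_inv₀, hconstn]
      rw [circleIntegral_conj_symm (fun w hw => sym2 (n:ℤ) w hw)]
      ring
    · rw [hvp n hn, map_mul, map_inv₀, hconst]
      rw [circleIntegral_conj_symm (fun w hw => sym1 (n:ℤ) w hw)]
      ring
    · rw [hvm n hn, map_mul, map_inv₀, hconst]
      rw [circleIntegral_conj_symm (F := fun w => deriv (H (g w)) (f w) * f w ^ (-(n:ℤ)) * deriv f w) (fun w hw => sym2 (-(n:ℤ)) w hw)]
      ring
end

section
/- For every C¹, 2π-periodic map γ : ℝ → ℂ and every integer μ ≥ 1, the complex number (μ/(2πi)) ∫₀^{2π} γ(θ)^{μ−1} · conj(γ(θ))^{μ} · γ′(θ) dθ is real. -/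
open intervalIntegral MeasureTheory

lemma my_interval_integral_conj {g : ℝ → ℂ} {a b : ℝ} :
    (∫ θ in a..b, (starRingEnd ℂ) (g θ)) = (starRingEnd ℂ) (∫ θ in a..b, g θ) := by
  simp [intervalIntegral, ← integral_conj, map_sub]

/-- For every C¹, 2π-periodic curve `γ : ℝ → ℂ` and integer `μ ≥ 1`, the quantity
`(μ/2πi) ∫₀^{2π} γ^{μ-1} · conj(γ)^{μ} · γ' dθ` (the time `t₀` for
`ℋ(z₁,z₂) = z₁^μ z₂^{-μ}` on the subspace `Σ`) is real. -/
theorem stmt_14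
    (γ : ℝ → ℂ) (hγ : ContDiff ℝ 1 γ)
    (hper : Function.Periodic γ (2 * Real.pi))
    (μ : ℕ) (hμ : 1 ≤ μ) :
    ((μ : ℂ) * (2 * Real.pi * Complex.I)⁻¹ *
      ∫ θ in (0:ℝ)..(2 * Real.pi),
        γ θ ^ (μ - 1) * (starRingEnd ℂ (γ θ)) ^ μ * deriv γ θ).im = 0 := by
  set g : ℝ → ℂ := fun θ => γ θ ^ (μ - 1) * (starRingEnd ℂ (γ θ)) ^ μ * deriv γ θ with hg
  have hcγ : Continuous γ := hγ.continuous
  have hcd : Continuous (deriv γ) := hγ.continuous_deriv le_rfl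
  have hcg : Continuous g := by
    continuity
  have hcg' : Continuous fun θ => (starRingEnd ℂ) (g θ) := by
    exact Complex.continuous_conj.comp hcg
  have hd : ∀ θ, HasDerivAt γ (deriv γ θ) θ :=
    fun θ => (hγ.differentiable one_ne_zero θ).hasDerivAt
  have hf : ∀ θ, HasDerivAt (fun θ => γ θ ^ μ * (starRingEnd ℂ (γ θ)) ^ μ)
      ((μ : ℂ) * g θ + (μ : ℂ) * (starRingEnd ℂ) (g θ)) θ := by
    intro θ
    have hs : HasDerivAt (fun t => (starRingEnd ℂ) (γ t)) ((starRingEnd ℂ) (deriv γ θ)) θ :=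
      (hd θ).star
    have h1 := (HasDerivAt.comp θ (hasDerivAt_pow μ (γ θ)) (hd θ)).mul
      (HasDerivAt.comp θ (hasDerivAt_pow μ ((starRingEnd ℂ) (γ θ))) hs)
    convert h1 using 1
    all_goals try rfl
    simp only [hg, Function.comp_apply, map_mul, map_pow, Complex.conj_conj]
    ring
  have hint : (∫ θ in (0:ℝ)..(2*Real.pi),
      ((μ : ℂ) * g θ + (μ : ℂ) * (starRingEnd ℂ) (g θ))) = 0 := by
    rw [intervalIntegral.integral_eq_sub_of_hasDerivAt (fun θ _ => hf θ)
      (((continuous_const.mul hcg).add (continuous_const.mul hcg')).intervalIntegrable _ _)]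
    have := hper 0
    simp at this
    simp [this]
  rw [intervalIntegral.integral_add (f := fun θ => (μ : ℂ) * g θ)
      (g := fun θ => (μ : ℂ) * (starRingEnd ℂ) (g θ))
      ((continuous_const.mul hcg).intervalIntegrable _ _)
      ((continuous_const.mul hcg').intervalIntegrable _ _),
    intervalIntegral.integral_const_mul, intervalIntegral.integral_const_mul,
    my_interval_integral_conj] at hint
  set z := ∫ θ in (0:ℝ)..(2*Real.pi), g θ with hz
  have hμ0 : (μ : ℂ) ≠ 0 := Nat.cast_ne_zero.mpr (by omega)
  have hzz : z + (starRingEnd ℂ) z = 0 := by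
    have h : (μ:ℂ) * (z + (starRingEnd ℂ) z) = 0 := by rw [mul_add]; exact hint
    exact (mul_eq_zero.mp h).resolve_left hμ0
  have hre : z.re = 0 := by
    have := congrArg Complex.re hzz
    simp [Complex.add_re, Complex.conj_re] at this
    linarith
  simp [Complex.mul_im, Complex.mul_re, Complex.inv_im, Complex.inv_re, hre,
    Complex.normSq_apply]
end
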